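/- arXiv:2503.14885 — 7 statements merged into one kernel-verified Lean document; each statement's English description precedes it below -/
import Mathlib

section
/- Let n₁, n₂, p > 1 and let p' be the conjugate exponent of p. Set δ = n₂/p + n₁/p'. Let K : (0,∞) × (0,∞) → [0,∞) be a measurable kernel which is homogeneous of degree −δ, i.e. K(λx, λy) = λ^{−δ} K(x,y) for all λ, x, y > 0, and assume C₀ := ∫₀^∞ K(x,1) x^{n₂/p − 1} dx < ∞. Then the integral operator T f(x) = ∫₀^∞ K(x,y) f(y) y^{n₁−1} dy satisfies ‖Tf‖_{L^p((0,∞), x^{n₂−1}dx)} ≤ C₀ ‖f‖_{L^p((0,∞), x^{n₁−1}dx)} for every f ∈ L^p((0,∞), x^{n₁−1}dx). -/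
open MeasureTheory Set
open scoped ENNReal

/-- The measure on `(0,∞)` with density `x ^ (n-1)` with respect to Lebesgue measure. -/
noncomputable def powMeasure (n : ℝ) : Measure ℝ :=
  (volume.restrict (Ioi (0 : ℝ))).withDensity fun x => ENNReal.ofReal (x ^ (n - 1))

/-- 1-d change of variables for lintegrals, no measurability assumption on `g`. -/
theorem lint_image {s : Set ℝ} {f f' : ℝ → ℝ} (hs : MeasurableSet s)
    (hf' : ∀ x ∈ s, HasDerivWithinAt f (f' x) s x) (hf : InjOn f s) (g : ℝ → ℝ≥0∞) :
    ∫⁻ x in f '' s, g x = ∫⁻ x in s, ENNReal.ofReal |f' x| * g (f x) := by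
  simpa only [ContinuousLinearMap.det_toSpanSingleton] using
    lintegral_image_eq_lintegral_abs_det_fderiv_mul volume hs
      (fun x hx => (hf' x hx).hasFDerivWithinAt) hf g

theorem lint_scale {c : ℝ} (hc : 0 < c) (g : ℝ → ℝ≥0∞) :
    ∫⁻ x in Ioi (0:ℝ), g x = ∫⁻ t in Ioi (0:ℝ), ENNReal.ofReal c * g (c * t) := by
  have himg : (fun t : ℝ => c * t) '' Ioi 0 = Ioi 0 := by
    ext x
    simp only [mem_image, mem_Ioi]
    constructor
    · rintro ⟨t, ht, rfl⟩; positivity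
    · intro hx; exact ⟨x / c, by positivity, by field_simp⟩
  have := lint_image (s := Ioi 0) (f := fun t => c * t) (f' := fun _ => c) measurableSet_Ioi
    (fun x _ => by simpa using ((hasDerivAt_id x).const_mul c).hasDerivWithinAt)
    (fun a _ b _ h => by simpa [hc.ne'] using h) g
  rw [himg] at this
  simpa [abs_of_pos hc] using this

theorem lint_inv (g : ℝ → ℝ≥0∞) :
    ∫⁻ x in Ioi (0:ℝ), g x = ∫⁻ t in Ioi (0:ℝ), ENNReal.ofReal ((t ^ 2)⁻¹) * g t⁻¹ := by
  have himg : (fun t : ℝ => t⁻¹) '' Ioi 0 = Ioi 0 := by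
    ext x
    simp only [mem_image, mem_Ioi]
    constructor
    · rintro ⟨t, ht, rfl⟩; positivity
    · intro hx; exact ⟨x⁻¹, by positivity, by simp⟩
  have := lint_image (f := fun t : ℝ => t⁻¹) (f' := fun t => -(t ^ 2)⁻¹) measurableSet_Ioi
    (fun x hx => (hasDerivAt_inv (ne_of_gt hx)).hasDerivWithinAt)
    (fun a _ b _ h => inv_injective h) g
  rw [himg] at this
  have habs : ∀ x : ℝ, |(x ^ 2)⁻¹| = (x ^ 2)⁻¹ := fun x => abs_of_nonneg (by positivity)
  simpa [habs] using this

theorem restrict_ac_powMeasure (n : ℝ) :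
    volume.restrict (Ioi (0 : ℝ)) ≪ powMeasure n := by
  refine Measure.AbsolutelyContinuous.mk fun s hs h0 => ?_
  rw [powMeasure, withDensity_apply _ hs, Measure.restrict_restrict hs] at h0
  have hmeas : Measurable fun x : ℝ => ENNReal.ofReal (x ^ (n - 1)) :=
    (measurable_id.pow measurable_const).ennreal_ofReal
  rw [lintegral_eq_zero_iff hmeas] at h0
  have h1 : ∀ᵐ x ∂(volume.restrict (s ∩ Ioi (0:ℝ))), x ∈ s ∩ Ioi (0:ℝ) :=
    ae_restrict_mem (hs.inter measurableSet_Ioi)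
  have h2 : ∀ᵐ (_x : ℝ) ∂(volume.restrict (s ∩ Ioi (0:ℝ))), False := by
    filter_upwards [h0, h1] with x hx hmem
    have : (0:ℝ) < x ^ (n - 1) := Real.rpow_pos_of_pos hmem.2 _
    simp only [Pi.zero_apply, ENNReal.ofReal_eq_zero] at hx
    linarith
  have h3 : volume.restrict (s ∩ Ioi (0:ℝ)) univ = 0 := by
    simpa [ae_iff] using h2
  rw [Measure.restrict_apply MeasurableSet.univ, univ_inter] at h3
  rw [Measure.restrict_apply hs]
  exact h3

theorem ofReal_rpow_mul_ofReal_rpow {x : ℝ} (hx : 0 < x) (a b : ℝ) :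
    ENNReal.ofReal (x ^ a) * ENNReal.ofReal (x ^ b) = ENNReal.ofReal (x ^ (a + b)) := by
  rw [Real.rpow_add hx, ENNReal.ofReal_mul (Real.rpow_nonneg hx.le a)]

/-- Hardy–Littlewood–Pólya type theorem for integral operators with homogeneous kernel,
acting from `L^p((0,∞), x^{n₁-1} dx)` to `L^p((0,∞), x^{n₂-1} dx)`. -/
theorem hardy_littlewood_polya_homogeneous
    (n₁ n₂ p p' δ C₀ : ℝ)
    (hn₁ : 1 < n₁) (hn₂ : 1 < n₂) (hp : 1 < p)
    (hconj : 1 / p + 1 / p' = 1)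
    (hδ : δ = n₂ / p + n₁ / p')
    (K : ℝ → ℝ → ℝ)
    (hKmeas : Measurable (Function.uncurry K))
    (hKnonneg : ∀ x ∈ Ioi (0 : ℝ), ∀ y ∈ Ioi (0 : ℝ), 0 ≤ K x y)
    (hKhom : ∀ l ∈ Ioi (0 : ℝ), ∀ x ∈ Ioi (0 : ℝ), ∀ y ∈ Ioi (0 : ℝ),
      K (l * x) (l * y) = l ^ (-δ) * K x y)
    (hC₀int : IntegrableOn (fun x => K x 1 * x ^ (n₂ / p - 1)) (Ioi (0 : ℝ)))
    (hC₀ : C₀ = ∫ x in Ioi (0 : ℝ), K x 1 * x ^ (n₂ / p - 1))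
    (f : ℝ → ℝ) (hf : MemLp f (ENNReal.ofReal p) (powMeasure n₁)) :
    eLpNorm (fun x => ∫ y in Ioi (0 : ℝ), K x y * f y * y ^ (n₁ - 1))
        (ENNReal.ofReal p) (powMeasure n₂) ≤
      ENNReal.ofReal C₀ * eLpNorm f (ENNReal.ofReal p) (powMeasure n₁) := by
  -- basic facts about exponents
  have hp0 : (0:ℝ) < p := lt_trans one_pos hp
  have hpq : p.HolderConjugate p' := Real.holderConjugate_iff.mpr ⟨hp, by rw [← one_div, ← one_div]; exact hconj⟩
  have hp'0 : (0:ℝ) < p' := hpq.symm.pos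
  have hpne : p ≠ 0 := hp0.ne'
  have hp'ne : p' ≠ 0 := hp'0.ne'
  -- measurable representative of f
  have hfae : AEMeasurable f (powMeasure n₁) := hf.1.aemeasurable
  set g : ℝ → ℝ := hfae.mk f with hg
  have hgmeas : Measurable g := hfae.measurable_mk
  have hfg : f =ᵐ[powMeasure n₁] g := hfae.ae_eq_mk
  have hfgν : f =ᵐ[volume.restrict (Ioi (0:ℝ))] g :=
    (restrict_ac_powMeasure n₁).ae_le hfg
  -- the constant as an ENNReal lintegral
  set C : ℝ≥0∞ := ∫⁻ t in Ioi (0:ℝ), ENNReal.ofReal (K t 1) * ENNReal.ofReal (t ^ (n₂ / p - 1))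
    with hC
  have hCeq : C = ENNReal.ofReal C₀ := by
    rw [hC₀, MeasureTheory.ofReal_integral_eq_lintegral_ofReal hC₀int ?_]
    · exact (setLIntegral_congr_fun measurableSet_Ioi (fun t ht => by
        rw [ENNReal.ofReal_mul (hKnonneg t ht 1 (mem_Ioi.mpr one_pos))])).symm
    · filter_upwards [ae_restrict_mem measurableSet_Ioi] with t ht
      exact mul_nonneg (hKnonneg t ht 1 (mem_Ioi.mpr one_pos))
        (Real.rpow_nonneg (le_of_lt ht) _)
  have hCtop : C ≠ ∞ := by rw [hCeq]; exact ENNReal.ofReal_ne_top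
  -- the dual-weight column integral equals C
  have hC1 : (∫⁻ t in Ioi (0:ℝ), ENNReal.ofReal (K 1 t) * ENNReal.ofReal (t ^ (n₁ / p' - 1)))
      = C := by
    rw [lint_inv (fun t => ENNReal.ofReal (K 1 t) * ENNReal.ofReal (t ^ (n₁ / p' - 1)))]
    refine setLIntegral_congr_fun measurableSet_Ioi (fun s hs => ?_)
    have hs0 : (0:ℝ) < s := hs
    have hKv : K 1 s⁻¹ = s ^ δ * K s 1 := by
      have h := hKhom s⁻¹ (mem_Ioi.mpr (inv_pos.mpr hs0)) s hs 1 (mem_Ioi.mpr one_pos)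
      rw [inv_mul_cancel₀ hs0.ne', mul_one] at h
      rw [h, Real.inv_rpow hs0.le, ← Real.rpow_neg hs0.le, neg_neg]
    have hinvpow : (s⁻¹ : ℝ) ^ (n₁ / p' - 1) = s ^ (1 - n₁ / p') := by
      rw [Real.inv_rpow hs0.le, ← Real.rpow_neg hs0.le]; ring_nf
    have hsq : ((s:ℝ) ^ 2)⁻¹ = s ^ (-2 : ℝ) := by
      rw [← Real.rpow_natCast s 2, ← Real.rpow_neg hs0.le]; norm_num
    rw [hKv, hinvpow, hsq, ENNReal.ofReal_mul (Real.rpow_nonneg hs0.le _),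
      show (n₂ / p - 1 : ℝ) = (-2) + (δ + (1 - n₁ / p')) by
        rw [hδ]; ring,
      ← ofReal_rpow_mul_ofReal_rpow hs0 (-2) (δ + (1 - n₁ / p')),
      ← ofReal_rpow_mul_ofReal_rpow hs0 δ (1 - n₁ / p')]
    ring
  -- row integrals (Schur test, first weight)
  have hSA : ∀ x ∈ Ioi (0:ℝ),
      (∫⁻ y in Ioi (0:ℝ), ENNReal.ofReal (K x y) * ENNReal.ofReal (y ^ (n₁ / p' - 1)))
        = ENNReal.ofReal (x ^ (-(n₂ / p))) * C := by
    intro x hx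
    have hx0 : (0:ℝ) < x := hx
    rw [lint_scale hx0 (fun y => ENNReal.ofReal (K x y) * ENNReal.ofReal (y ^ (n₁ / p' - 1)))]
    have hpt : ∀ t ∈ Ioi (0:ℝ),
        ENNReal.ofReal x * (ENNReal.ofReal (K x (x * t)) * ENNReal.ofReal ((x * t) ^ (n₁ / p' - 1)))
          = ENNReal.ofReal (x ^ (-(n₂ / p))) *
            (ENNReal.ofReal (K 1 t) * ENNReal.ofReal (t ^ (n₁ / p' - 1))) := by
      intro t ht
      have ht0 : (0:ℝ) < t := ht
      have h := hKhom x hx 1 (mem_Ioi.mpr one_pos) t ht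
      rw [mul_one] at h
      rw [h, Real.mul_rpow hx0.le ht0.le,
        ENNReal.ofReal_mul (Real.rpow_nonneg hx0.le _),
        ENNReal.ofReal_mul (Real.rpow_nonneg hx0.le _),
        show ENNReal.ofReal x = ENNReal.ofReal (x ^ (1:ℝ)) by rw [Real.rpow_one],
        show (-(n₂ / p) : ℝ) = 1 + (-δ + (n₁ / p' - 1)) by rw [hδ]; ring,
        ← ofReal_rpow_mul_ofReal_rpow hx0 1 (-δ + (n₁ / p' - 1)),
        ← ofReal_rpow_mul_ofReal_rpow hx0 (-δ) (n₁ / p' - 1)]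
      ring
    rw [setLIntegral_congr_fun measurableSet_Ioi hpt,
      lintegral_const_mul' _ _ ENNReal.ofReal_ne_top, hC1]
  -- column integrals (Schur test, second weight)
  have hSB : ∀ y ∈ Ioi (0:ℝ),
      (∫⁻ x in Ioi (0:ℝ), ENNReal.ofReal (K x y) * ENNReal.ofReal (x ^ (n₂ / p - 1)))
        = ENNReal.ofReal (y ^ (-(n₁ / p'))) * C := by
    intro y hy
    have hy0 : (0:ℝ) < y := hy
    rw [lint_scale hy0 (fun x => ENNReal.ofReal (K x y) * ENNReal.ofReal (x ^ (n₂ / p - 1)))]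
    have hpt : ∀ t ∈ Ioi (0:ℝ),
        ENNReal.ofReal y * (ENNReal.ofReal (K (y * t) y) * ENNReal.ofReal ((y * t) ^ (n₂ / p - 1)))
          = ENNReal.ofReal (y ^ (-(n₁ / p'))) *
            (ENNReal.ofReal (K t 1) * ENNReal.ofReal (t ^ (n₂ / p - 1))) := by
      intro t ht
      have ht0 : (0:ℝ) < t := ht
      have h := hKhom y hy t ht 1 (mem_Ioi.mpr one_pos)
      rw [mul_one] at h
      rw [h, Real.mul_rpow hy0.le ht0.le,
        ENNReal.ofReal_mul (Real.rpow_nonneg hy0.le _),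
        ENNReal.ofReal_mul (Real.rpow_nonneg hy0.le _),
        show ENNReal.ofReal y = ENNReal.ofReal (y ^ (1:ℝ)) by rw [Real.rpow_one],
        show (-(n₁ / p') : ℝ) = 1 + (-δ + (n₂ / p - 1)) by rw [hδ]; ring,
        ← ofReal_rpow_mul_ofReal_rpow hy0 1 (-δ + (n₂ / p - 1)),
        ← ofReal_rpow_mul_ofReal_rpow hy0 (-δ) (n₂ / p - 1)]
      ring
    rw [setLIntegral_congr_fun measurableSet_Ioi hpt,
      lintegral_const_mul' _ _ ENNReal.ofReal_ne_top]
  -- Hölder inequality on each slice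
  have hHold : ∀ x ∈ Ioi (0:ℝ),
      (∫⁻ y in Ioi (0:ℝ), ENNReal.ofReal (K x y) * (‖g y‖₊ : ℝ≥0∞) * ENNReal.ofReal (y ^ (n₁ - 1)))
        ≤ (ENNReal.ofReal (x ^ (-(n₂ / p))) * C) ^ (1 / p') *
          (∫⁻ y in Ioi (0:ℝ), ENNReal.ofReal (K x y) *
            ENNReal.ofReal (y ^ (n₁ - 1 + n₁ / p')) * (‖g y‖₊ : ℝ≥0∞) ^ p) ^ (1 / p) := by
    intro x hx
    set u : ℝ → ℝ≥0∞ := fun y =>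
      (ENNReal.ofReal (K x y) * ENNReal.ofReal (y ^ (n₁ / p' - 1))) ^ (1 / p') with hu_def
    set v : ℝ → ℝ≥0∞ := fun y =>
      (ENNReal.ofReal (K x y) * ENNReal.ofReal (y ^ (n₁ - 1 + n₁ / p'))) ^ (1 / p) *
        (‖g y‖₊ : ℝ≥0∞) with hv_def
    have hKx : Measurable (fun y => K x y) := hKmeas.comp (measurable_const.prodMk measurable_id)
    have hu : AEMeasurable u (volume.restrict (Ioi (0:ℝ))) :=
      ((hKx.ennreal_ofReal.mul
        ((measurable_id.pow measurable_const).ennreal_ofReal)).pow measurable_const).aemeasurable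
    have hv : AEMeasurable v (volume.restrict (Ioi (0:ℝ))) :=
      (((hKx.ennreal_ofReal.mul
        ((measurable_id.pow measurable_const).ennreal_ofReal)).pow measurable_const).mul
        hgmeas.nnnorm.coe_nnreal_ennreal).aemeasurable
    have hA : ∀ A : ℝ≥0∞, A ^ (1 / p') * A ^ (1 / p) = A := by
      intro A
      rw [← ENNReal.rpow_add_of_nonneg _ _ (by positivity) (by positivity),
        show 1 / p' + 1 / p = 1 by linarith, ENNReal.rpow_one]
    have key1 : (∫⁻ y in Ioi (0:ℝ),
        ENNReal.ofReal (K x y) * (‖g y‖₊ : ℝ≥0∞) * ENNReal.ofReal (y ^ (n₁ - 1)))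
        = ∫⁻ y in Ioi (0:ℝ), (u * v) y := by
      refine setLIntegral_congr_fun measurableSet_Ioi (fun y hy => ?_)
      have hy0 : (0:ℝ) < y := hy
      simp only [Pi.mul_apply, hu_def, hv_def]
      rw [ENNReal.mul_rpow_of_nonneg _ _ (by positivity : (0:ℝ) ≤ 1 / p'),
        ENNReal.mul_rpow_of_nonneg _ _ (by positivity : (0:ℝ) ≤ 1 / p),
        ENNReal.ofReal_rpow_of_pos (Real.rpow_pos_of_pos hy0 _),
        ENNReal.ofReal_rpow_of_pos (Real.rpow_pos_of_pos hy0 _),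
        ← Real.rpow_mul hy0.le, ← Real.rpow_mul hy0.le]
      calc ENNReal.ofReal (K x y) * (‖g y‖₊ : ℝ≥0∞) * ENNReal.ofReal (y ^ (n₁ - 1))
          = (ENNReal.ofReal (K x y) ^ (1 / p') * ENNReal.ofReal (K x y) ^ (1 / p)) *
            (ENNReal.ofReal (y ^ (n₁ - 1))) * (‖g y‖₊ : ℝ≥0∞) := by rw [hA]; ring
        _ = ENNReal.ofReal (K x y) ^ (1 / p') * ENNReal.ofReal (y ^ ((n₁ / p' - 1) * (1 / p'))) *
            (ENNReal.ofReal (K x y) ^ (1 / p) *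
              ENNReal.ofReal (y ^ ((n₁ - 1 + n₁ / p') * (1 / p))) * (‖g y‖₊ : ℝ≥0∞)) := by
            rw [← show ENNReal.ofReal (y ^ ((n₁ / p' - 1) * (1 / p'))) *
                ENNReal.ofReal (y ^ ((n₁ - 1 + n₁ / p') * (1 / p)))
                = ENNReal.ofReal (y ^ (n₁ - 1)) from by
              rw [ofReal_rpow_mul_ofReal_rpow hy0]
              congr 2
              linear_combination (n₁ / p' + n₁ - 1) * hconj]
            ring
    have key2 : (∫⁻ y in Ioi (0:ℝ), u y ^ p')
        = ENNReal.ofReal (x ^ (-(n₂ / p))) * C := by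
      rw [← hSA x hx]
      refine setLIntegral_congr_fun measurableSet_Ioi (fun y _ => ?_)
      simp only [hu_def]
      rw [← ENNReal.rpow_mul, one_div, inv_mul_cancel₀ hp'ne, ENNReal.rpow_one]
    have key3 : (∫⁻ y in Ioi (0:ℝ), v y ^ p)
        = ∫⁻ y in Ioi (0:ℝ), ENNReal.ofReal (K x y) *
            ENNReal.ofReal (y ^ (n₁ - 1 + n₁ / p')) * (‖g y‖₊ : ℝ≥0∞) ^ p := by
      refine setLIntegral_congr_fun measurableSet_Ioi (fun y _ => ?_)
      simp only [hv_def]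
      rw [ENNReal.mul_rpow_of_nonneg _ _ hp0.le, ← ENNReal.rpow_mul, one_div,
        inv_mul_cancel₀ hpne, ENNReal.rpow_one]
    calc (∫⁻ y in Ioi (0:ℝ),
          ENNReal.ofReal (K x y) * (‖g y‖₊ : ℝ≥0∞) * ENNReal.ofReal (y ^ (n₁ - 1)))
        = ∫⁻ y in Ioi (0:ℝ), (u * v) y := key1
      _ ≤ (∫⁻ y in Ioi (0:ℝ), u y ^ p') ^ (1 / p') * (∫⁻ y in Ioi (0:ℝ), v y ^ p) ^ (1 / p) :=
          ENNReal.lintegral_mul_le_Lp_mul_Lq _ hpq.symm hu hv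
      _ = _ := by rw [key2, key3]
  -- rewriting the two `eLpNorm`s as lintegrals over `Ioi 0`
  have hofp0 : (ENNReal.ofReal p) ≠ 0 := by
    simp only [ne_eq, ENNReal.ofReal_eq_zero, not_le]; exact hp0
  have hdens : ∀ m : ℝ, Measurable fun x : ℝ => ENNReal.ofReal (x ^ (m - 1)) :=
    fun m => (measurable_id.pow measurable_const).ennreal_ofReal
  have hLpT : eLpNorm (fun x => ∫ y in Ioi (0:ℝ), K x y * f y * y ^ (n₁ - 1))
      (ENNReal.ofReal p) (powMeasure n₂)
      = (∫⁻ x in Ioi (0:ℝ), ENNReal.ofReal (x ^ (n₂ - 1)) *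
          (‖∫ y in Ioi (0:ℝ), K x y * f y * y ^ (n₁ - 1)‖₊ : ℝ≥0∞) ^ p) ^ (1 / p) := by
    rw [eLpNorm_eq_lintegral_rpow_enorm_toReal hofp0 ENNReal.ofReal_ne_top,
      ENNReal.toReal_ofReal hp0.le, powMeasure,
      lintegral_withDensity_eq_lintegral_mul_non_measurable _ (hdens n₂)
        (ae_of_all _ fun x => ENNReal.ofReal_lt_top)]
    rfl
  have hLpf : eLpNorm f (ENNReal.ofReal p) (powMeasure n₁)
      = (∫⁻ y in Ioi (0:ℝ), ENNReal.ofReal (y ^ (n₁ - 1)) * (‖g y‖₊ : ℝ≥0∞) ^ p) ^ (1 / p) := by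
    rw [eLpNorm_congr_ae hfg, eLpNorm_eq_lintegral_rpow_enorm_toReal hofp0 ENNReal.ofReal_ne_top,
      ENNReal.toReal_ofReal hp0.le, powMeasure,
      lintegral_withDensity_eq_lintegral_mul_non_measurable _ (hdens n₁)
        (ae_of_all _ fun x => ENNReal.ofReal_lt_top)]
    rfl
  -- pointwise bound on the operator
  have hTbound : ∀ x ∈ Ioi (0:ℝ),
      (‖∫ y in Ioi (0:ℝ), K x y * f y * y ^ (n₁ - 1)‖₊ : ℝ≥0∞)
        ≤ ∫⁻ y in Ioi (0:ℝ),
            ENNReal.ofReal (K x y) * (‖g y‖₊ : ℝ≥0∞) * ENNReal.ofReal (y ^ (n₁ - 1)) := by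
    intro x hx
    refine le_trans (enorm_integral_le_lintegral_enorm _) (le_of_eq ?_)
    refine lintegral_congr_ae ?_
    filter_upwards [ae_restrict_mem measurableSet_Ioi, hfgν] with y hy hfy
    rw [enorm_mul, enorm_mul, hfy,
      Real.enorm_eq_ofReal (hKnonneg x hx y hy),
      Real.enorm_eq_ofReal (Real.rpow_nonneg (le_of_lt hy) _)]
    rfl
  -- Tonelli step
  have hmeas_prod : AEMeasurable (Function.uncurry fun x y =>
      ENNReal.ofReal (x ^ (n₂ / p - 1)) *
        (ENNReal.ofReal (K x y) * ENNReal.ofReal (y ^ (n₁ - 1 + n₁ / p')) * (‖g y‖₊ : ℝ≥0∞) ^ p))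
      ((volume.restrict (Ioi (0:ℝ))).prod (volume.restrict (Ioi (0:ℝ)))) := by
    apply Measurable.aemeasurable
    exact ((measurable_fst.pow measurable_const).ennreal_ofReal).mul
      ((hKmeas.ennreal_ofReal.mul
        ((measurable_snd.pow measurable_const).ennreal_ofReal)).mul
        (((hgmeas.comp measurable_snd).nnnorm.coe_nnreal_ennreal).pow measurable_const))
  have hTon : (∫⁻ x in Ioi (0:ℝ), ENNReal.ofReal (x ^ (n₂ / p - 1)) *
        ∫⁻ y in Ioi (0:ℝ), ENNReal.ofReal (K x y) *
          ENNReal.ofReal (y ^ (n₁ - 1 + n₁ / p')) * (‖g y‖₊ : ℝ≥0∞) ^ p)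
      = C * ∫⁻ y in Ioi (0:ℝ), ENNReal.ofReal (y ^ (n₁ - 1)) * (‖g y‖₊ : ℝ≥0∞) ^ p := by
    have h1 : ∀ x : ℝ, ENNReal.ofReal (x ^ (n₂ / p - 1)) *
        (∫⁻ y in Ioi (0:ℝ), ENNReal.ofReal (K x y) *
          ENNReal.ofReal (y ^ (n₁ - 1 + n₁ / p')) * (‖g y‖₊ : ℝ≥0∞) ^ p)
        = ∫⁻ y in Ioi (0:ℝ), ENNReal.ofReal (x ^ (n₂ / p - 1)) *
          (ENNReal.ofReal (K x y) * ENNReal.ofReal (y ^ (n₁ - 1 + n₁ / p')) *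
            (‖g y‖₊ : ℝ≥0∞) ^ p) :=
      fun x => (lintegral_const_mul' _ _ ENNReal.ofReal_ne_top).symm
    simp_rw [h1]
    rw [lintegral_lintegral_swap hmeas_prod]
    have h2 : ∀ y ∈ Ioi (0:ℝ), (∫⁻ x in Ioi (0:ℝ), ENNReal.ofReal (x ^ (n₂ / p - 1)) *
        (ENNReal.ofReal (K x y) * ENNReal.ofReal (y ^ (n₁ - 1 + n₁ / p')) *
          (‖g y‖₊ : ℝ≥0∞) ^ p))
        = C * (ENNReal.ofReal (y ^ (n₁ - 1)) * (‖g y‖₊ : ℝ≥0∞) ^ p) := by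
      intro y hy
      have hy0 : (0:ℝ) < y := hy
      have hfin : ENNReal.ofReal (y ^ (n₁ - 1 + n₁ / p')) * (‖g y‖₊ : ℝ≥0∞) ^ p ≠ ∞ :=
        ENNReal.mul_ne_top ENNReal.ofReal_ne_top
          (ENNReal.rpow_ne_top_of_nonneg hp0.le ENNReal.coe_ne_top)
      have h3 : (∫⁻ x in Ioi (0:ℝ), ENNReal.ofReal (x ^ (n₂ / p - 1)) *
          (ENNReal.ofReal (K x y) * ENNReal.ofReal (y ^ (n₁ - 1 + n₁ / p')) *
            (‖g y‖₊ : ℝ≥0∞) ^ p))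
          = (ENNReal.ofReal (y ^ (n₁ - 1 + n₁ / p')) * (‖g y‖₊ : ℝ≥0∞) ^ p) *
            ∫⁻ x in Ioi (0:ℝ), ENNReal.ofReal (K x y) * ENNReal.ofReal (x ^ (n₂ / p - 1)) := by
        rw [← lintegral_const_mul' _ _ hfin]
        exact lintegral_congr fun x => by ring
      rw [h3, hSB y hy]
      rw [show ENNReal.ofReal (y ^ (n₁ - 1)) = ENNReal.ofReal (y ^ (n₁ - 1 + n₁ / p')) *
          ENNReal.ofReal (y ^ (-(n₁ / p'))) from by
        rw [ofReal_rpow_mul_ofReal_rpow hy0]; congr 2; ring]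
      ring
    rw [setLIntegral_congr_fun measurableSet_Ioi h2,
      lintegral_const_mul' _ _ hCtop]
  -- main estimate
  have hconj2 : p' + p = p * p' := by
    have h := hconj
    field_simp at h
    linarith
  have key : (∫⁻ x in Ioi (0:ℝ), ENNReal.ofReal (x ^ (n₂ - 1)) *
        (‖∫ y in Ioi (0:ℝ), K x y * f y * y ^ (n₁ - 1)‖₊ : ℝ≥0∞) ^ p)
      ≤ C ^ p * ∫⁻ y in Ioi (0:ℝ), ENNReal.ofReal (y ^ (n₁ - 1)) * (‖g y‖₊ : ℝ≥0∞) ^ p := by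
    calc (∫⁻ x in Ioi (0:ℝ), ENNReal.ofReal (x ^ (n₂ - 1)) *
          (‖∫ y in Ioi (0:ℝ), K x y * f y * y ^ (n₁ - 1)‖₊ : ℝ≥0∞) ^ p)
        ≤ ∫⁻ x in Ioi (0:ℝ), C ^ (p / p') * (ENNReal.ofReal (x ^ (n₂ / p - 1)) *
            ∫⁻ y in Ioi (0:ℝ), ENNReal.ofReal (K x y) *
              ENNReal.ofReal (y ^ (n₁ - 1 + n₁ / p')) * (‖g y‖₊ : ℝ≥0∞) ^ p) := by
          refine lintegral_mono_ae ?_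
          filter_upwards [ae_restrict_mem measurableSet_Ioi] with x hx
          have hx0 : (0:ℝ) < x := hx
          have h1 : (‖∫ y in Ioi (0:ℝ), K x y * f y * y ^ (n₁ - 1)‖₊ : ℝ≥0∞) ^ p
              ≤ ((ENNReal.ofReal (x ^ (-(n₂ / p))) * C) ^ (1 / p') *
                (∫⁻ y in Ioi (0:ℝ), ENNReal.ofReal (K x y) *
                  ENNReal.ofReal (y ^ (n₁ - 1 + n₁ / p')) * (‖g y‖₊ : ℝ≥0∞) ^ p) ^ (1 / p)) ^ p :=
            ENNReal.rpow_le_rpow (le_trans (hTbound x hx) (hHold x hx)) hp0.le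
          refine le_trans (mul_le_mul_right h1 _) (le_of_eq ?_)
          have e1 : ((ENNReal.ofReal (x ^ (-(n₂ / p))) * C) ^ (1 / p') *
              (∫⁻ y in Ioi (0:ℝ), ENNReal.ofReal (K x y) *
                ENNReal.ofReal (y ^ (n₁ - 1 + n₁ / p')) * (‖g y‖₊ : ℝ≥0∞) ^ p) ^ (1 / p)) ^ p
              = (ENNReal.ofReal (x ^ (-(n₂ / p)))) ^ (p / p') * C ^ (p / p') *
                (∫⁻ y in Ioi (0:ℝ), ENNReal.ofReal (K x y) *
                  ENNReal.ofReal (y ^ (n₁ - 1 + n₁ / p')) * (‖g y‖₊ : ℝ≥0∞) ^ p) := by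
            rw [ENNReal.mul_rpow_of_nonneg _ _ hp0.le, ← ENNReal.rpow_mul, ← ENNReal.rpow_mul,
              ENNReal.mul_rpow_of_nonneg _ _ (by positivity : (0:ℝ) ≤ 1 / p' * p),
              show (1 / p * p : ℝ) = 1 by field_simp,
              show (1 / p' * p : ℝ) = p / p' by ring, ENNReal.rpow_one]
          have e2 : (ENNReal.ofReal (x ^ (-(n₂ / p)))) ^ (p / p')
              = ENNReal.ofReal (x ^ (-(n₂ / p'))) := by
            rw [ENNReal.ofReal_rpow_of_pos (Real.rpow_pos_of_pos hx0 _), ← Real.rpow_mul hx0.le]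
            congr 2
            field_simp
          have e3 : ENNReal.ofReal (x ^ (n₂ - 1)) * ENNReal.ofReal (x ^ (-(n₂ / p')))
              = ENNReal.ofReal (x ^ (n₂ / p - 1)) := by
            rw [ofReal_rpow_mul_ofReal_rpow hx0]
            congr 2
            linear_combination (-n₂) * hconj
          rw [e1, e2, ← e3]
          ring
      _ = C ^ (p / p') * ∫⁻ x in Ioi (0:ℝ), ENNReal.ofReal (x ^ (n₂ / p - 1)) *
            ∫⁻ y in Ioi (0:ℝ), ENNReal.ofReal (K x y) *
              ENNReal.ofReal (y ^ (n₁ - 1 + n₁ / p')) * (‖g y‖₊ : ℝ≥0∞) ^ p :=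
          lintegral_const_mul' _ _ (ENNReal.rpow_ne_top_of_nonneg (by positivity) hCtop)
      _ = C ^ (p / p') * (C * ∫⁻ y in Ioi (0:ℝ),
            ENNReal.ofReal (y ^ (n₁ - 1)) * (‖g y‖₊ : ℝ≥0∞) ^ p) := by rw [hTon]
      _ = C ^ p * ∫⁻ y in Ioi (0:ℝ), ENNReal.ofReal (y ^ (n₁ - 1)) * (‖g y‖₊ : ℝ≥0∞) ^ p := by
          have hCC : C ^ (p / p') * C = C ^ p := by
            nth_rewrite 2 [← ENNReal.rpow_one C]
            rw [← ENNReal.rpow_add_of_nonneg _ _ (by positivity) zero_le_one]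
            congr 1
            field_simp
            linarith [hconj2]
          rw [← mul_assoc, hCC]
  -- conclusion
  rw [hLpT, hLpf, ← hCeq]
  calc (∫⁻ x in Ioi (0:ℝ), ENNReal.ofReal (x ^ (n₂ - 1)) *
        (‖∫ y in Ioi (0:ℝ), K x y * f y * y ^ (n₁ - 1)‖₊ : ℝ≥0∞) ^ p) ^ (1 / p)
      ≤ (C ^ p * ∫⁻ y in Ioi (0:ℝ),
          ENNReal.ofReal (y ^ (n₁ - 1)) * (‖g y‖₊ : ℝ≥0∞) ^ p) ^ (1 / p) :=
        ENNReal.rpow_le_rpow key (by positivity)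
    _ = C * (∫⁻ y in Ioi (0:ℝ),
          ENNReal.ofReal (y ^ (n₁ - 1)) * (‖g y‖₊ : ℝ≥0∞) ^ p) ^ (1 / p) := by
        rw [ENNReal.mul_rpow_of_nonneg _ _ (by positivity), ← ENNReal.rpow_mul,
          mul_one_div, div_self hpne, ENNReal.rpow_one]
end

section
/- Let n₁, n₂ > 1, let 0 < β < n₁ and α > 0, and let 1 < p ≤ n₁/(n₁−β) and q ≥ n₂/α. Define, for measurable E ⊆ [1,∞), the function R₁χ_E(x) = x^{−α} ∫_{E ∩ [x,∞)} y^{−β} y^{n₁−1} dy for x ≥ 1. Then there exists a constant C > 0 such that for every measurable E ⊆ [1,∞) with μ_{n₁}(E) < ∞ and every s > 0, μ_{n₂}({x ∈ [1,∞) : R₁χ_E(x) > s}) ≤ (C μ_{n₁}(E)^{1/p} / s)^q. (That is, R₁ is of restricted weak type (p,q), i.e. bounded from L^{p,1}([1,∞), μ_{n₁}) to L^{q,∞}([1,∞), μ_{n₂}).) -/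
open MeasureTheory Set

/-- The measure on `[1,∞)` with density `r ^ (n-1)` with respect to Lebesgue measure. -/
noncomputable def mu (n : ℝ) : Measure ℝ :=
  (volume.restrict (Ici (1 : ℝ))).withDensity fun r => ENNReal.ofReal (r ^ (n - 1))

lemma mu_apply (n : ℝ) {E : Set ℝ} (hE : MeasurableSet E) (hE1 : E ⊆ Ici (1 : ℝ)) :
    mu n E = ∫⁻ x in E, ENNReal.ofReal (x ^ (n - 1)) := by
  rw [mu, withDensity_apply _ hE, Measure.restrict_restrict hE, inter_eq_left.mpr hE1]

/-- The operator `R₁ χ_E (x) = x^{-α} ∫_{E ∩ [x,∞)} y^{-β} y^{n₁-1} dy` is of restricted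
weak type `(p,q)` from `([1,∞), μ_{n₁})` to `([1,∞), μ_{n₂})` whenever `0 < β < n₁`,
`α > 0`, `1 < p ≤ n₁/(n₁-β)` and `q ≥ n₂/α`. -/
theorem R1_restricted_weak_type
    (n₁ n₂ α β p q : ℝ)
    (hn₁ : 1 < n₁) (hn₂ : 1 < n₂)
    (hβ0 : 0 < β) (hβ : β < n₁) (hα : 0 < α)
    (hp1 : 1 < p) (hp2 : p ≤ n₁ / (n₁ - β)) (hq : n₂ / α ≤ q) :
    ∃ C > 0, ∀ E : Set ℝ, MeasurableSet E → E ⊆ Ici (1 : ℝ) → mu n₁ E < ⊤ →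
      ∀ s > 0,
        mu n₂ {x | x ∈ Ici (1 : ℝ) ∧
            s < x ^ (-α) * ∫ y in E ∩ Ici x, y ^ (-β) * y ^ (n₁ - 1)} ≤
          (ENNReal.ofReal C * (mu n₁ E) ^ (1 / p) / ENNReal.ofReal s) ^ q := by
  have hn₁0 : (0:ℝ) < n₁ := by linarith
  have hn₂0 : (0:ℝ) < n₂ := by linarith
  have hnβ : (0:ℝ) < n₁ - β := by linarith
  set γ : ℝ := (n₁ - β) / n₁ with hγdef
  have hγ0 : 0 < γ := by rw [hγdef]; exact div_pos hnβ hn₁0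
  have hn₁γ : 0 < n₁ ^ γ := Real.rpow_pos_of_pos hn₁0 γ
  set C : ℝ := n₁ ^ γ / (n₁ - β) + 1 with hCdef
  have hC1 : 1 ≤ C := by
    rw [hCdef]
    have h1 : 0 < n₁ ^ γ / (n₁ - β) := div_pos hn₁γ hnβ
    linarith
  have hC0 : 0 < C := lt_of_lt_of_le one_pos hC1
  refine ⟨C, hC0, ?_⟩
  intro E hE hE1 hEfin s hs
  have hp0 : (0:ℝ) < p := by linarith
  have hq0 : (0:ℝ) < q := lt_of_lt_of_le (div_pos hn₂0 hα) hq
  set g : ℝ → ℝ := fun y => y ^ (n₁ - 1) with hgdef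
  set f : ℝ → ℝ := fun y => y ^ (-β) * y ^ (n₁ - 1) with hfdef
  have hgm : Measurable g := by measurability
  have hfm : Measurable f := by measurability
  have hg_nonneg : ∀ y ∈ E, 0 ≤ g y := fun y hy =>
    Real.rpow_nonneg (le_trans zero_le_one (hE1 hy)) _
  have hf_nonneg : ∀ y : ℝ, 0 ≤ y → 0 ≤ f y := fun y hy =>
    mul_nonneg (Real.rpow_nonneg hy _) (Real.rpow_nonneg hy _)
  have hfg : ∀ y : ℝ, 1 ≤ y → f y ≤ g y := by
    intro y hy
    have h1 : y ^ (-β) ≤ 1 := Real.rpow_le_one_of_one_le_of_nonpos hy (by linarith)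
    calc f y ≤ 1 * y ^ (n₁ - 1) :=
          mul_le_mul_of_nonneg_right h1 (Real.rpow_nonneg (by linarith) _)
      _ = g y := one_mul _
  have hmu : mu n₁ E = ∫⁻ y in E, ENNReal.ofReal (g y) := mu_apply n₁ hE hE1
  have hg_ae : 0 ≤ᵐ[volume.restrict E] g :=
    (ae_restrict_iff' hE).2 (ae_of_all _ hg_nonneg)
  have hg_int : IntegrableOn g E volume := by
    refine ⟨hgm.aestronglyMeasurable, ?_⟩
    rw [hasFiniteIntegral_iff_ofReal hg_ae]
    exact hmu ▸ hEfin
  have hf_int : IntegrableOn f E volume := by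
    refine Integrable.mono hg_int hfm.aestronglyMeasurable ?_
    refine (ae_restrict_iff' hE).2 (ae_of_all _ fun y hy => ?_)
    have h1 : (1:ℝ) ≤ y := hE1 hy
    rw [Real.norm_eq_abs, Real.norm_eq_abs, abs_of_nonneg (hf_nonneg y (by linarith)),
      abs_of_nonneg (hg_nonneg y hy)]
    exact hfg y h1
  set M : ℝ := ∫ y in E, g y with hMdef
  have hM0 : 0 ≤ M := setIntegral_nonneg hE hg_nonneg
  have hmuM : mu n₁ E = ENNReal.ofReal M := by
    have h1 : M = (∫⁻ y in E, ENNReal.ofReal (g y)).toReal := by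
      rw [hMdef, integral_eq_lintegral_of_nonneg_ae hg_ae hgm.aestronglyMeasurable]
    rw [h1, ← hmu, ENNReal.ofReal_toReal hEfin.ne]
  set A : ℝ := ∫ y in E, f y with hAdef
  have hA0 : 0 ≤ A := setIntegral_nonneg hE fun y hy =>
    hf_nonneg y (le_trans zero_le_one (hE1 hy))
  have hγp : γ ≤ 1 / p := by
    have h1 : 1 / (n₁ / (n₁ - β)) ≤ 1 / p := one_div_le_one_div_of_le hp0 hp2
    rw [one_div_div] at h1
    rw [hγdef]; exact h1
  have h1p : 1 / p ≤ 1 := by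
    rw [div_le_one hp0]; linarith
  -- the key inequality
  have hkey : A ≤ C * M ^ (1 / p) := by
    rcases le_or_gt M 1 with hM1 | hM1
    · have h1 : A ≤ M := setIntegral_mono_on hf_int hg_int hE
        (fun y hy => hfg y (hE1 hy))
      have h2 : M ≤ M ^ (1 / p) := by
        rcases eq_or_lt_of_le hM0 with h0 | h0
        · rw [← h0, Real.zero_rpow (ne_of_gt (one_div_pos.2 hp0))]
        · calc M = M ^ (1:ℝ) := (Real.rpow_one M).symm
            _ ≤ M ^ (1 / p) := Real.rpow_le_rpow_of_exponent_ge h0 hM1 h1p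
      calc A ≤ M ^ (1 / p) := le_trans h1 h2
        _ ≤ C * M ^ (1 / p) := le_mul_of_one_le_left (Real.rpow_nonneg hM0 _) hC1
    · -- 1 < M
      have hM0' : (0:ℝ) < M := by linarith
      set R : ℝ := (n₁ * M) ^ (1 / n₁) with hRdef
      have hn₁M : (1:ℝ) ≤ n₁ * M := by nlinarith
      have hR1 : 1 ≤ R := Real.one_le_rpow hn₁M (one_div_nonneg.2 hn₁0.le)
      have hR0 : 0 < R := lt_of_lt_of_le one_pos hR1
      have hunion : E ∩ Iic R ∪ E ∩ Ioi R = E := by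
        rw [← inter_union_distrib_left, Iic_union_Ioi, inter_univ]
      have hsplit : A = (∫ y in E ∩ Iic R, f y) + ∫ y in E ∩ Ioi R, f y := by
        rw [hAdef]
        nth_rewrite 1 [← hunion]
        exact setIntegral_union (disjoint_left.2 fun y hy₁ hy₂ =>
            absurd (mem_Ioi.1 hy₂.2) (not_lt.2 (mem_Iic.1 hy₁.2)))
          (hE.inter measurableSet_Ioi)
          (hf_int.mono_set inter_subset_left) (hf_int.mono_set inter_subset_left)
      have hfc : IntegrableOn f (Icc 1 R) volume := by
        refine ContinuousOn.integrableOn_compact isCompact_Icc ?_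
        have hne : ∀ x ∈ Icc (1:ℝ) R, id x ≠ 0 ∨ (0:ℝ) ≤ (0:ℝ) := fun x hx =>
          Or.inl (show x ≠ 0 from ne_of_gt (lt_of_lt_of_le one_pos hx.1))
        exact (continuousOn_id.rpow_const fun x hx =>
            Or.inl (show x ≠ 0 from ne_of_gt (lt_of_lt_of_le one_pos hx.1))).mul
          (continuousOn_id.rpow_const fun x hx =>
            Or.inl (show x ≠ 0 from ne_of_gt (lt_of_lt_of_le one_pos hx.1)))
      have hpart1 : (∫ y in E ∩ Iic R, f y) ≤ R ^ (n₁ - β) / (n₁ - β) := by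
        have hsub : E ∩ Iic R ⊆ Icc 1 R := fun y hy => ⟨hE1 hy.1, hy.2⟩
        have h1 : (∫ y in E ∩ Iic R, f y) ≤ ∫ y in Icc 1 R, f y := by
          refine setIntegral_mono_set hfc ?_ (HasSubset.Subset.eventuallyLE hsub)
          exact (ae_restrict_iff' measurableSet_Icc).2 (ae_of_all _ fun y hy =>
            hf_nonneg y (by linarith [hy.1]))
        have e1 : (∫ y in Icc 1 R, f y) = ∫ y in Icc 1 R, y ^ (n₁ - 1 - β) := by
          refine setIntegral_congr_fun measurableSet_Icc (fun y hy => ?_)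
          have hy0 : (0:ℝ) < y := by linarith [hy.1]
          show f y = y ^ (n₁ - 1 - β)
          simp only [hfdef]
          rw [← Real.rpow_add hy0]
          congr 1; ring
        have h2 : (∫ y in Icc 1 R, f y) = (R ^ (n₁ - β) - 1) / (n₁ - β) := by
          rw [e1, integral_Icc_eq_integral_Ioc, ← intervalIntegral.integral_of_le hR1,
            integral_rpow (Or.inl (by linarith : (-1:ℝ) < n₁ - 1 - β))]
          rw [show n₁ - 1 - β + 1 = n₁ - β from by ring, Real.one_rpow]
        have h3 : (R ^ (n₁ - β) - 1) / (n₁ - β) ≤ R ^ (n₁ - β) / (n₁ - β) := by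
          gcongr
          linarith
        linarith
      have hpart2 : (∫ y in E ∩ Ioi R, f y) ≤ R ^ (-β) * M := by
        have h1 : (∫ y in E ∩ Ioi R, f y) ≤ ∫ y in E ∩ Ioi R, R ^ (-β) * g y := by
          refine setIntegral_mono_on (hf_int.mono_set inter_subset_left)
            ((hg_int.mono_set inter_subset_left).const_mul _)
            (hE.inter measurableSet_Ioi) (fun y hy => ?_)
          have h2 : y ^ (-β) ≤ R ^ (-β) :=
            Real.rpow_le_rpow_of_nonpos hR0 (le_of_lt hy.2) (by linarith)
          exact mul_le_mul_of_nonneg_right h2 (hg_nonneg y hy.1)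
        rw [integral_const_mul] at h1
        have h3 : (∫ y in E ∩ Ioi R, g y) ≤ M :=
          setIntegral_mono_set hg_int hg_ae
            (HasSubset.Subset.eventuallyLE inter_subset_left)
        calc (∫ y in E ∩ Ioi R, f y) ≤ R ^ (-β) * ∫ y in E ∩ Ioi R, g y := h1
          _ ≤ R ^ (-β) * M :=
            mul_le_mul_of_nonneg_left h3 (Real.rpow_nonneg hR0.le _)
      have hRpow1 : R ^ (n₁ - β) = n₁ ^ γ * M ^ γ := by
        rw [hRdef, ← Real.rpow_mul (mul_nonneg hn₁0.le hM0), hγdef,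
          show 1 / n₁ * (n₁ - β) = (n₁ - β) / n₁ from by ring]
        exact Real.mul_rpow hn₁0.le hM0
      have hRpow2 : R ^ (-β) * M ≤ M ^ γ := by
        have h1 : R ^ (-β) = n₁ ^ (-β / n₁) * M ^ (-β / n₁) := by
          rw [hRdef, ← Real.rpow_mul (mul_nonneg hn₁0.le hM0),
            show 1 / n₁ * (-β) = -β / n₁ from by ring]
          exact Real.mul_rpow hn₁0.le hM0
        have h2 : n₁ ^ (-β / n₁) ≤ 1 :=
          Real.rpow_le_one_of_one_le_of_nonpos hn₁.le
            (by rw [neg_div]; exact neg_nonpos.2 (div_nonneg hβ0.le hn₁0.le))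
        have h3 : M ^ (-β / n₁) * M = M ^ γ := by
          nth_rewrite 2 [← Real.rpow_one M]
          rw [← Real.rpow_add hM0', hγdef]
          congr 1; field_simp; ring
        calc R ^ (-β) * M = n₁ ^ (-β / n₁) * (M ^ (-β / n₁) * M) := by
              rw [h1]; ring
          _ ≤ 1 * (M ^ (-β / n₁) * M) := mul_le_mul_of_nonneg_right h2
              (mul_nonneg (Real.rpow_nonneg hM0 _) hM0)
          _ = M ^ γ := by rw [one_mul, h3]
      have hMγ : M ^ γ ≤ M ^ (1 / p) :=
        Real.rpow_le_rpow_of_exponent_le hM1.le hγp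
      calc A = (∫ y in E ∩ Iic R, f y) + ∫ y in E ∩ Ioi R, f y := hsplit
        _ ≤ R ^ (n₁ - β) / (n₁ - β) + R ^ (-β) * M := add_le_add hpart1 hpart2
        _ ≤ n₁ ^ γ * M ^ γ / (n₁ - β) + M ^ γ := by
            rw [hRpow1]; linarith
        _ = C * M ^ γ := by rw [hCdef]; ring
        _ ≤ C * M ^ (1 / p) := mul_le_mul_of_nonneg_left hMγ hC0.le
  -- the measure estimate
  have hI_le : ∀ x : ℝ, (∫ y in E ∩ Ici x, f y) ≤ A := fun x =>
    setIntegral_mono_set hf_int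
      ((ae_restrict_iff' hE).2 (ae_of_all _ fun y hy =>
        hf_nonneg y (le_trans zero_le_one (hE1 hy))))
      (HasSubset.Subset.eventuallyLE inter_subset_left)
  have hI0 : ∀ x : ℝ, 0 ≤ ∫ y in E ∩ Ici x, f y := fun x =>
    setIntegral_nonneg (hE.inter measurableSet_Ici) (fun y hy =>
      hf_nonneg y (le_trans zero_le_one (hE1 hy.1)))
  rcases le_or_gt A s with hAs | hAs
  · -- the set is empty
    have hS : {x | x ∈ Ici (1:ℝ) ∧ s < x ^ (-α) * ∫ y in E ∩ Ici x, f y} = ∅ := by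
      refine eq_empty_iff_forall_notMem.2 (fun x hx => ?_)
      obtain ⟨hx1, hlt⟩ := hx
      have h1 : x ^ (-α) ≤ 1 :=
        Real.rpow_le_one_of_one_le_of_nonpos hx1 (by linarith)
      have h2 : x ^ (-α) * (∫ y in E ∩ Ici x, f y) ≤ A :=
        le_trans (mul_le_of_le_one_left (hI0 x) h1) (hI_le x)
      exact absurd hlt (not_lt.2 (le_trans h2 hAs))
    rw [hS, measure_empty]
    exact zero_le
  · -- s < A
    have hA0' : (0:ℝ) < A := lt_trans hs hAs
    set T : ℝ := (A / s) ^ (1 / α) with hTdef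
    have hAs1 : 1 < A / s := (one_lt_div hs).2 hAs
    have hT1 : 1 < T := by
      rw [hTdef]
      exact (Real.one_lt_rpow_iff_of_pos (div_pos hA0' hs)).2
        (Or.inl ⟨hAs1, one_div_pos.2 hα⟩)
    have hSsub : {x | x ∈ Ici (1:ℝ) ∧ s < x ^ (-α) * ∫ y in E ∩ Ici x, f y}
        ⊆ Ico 1 T := by
      rintro x ⟨hx1, hlt⟩
      have hx0 : (0:ℝ) < x := by
        have := mem_Ici.1 hx1; linarith
      refine ⟨hx1, ?_⟩
      have h1 : s < x ^ (-α) * A := lt_of_lt_of_le hlt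
        (mul_le_mul_of_nonneg_left (hI_le x) (Real.rpow_nonneg hx0.le _))
      have hxα : 0 < x ^ α := Real.rpow_pos_of_pos hx0 α
      have h2 : x ^ α < A / s := by
        rw [Real.rpow_neg hx0.le, inv_mul_eq_div, lt_div_iff₀ hxα] at h1
        rw [lt_div_iff₀ hs]
        linarith [h1]
      calc x = (x ^ α) ^ (1 / α) := by
            rw [← Real.rpow_mul hx0.le, mul_one_div_cancel hα.ne', Real.rpow_one]
        _ < T := by
            rw [hTdef]
            exact Real.rpow_lt_rpow hxα.le h2 (one_div_pos.2 hα)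
    have hmeas : mu n₂ {x | x ∈ Ici (1:ℝ) ∧
        s < x ^ (-α) * ∫ y in E ∩ Ici x, f y} ≤ ENNReal.ofReal (T ^ n₂) := by
      calc mu n₂ _ ≤ mu n₂ (Ico 1 T) := measure_mono hSsub
        _ = ∫⁻ x in Ico 1 T, ENNReal.ofReal (x ^ (n₂ - 1)) :=
            mu_apply n₂ measurableSet_Ico (fun x hx => hx.1)
        _ ≤ ∫⁻ _x in Ico 1 T, ENNReal.ofReal (T ^ (n₂ - 1)) := by
            refine setLIntegral_mono' measurableSet_Ico (fun x hx => ?_)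
            exact ENNReal.ofReal_le_ofReal
              (Real.rpow_le_rpow (by linarith [hx.1]) hx.2.le (by linarith))
        _ = ENNReal.ofReal (T ^ (n₂ - 1)) * volume (Ico 1 T) :=
            setLIntegral_const _ _
        _ ≤ ENNReal.ofReal (T ^ (n₂ - 1)) * ENNReal.ofReal T := by
            rw [Real.volume_Ico]
            exact mul_le_mul_right (ENNReal.ofReal_le_ofReal (by linarith)) _
        _ = ENNReal.ofReal (T ^ (n₂ - 1) * T) :=
            (ENNReal.ofReal_mul (Real.rpow_nonneg (by linarith) _)).symm
        _ = ENNReal.ofReal (T ^ n₂) := by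
            rw [← Real.rpow_add_one (ne_of_gt (lt_trans one_pos hT1))]
            norm_num
    have hTn : T ^ n₂ = (A / s) ^ (n₂ / α) := by
      rw [hTdef, ← Real.rpow_mul (div_nonneg hA0 hs.le),
        show 1 / α * n₂ = n₂ / α from by ring]
    have hfinal : T ^ n₂ ≤ (C * M ^ (1 / p) / s) ^ q := by
      rw [hTn]
      calc (A / s) ^ (n₂ / α) ≤ (A / s) ^ q :=
            Real.rpow_le_rpow_of_exponent_le hAs1.le hq
        _ ≤ (C * M ^ (1 / p) / s) ^ q :=
            Real.rpow_le_rpow (div_nonneg hA0 hs.le)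
              ((div_le_div_iff_of_pos_right hs).2 hkey) hq0.le
    have hRHS : (ENNReal.ofReal C * (mu n₁ E) ^ (1 / p) / ENNReal.ofReal s) ^ q
        = ENNReal.ofReal ((C * M ^ (1 / p) / s) ^ q) := by
      rw [hmuM, ENNReal.ofReal_rpow_of_nonneg hM0 (one_div_nonneg.2 hp0.le),
        ← ENNReal.ofReal_mul hC0.le, ← ENNReal.ofReal_div_of_pos hs,
        ENNReal.ofReal_rpow_of_nonneg
          (div_nonneg (mul_nonneg hC0.le (Real.rpow_nonneg hM0 _)) hs.le) hq0.le]
    calc mu n₂ _ ≤ ENNReal.ofReal (T ^ n₂) := hmeas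
      _ ≤ ENNReal.ofReal ((C * M ^ (1 / p) / s) ^ q) :=
          ENNReal.ofReal_le_ofReal hfinal
      _ = _ := hRHS.symm
end

section
/- Let n₁, n₂ > 1, let β' ≥ 0 and α' > 0, and let 1 < p < ∞ with conjugate exponent p'. Define, for measurable E ⊆ [1,∞), the function R₂χ_E(x) = x^{−α'} ∫_{E ∩ [1,x]} y^{−β'} y^{n₁−1} dy for x ≥ 1. Suppose either (i) β' > 0, β'p' ≥ n₁, and q ≥ n₂/α', or (ii) β'p' < n₁, α' + β' − n₁/p' > 0, and q ≥ n₂/(α' + β' − n₁/p'). Then there exists a constant C > 0 such that for every measurable E ⊆ [1,∞) with μ_{n₁}(E) < ∞ and every s > 0, μ_{n₂}({x ∈ [1,∞) : R₂χ_E(x) > s}) ≤ (C μ_{n₁}(E)^{1/p} / s)^q. (That is, R₂ is of restricted weak type (p,q), i.e. bounded from L^{p,1}([1,∞), μ_{n₁}) to L^{q,∞}([1,∞), μ_{n₂}).) -/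
open MeasureTheory Set

namespace R2Aux

lemma integrableOn_rpow_Icc (t a b : ℝ) (ha : 0 < a) :
    IntegrableOn (fun y : ℝ => y ^ t) (Icc a b) := by
  apply ContinuousOn.integrableOn_Icc
  exact continuousOn_id.rpow_const fun y hy => Or.inl (ne_of_gt (lt_of_lt_of_le ha hy.1))

lemma integrableOn_prod_Icc (t u a b : ℝ) (ha : 0 < a) :
    IntegrableOn (fun y : ℝ => y ^ t * y ^ u) (Icc a b) := by
  apply ContinuousOn.integrableOn_Icc
  exact (continuousOn_id.rpow_const fun y hy => Or.inl (ne_of_gt (lt_of_lt_of_le ha hy.1))).mul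
    (continuousOn_id.rpow_const fun y hy => Or.inl (ne_of_gt (lt_of_lt_of_le ha hy.1)))

lemma int_Icc_rpow {R : ℝ} (t : ℝ) (hR : 1 ≤ R) (ht : 0 < t) :
    ∫ y in Icc (1:ℝ) R, y ^ (t - 1) = (R ^ t - 1) / t := by
  rw [MeasureTheory.integral_Icc_eq_integral_Ioc, ← intervalIntegral.integral_of_le hR,
    integral_rpow (Or.inl (by linarith)), sub_add_cancel, Real.one_rpow]

lemma mu_apply {n : ℝ} {E : Set ℝ} (hE : MeasurableSet E) (hE1 : E ⊆ Ici 1) :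
    mu n E = ∫⁻ y in E, ENNReal.ofReal (y ^ (n - 1)) := by
  rw [mu, withDensity_apply _ hE, Measure.restrict_restrict hE,
    inter_eq_self_of_subset_left hE1]

lemma mu_toReal {n : ℝ} {E : Set ℝ} (hE : MeasurableSet E) (hE1 : E ⊆ Ici 1) :
    (mu n E).toReal = ∫ y in E, y ^ (n - 1) := by
  rw [mu_apply hE hE1]
  rw [MeasureTheory.integral_eq_lintegral_of_nonneg_ae
    ((ae_restrict_iff' hE).mpr (ae_of_all _ fun y hy =>
      Real.rpow_nonneg (le_trans zero_le_one (hE1 hy)) _))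
    ((by measurability : Measurable fun y : ℝ => y ^ (n-1)).aestronglyMeasurable)]

lemma integrable_weight {n : ℝ} {E : Set ℝ} (hE : MeasurableSet E) (hE1 : E ⊆ Ici 1)
    (hfin : mu n E < ⊤) : IntegrableOn (fun y : ℝ => y ^ (n - 1)) E := by
  constructor
  · exact (by measurability : Measurable fun y : ℝ => y ^ (n-1)).aestronglyMeasurable
  · rw [hasFiniteIntegral_iff_norm]
    have h : ∀ᵐ y ∂(volume.restrict E),
        ENNReal.ofReal ‖y ^ (n-1)‖ = ENNReal.ofReal (y ^ (n-1)) :=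
      (ae_restrict_iff' hE).mpr (ae_of_all _ fun y hy => by
        rw [Real.norm_eq_abs, abs_of_nonneg (Real.rpow_nonneg (le_trans zero_le_one (hE1 hy)) _)])
    rw [lintegral_congr_ae h, ← mu_apply hE hE1]
    exact hfin

lemma setint_weight_le {n : ℝ} {E : Set ℝ} (hE : MeasurableSet E) (hE1 : E ⊆ Ici 1)
    (hfin : mu n E < ⊤) (S : Set ℝ) (hS : S ⊆ E) :
    ∫ y in S, y ^ (n - 1) ≤ (mu n E).toReal := by
  rw [mu_toReal hE hE1]
  exact setIntegral_mono_set (integrable_weight hE hE1 hfin)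
    ((ae_restrict_iff' hE).mpr (ae_of_all _ fun y hy =>
      Real.rpow_nonneg (le_trans zero_le_one (hE1 hy)) _))
    hS.eventuallyLE

/-- bathtub principle: the integral of the decreasing weight `y^(-β')` against `y^(n₁-1) dy`
over `E'` is at most its integral over an interval `[1,R]` of at least the same `μ_{n₁}`-mass. -/
lemma bathtub {n₁ β' : ℝ} (hβ' : 0 ≤ β') {E' : Set ℝ} (hE' : MeasurableSet E') {x R : ℝ}
    (hx : 1 ≤ x) (hR : 1 ≤ R) (hsub : E' ⊆ Icc 1 x)
    (hle : ∫ y in E', y ^ (n₁ - 1) ≤ ∫ y in Icc (1:ℝ) R, y ^ (n₁ - 1)) :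
    ∫ y in E', y ^ (-β') * y ^ (n₁ - 1) ≤ ∫ y in Icc (1:ℝ) R, y ^ (-β') * y ^ (n₁ - 1) := by
  have hR0 : (0:ℝ) < R := lt_of_lt_of_le one_pos hR
  set c := R ^ (-β') with hc
  have hc0 : 0 ≤ c := Real.rpow_nonneg hR0.le _
  set g : ℝ → ℝ := fun y => y ^ (-β') * y ^ (n₁ - 1) with hg
  set w : ℝ → ℝ := fun y => y ^ (n₁ - 1) with hw
  set h : ℝ → ℝ := fun y => g y - c * w y with hh
  have hintE'g : IntegrableOn g E' := (integrableOn_prod_Icc _ _ 1 x one_pos).mono_set hsub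
  have hintE'w : IntegrableOn w E' := (integrableOn_rpow_Icc _ 1 x one_pos).mono_set hsub
  have hintRg : IntegrableOn g (Icc (1:ℝ) R) := integrableOn_prod_Icc _ _ 1 R one_pos
  have hintRw : IntegrableOn w (Icc (1:ℝ) R) := integrableOn_rpow_Icc _ 1 R one_pos
  have hintE'h : IntegrableOn h E' := hintE'g.sub (hintE'w.const_mul c)
  have hintRh : IntegrableOn h (Icc (1:ℝ) R) := hintRg.sub (hintRw.const_mul c)
  -- pointwise sign facts
  have hmono : ∀ y : ℝ, 1 ≤ y → y ≤ R → 0 ≤ h y := by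
    intro y hy1 hyR
    have hy0 : (0:ℝ) < y := lt_of_lt_of_le one_pos hy1
    have h1 : y ^ β' ≤ R ^ β' := Real.rpow_le_rpow hy0.le hyR hβ'
    have h2 : c ≤ y ^ (-β') := by
      rw [hc, Real.rpow_neg hR0.le, Real.rpow_neg hy0.le]
      exact inv_anti₀ (Real.rpow_pos_of_pos hy0 _) h1
    have h3 : 0 ≤ w y := Real.rpow_nonneg hy0.le _
    have := mul_le_mul_of_nonneg_right h2 h3
    simp only [hh, hg, hw]
    nlinarith [this]
  have hmono' : ∀ y : ℝ, 1 ≤ y → R ≤ y → h y ≤ 0 := by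
    intro y hy1 hRy
    have hy0 : (0:ℝ) < y := lt_of_lt_of_le one_pos hy1
    have h1 : R ^ β' ≤ y ^ β' := Real.rpow_le_rpow hR0.le hRy hβ'
    have h2 : y ^ (-β') ≤ c := by
      rw [hc, Real.rpow_neg hR0.le, Real.rpow_neg hy0.le]
      exact inv_anti₀ (Real.rpow_pos_of_pos hR0 _) h1
    have h3 : 0 ≤ w y := Real.rpow_nonneg hy0.le _
    have := mul_le_mul_of_nonneg_right h2 h3
    simp only [hh, hg, hw]
    nlinarith [this]
  have key1 : ∫ y in E', g y = (∫ y in E', h y) + c * ∫ y in E', w y := by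
    rw [hh]
    rw [integral_sub hintE'g (hintE'w.const_mul c), integral_const_mul]
    ring
  have key2 : ∫ y in E', h y ≤ ∫ y in E' ∩ Icc 1 R, h y := by
    have hsplit := integral_inter_add_diff (t := Icc (1:ℝ) R) measurableSet_Icc hintE'h
    have hneg : ∫ y in E' \ Icc 1 R, h y ≤ 0 := by
      apply setIntegral_nonpos (hE'.diff measurableSet_Icc)
      intro y hy
      have hy1 : (1:ℝ) ≤ y := (hsub hy.1).1
      have hRy : R ≤ y := by
        by_contra hcon
        push_neg at hcon
        exact hy.2 ⟨hy1, hcon.le⟩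
      exact hmono' y hy1 hRy
    linarith
  have key3 : ∫ y in E' ∩ Icc 1 R, h y ≤ ∫ y in Icc (1:ℝ) R, h y := by
    apply setIntegral_mono_set hintRh
    · exact (ae_restrict_iff' measurableSet_Icc).mpr
        (ae_of_all _ fun y hy => hmono y hy.1 hy.2)
    · exact inter_subset_right.eventuallyLE
  have key4 : ∫ y in Icc (1:ℝ) R, h y = (∫ y in Icc (1:ℝ) R, g y) - c * ∫ y in Icc (1:ℝ) R, w y := by
    rw [hh, integral_sub hintRg (hintRw.const_mul c), integral_const_mul]
  have hEw : ∫ y in E', w y ≤ ∫ y in Icc (1:ℝ) R, w y := hle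
  have := mul_le_mul_of_nonneg_left hEw hc0
  simp only [hg, hw, hh] at key1 key2 key3 key4 ⊢
  linarith

lemma mu_Icc_le {n T : ℝ} (hn : 1 < n) (hT : 1 ≤ T) :
    mu n (Icc 1 T) ≤ ENNReal.ofReal (T ^ n) := by
  have hT0 : (0:ℝ) < T := lt_of_lt_of_le one_pos hT
  rw [mu_apply measurableSet_Icc Icc_subset_Ici_self]
  calc ∫⁻ y in Icc (1:ℝ) T, ENNReal.ofReal (y ^ (n-1))
      ≤ ∫⁻ _ in Icc (1:ℝ) T, ENNReal.ofReal (T ^ (n-1)) :=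
        setLIntegral_mono measurable_const fun y hy =>
          ENNReal.ofReal_le_ofReal
            (Real.rpow_le_rpow (le_trans zero_le_one hy.1) hy.2 (by linarith))
    _ = ENNReal.ofReal (T ^ (n-1)) * volume (Icc (1:ℝ) T) := setLIntegral_const _ _
    _ ≤ ENNReal.ofReal (T ^ (n-1)) * ENNReal.ofReal T := by
        rw [Real.volume_Icc]
        exact mul_le_mul_right (ENNReal.ofReal_le_ofReal (by linarith)) _
    _ = ENNReal.ofReal (T ^ (n-1) * T) := (ENNReal.ofReal_mul (Real.rpow_nonneg hT0.le _)).symm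
    _ = ENNReal.ofReal (T ^ n) := by
        congr 1
        have h1 : T ^ (n-1) * T ^ (1:ℝ) = T ^ n := by
          rw [← Real.rpow_add hT0]; norm_num
        rw [Real.rpow_one] at h1
        exact h1

lemma key_small {n₁ β' : ℝ} (hn₁ : 1 < n₁) (hβ' : 0 ≤ β') {E : Set ℝ} (hE : MeasurableSet E)
    (hE1 : E ⊆ Ici 1) (hfin : mu n₁ E < ⊤) {x : ℝ} (hx : 1 ≤ x) :
    ∫ y in E ∩ Icc 1 x, y ^ (-β') * y ^ (n₁ - 1) ≤ (mu n₁ E).toReal := by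
  have hmeasS : MeasurableSet (E ∩ Icc 1 x) := hE.inter measurableSet_Icc
  have hintp : IntegrableOn (fun y : ℝ => y ^ (-β') * y ^ (n₁-1)) (E ∩ Icc 1 x) :=
    (integrableOn_prod_Icc _ _ 1 x one_pos).mono_set inter_subset_right
  have hintw : IntegrableOn (fun y : ℝ => y ^ (n₁-1)) (E ∩ Icc 1 x) :=
    (integrableOn_rpow_Icc _ 1 x one_pos).mono_set inter_subset_right
  have step1 : ∫ y in E ∩ Icc 1 x, y ^ (-β') * y ^ (n₁-1) ≤ ∫ y in E ∩ Icc 1 x, y ^ (n₁-1) := by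
    apply setIntegral_mono_on hintp hintw hmeasS
    intro y hy
    have hy1 : (1:ℝ) ≤ y := hy.2.1
    have h1 : y ^ (-β') ≤ 1 := by
      calc y ^ (-β') ≤ y ^ (0:ℝ) := Real.rpow_le_rpow_of_exponent_le hy1 (by linarith)
      _ = 1 := Real.rpow_zero y
    calc y ^ (-β') * y ^ (n₁-1) ≤ 1 * y ^ (n₁-1) :=
          mul_le_mul_of_nonneg_right h1 (Real.rpow_nonneg (by linarith) _)
    _ = y ^ (n₁-1) := one_mul _
  exact le_trans step1 (setint_weight_le hE hE1 hfin _ inter_subset_left)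

end R2Aux

open R2Aux in
/-- master lemma: the pointwise bound implies the weak-type conclusion. -/
lemma R2_master (n₁ n₂ α' β' p q δ C : ℝ)
    (hn₂ : 1 < n₂) (hδ : 0 < δ) (hq : n₂ / δ ≤ q) (hC : 0 < C) (hp : 1 < p)
    (hkey : ∀ E : Set ℝ, MeasurableSet E → E ⊆ Ici 1 → mu n₁ E < ⊤ → ∀ x : ℝ, 1 ≤ x →
      (∫ y in E ∩ Icc 1 x, y ^ (-β') * y ^ (n₁ - 1)) ≤
        C * (mu n₁ E).toReal ^ (1 / p) * x ^ (α' - δ)) :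
    ∀ E : Set ℝ, MeasurableSet E → E ⊆ Ici (1 : ℝ) → mu n₁ E < ⊤ →
      ∀ s > 0,
        mu n₂ {x | x ∈ Ici (1 : ℝ) ∧
            s < x ^ (-α') * ∫ y in E ∩ Icc 1 x, y ^ (-β') * y ^ (n₁ - 1)} ≤
          (ENNReal.ofReal C * (mu n₁ E) ^ (1 / p) / ENNReal.ofReal s) ^ q := by
  intro E hE hE1 hfin s hs
  set M := (mu n₁ E).toReal with hM
  have hM0 : 0 ≤ M := ENNReal.toReal_nonneg
  set t := C * M ^ (1/p) / s with htdef
  have ht0 : 0 ≤ t := by positivity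
  have hxbound : ∀ x : ℝ, x ∈ Ici (1:ℝ) →
      (s < x ^ (-α') * ∫ y in E ∩ Icc 1 x, y ^ (-β') * y ^ (n₁ - 1)) → x ^ δ < t := by
    intro x hx1 hx2
    have hx1' : (1:ℝ) ≤ x := hx1
    have hxpos : (0:ℝ) < x := lt_of_lt_of_le one_pos hx1'
    have hb := hkey E hE hE1 hfin x hx1'
    have h2 : s < x ^ (-α') * (C * M ^ (1/p) * x ^ (α' - δ)) :=
      lt_of_lt_of_le hx2 (mul_le_mul_of_nonneg_left hb (Real.rpow_nonneg hxpos.le _))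
    have hxx : x ^ (-α') * x ^ (α' - δ) = x ^ (-δ) := by
      rw [← Real.rpow_add hxpos, show -α' + (α' - δ) = -δ by ring]
    have h3 : x ^ (-α') * (C * M ^ (1/p) * x ^ (α' - δ)) = C * M ^ (1/p) * x ^ (-δ) := by
      rw [← hxx]; ring
    rw [h3] at h2
    have hxd : 0 < x ^ δ := Real.rpow_pos_of_pos hxpos δ
    have hxx2 : x ^ (-δ) * x ^ δ = 1 := by
      rw [← Real.rpow_add hxpos, show -δ + δ = (0:ℝ) by ring, Real.rpow_zero]
    have h4 : s * x ^ δ < C * M ^ (1/p) := by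
      calc s * x ^ δ < (C * M ^ (1/p) * x ^ (-δ)) * x ^ δ := by
            exact mul_lt_mul_of_pos_right h2 hxd
      _ = C * M ^ (1/p) := by rw [mul_assoc, hxx2, mul_one]
    rw [htdef]
    rw [lt_div_iff₀ hs]
    linarith
  by_cases hts : t ≤ 1
  · have hempty : {x | x ∈ Ici (1:ℝ) ∧
        s < x ^ (-α') * ∫ y in E ∩ Icc 1 x, y ^ (-β') * y ^ (n₁ - 1)} ⊆ (∅ : Set ℝ) := by
      rintro x ⟨hx1, hx2⟩
      have h5 := hxbound x hx1 hx2
      have hx1' : (1:ℝ) ≤ x := hx1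
      have h6 : (1:ℝ) ≤ x ^ δ := by
        calc (1:ℝ) = x ^ (0:ℝ) := (Real.rpow_zero x).symm
        _ ≤ x ^ δ := Real.rpow_le_rpow_of_exponent_le hx1' hδ.le
      exfalso; linarith
    calc mu n₂ _ ≤ mu n₂ (∅ : Set ℝ) := measure_mono hempty
    _ = 0 := measure_empty
    _ ≤ _ := zero_le
  · push_neg at hts
    have htpos : 0 < t := lt_trans one_pos hts
    set T := t ^ (1/δ) with hTdef
    have hT1 : (1:ℝ) ≤ T := by
      calc (1:ℝ) = t ^ (0:ℝ) := (Real.rpow_zero t).symm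
      _ ≤ T := Real.rpow_le_rpow_of_exponent_le hts.le (by positivity)
    have hTδ : T ^ δ = t := by
      rw [hTdef, ← Real.rpow_mul ht0, one_div, inv_mul_cancel₀ (ne_of_gt hδ), Real.rpow_one]
    have hsub : {x | x ∈ Ici (1:ℝ) ∧
        s < x ^ (-α') * ∫ y in E ∩ Icc 1 x, y ^ (-β') * y ^ (n₁ - 1)} ⊆ Icc 1 T := by
      rintro x ⟨hx1, hx2⟩
      refine ⟨hx1, ?_⟩
      by_contra hcon
      push_neg at hcon
      have h7 : T ^ δ ≤ x ^ δ := Real.rpow_le_rpow (by linarith) hcon.le hδ.le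
      have h8 := hxbound x hx1 hx2
      rw [hTδ] at h7
      linarith
    have hMpos : 0 < M := by
      rcases eq_or_lt_of_le hM0 with h|h
      · exfalso
        have h1p : (1/p : ℝ) ≠ 0 := ne_of_gt (by positivity)
        have : t = 0 := by rw [htdef, ← h, Real.zero_rpow h1p, mul_zero, zero_div]
        linarith
      · exact h
    have hMeq : mu n₁ E = ENNReal.ofReal M := (ENNReal.ofReal_toReal hfin.ne).symm
    calc mu n₂ _ ≤ mu n₂ (Icc 1 T) := measure_mono hsub
    _ ≤ ENNReal.ofReal (T ^ n₂) := mu_Icc_le hn₂ hT1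
    _ ≤ ENNReal.ofReal (t ^ q) := by
        apply ENNReal.ofReal_le_ofReal
        have h9 : T ^ n₂ = t ^ ((1/δ) * n₂) := by rw [hTdef, ← Real.rpow_mul ht0]
        rw [h9, show (1/δ) * n₂ = n₂/δ by ring]
        exact Real.rpow_le_rpow_of_exponent_le hts.le hq
    _ = (ENNReal.ofReal C * (mu n₁ E) ^ (1/p) / ENNReal.ofReal s) ^ q := by
        rw [hMeq, ENNReal.ofReal_rpow_of_pos hMpos, ← ENNReal.ofReal_mul hC.le,
          ← ENNReal.ofReal_div_of_pos hs, ENNReal.ofReal_rpow_of_pos (by positivity), htdef]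

open R2Aux in
lemma R2_key1 (n₁ β' p : ℝ) (hn₁ : 1 < n₁) (hβ' : 0 ≤ β') (hp : 1 < p)
    (hγle : n₁ - β' ≤ n₁ / p)
    {E : Set ℝ} (hE : MeasurableSet E) (hE1 : E ⊆ Ici 1) (hfin : mu n₁ E < ⊤)
    {x : ℝ} (hx : 1 ≤ x) (e : ℝ) (he : 0 ≤ e) :
    ∫ y in E ∩ Icc 1 x, y ^ (-β') * y ^ (n₁ - 1) ≤
      max 1 ((n₁+1) ^ (1/p) * (p/n₁)) * (mu n₁ E).toReal ^ (1/p) * x ^ e := by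
  have hppos : (0:ℝ) < p := lt_trans one_pos hp
  set M := (mu n₁ E).toReal with hM
  have hM0 : 0 ≤ M := ENNReal.toReal_nonneg
  set C := max 1 ((n₁+1) ^ (1/p) * (p/n₁)) with hCdef
  have hC1 : (1:ℝ) ≤ C := le_max_left _ _
  have hxe : (1:ℝ) ≤ x ^ e := by
    calc (1:ℝ) = x ^ (0:ℝ) := (Real.rpow_zero x).symm
    _ ≤ x ^ e := Real.rpow_le_rpow_of_exponent_le hx he
  have hMp0 : 0 ≤ M ^ (1/p) := Real.rpow_nonneg hM0 _
  have main : ∫ y in E ∩ Icc 1 x, y ^ (-β') * y ^ (n₁ - 1) ≤ C * M ^ (1/p) := by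
    rcases le_or_gt M 1 with hM1|hM1
    · have h1 := key_small hn₁ hβ' hE hE1 hfin hx
      have h2 : M ≤ M ^ (1/p) := by
        rcases eq_or_lt_of_le hM0 with h|h
        · rw [← h, Real.zero_rpow (ne_of_gt (by positivity : (0:ℝ) < 1/p))]
        · calc M = M ^ (1:ℝ) := (Real.rpow_one M).symm
          _ ≤ M ^ (1/p) := Real.rpow_le_rpow_of_exponent_ge h hM1
              (by rw [div_le_one hppos]; linarith)
      calc ∫ y in E ∩ Icc 1 x, y ^ (-β') * y ^ (n₁ - 1) ≤ M := h1
      _ ≤ M ^ (1/p) := h2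
      _ ≤ C * M ^ (1/p) := le_mul_of_one_le_left hMp0 hC1
    · have hn₁0 : (0:ℝ) < n₁ := by linarith
      set b := n₁ * M + 1 with hbdef
      have hb1 : (1:ℝ) ≤ b := by nlinarith
      have hb0 : (0:ℝ) ≤ b := by linarith
      set R := b ^ (n₁⁻¹) with hRdef
      have hR1 : (1:ℝ) ≤ R := by
        calc (1:ℝ) = b ^ (0:ℝ) := (Real.rpow_zero b).symm
        _ ≤ R := Real.rpow_le_rpow_of_exponent_le hb1 (by positivity)
      have hRt : ∀ u : ℝ, R ^ u = b ^ (n₁⁻¹ * u) := fun u => (Real.rpow_mul hb0 n₁⁻¹ u).symm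
      have hRn : ∫ y in Icc (1:ℝ) R, y ^ (n₁ - 1) = M := by
        rw [int_Icc_rpow n₁ hR1 hn₁0, hRt n₁, inv_mul_cancel₀ (ne_of_gt hn₁0), Real.rpow_one]
        field_simp
        rw [hbdef]; ring
      have hbath : ∫ y in E ∩ Icc 1 x, y ^ (-β') * y ^ (n₁-1) ≤
          ∫ y in Icc (1:ℝ) R, y ^ (-β') * y ^ (n₁-1) :=
        bathtub hβ' (hE.inter measurableSet_Icc) hx hR1 inter_subset_right
          (by rw [hRn]; exact setint_weight_le hE hE1 hfin _ inter_subset_left)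
      have hmid : ∫ y in Icc (1:ℝ) R, y ^ (-β') * y ^ (n₁-1) ≤
          ∫ y in Icc (1:ℝ) R, y ^ (n₁/p - 1) := by
        apply setIntegral_mono_on (integrableOn_prod_Icc _ _ 1 R one_pos)
          (integrableOn_rpow_Icc _ 1 R one_pos) measurableSet_Icc
        intro y hy
        have hy1 : (1:ℝ) ≤ y := hy.1
        have hy0 : (0:ℝ) < y := lt_of_lt_of_le one_pos hy1
        rw [← Real.rpow_add hy0]
        exact Real.rpow_le_rpow_of_exponent_le hy1 (by linarith)
      have hend : ∫ y in Icc (1:ℝ) R, y ^ (n₁/p - 1) ≤ (n₁+1) ^ (1/p) * (p/n₁) * M ^ (1/p) := by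
        rw [int_Icc_rpow (n₁/p) hR1 (by positivity)]
        have h1 : R ^ (n₁/p) = b ^ (1/p) := by
          rw [hRt (n₁/p)]
          congr 1
          field_simp
        have h2 : b ≤ (n₁+1) * M := by nlinarith
        have h3 : b ^ (1/p) ≤ ((n₁+1) * M) ^ (1/p) := Real.rpow_le_rpow hb0 h2 (by positivity)
        have h4 : ((n₁+1)*M) ^ (1/p) = (n₁+1) ^ (1/p) * M ^ (1/p) :=
          Real.mul_rpow (by linarith) hM0
        have h5 : (R ^ (n₁/p) - 1) / (n₁/p) ≤ R ^ (n₁/p) * (p/n₁) := by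
          rw [div_eq_mul_inv, inv_div]
          exact mul_le_mul_of_nonneg_right (by linarith) (by positivity)
        calc (R ^ (n₁/p) - 1) / (n₁/p) ≤ R ^ (n₁/p) * (p/n₁) := h5
        _ = b ^ (1/p) * (p/n₁) := by rw [h1]
        _ ≤ ((n₁+1) * M) ^ (1/p) * (p/n₁) := mul_le_mul_of_nonneg_right h3 (by positivity)
        _ = (n₁+1) ^ (1/p) * (p/n₁) * M ^ (1/p) := by rw [h4]; ring
      calc ∫ y in E ∩ Icc 1 x, y ^ (-β') * y ^ (n₁ - 1)
          ≤ (n₁+1) ^ (1/p) * (p/n₁) * M ^ (1/p) := le_trans hbath (le_trans hmid hend)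
      _ ≤ C * M ^ (1/p) := mul_le_mul_of_nonneg_right (le_max_right _ _) hMp0
  calc ∫ y in E ∩ Icc 1 x, y ^ (-β') * y ^ (n₁ - 1) ≤ C * M ^ (1/p) := main
  _ = C * M ^ (1/p) * 1 := (mul_one _).symm
  _ ≤ C * M ^ (1/p) * x ^ e := by
      apply mul_le_mul_of_nonneg_left hxe
      exact mul_nonneg (by linarith) hMp0

open R2Aux in
lemma R2_key2 (n₁ β' p : ℝ) (hn₁ : 1 < n₁) (hβ' : 0 ≤ β') (hp : 1 < p)
    (hγgt : n₁/p < n₁ - β')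
    {E : Set ℝ} (hE : MeasurableSet E) (hE1 : E ⊆ Ici 1) (hfin : mu n₁ E < ⊤)
    {x : ℝ} (hx : 1 ≤ x) :
    ∫ y in E ∩ Icc 1 x, y ^ (-β') * y ^ (n₁ - 1) ≤
      max 1 ((n₁+1) ^ (1/p) / (n₁ - β')) * (mu n₁ E).toReal ^ (1/p) * x ^ (n₁ - β' - n₁/p) := by
  have hppos : (0:ℝ) < p := lt_trans one_pos hp
  have hn₁0 : (0:ℝ) < n₁ := by linarith
  have hγpos : (0:ℝ) < n₁ - β' := lt_trans (by positivity) hγgt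
  have he : (0:ℝ) ≤ n₁ - β' - n₁/p := by linarith
  set M := (mu n₁ E).toReal with hM
  have hM0 : 0 ≤ M := ENNReal.toReal_nonneg
  set C := max 1 ((n₁+1) ^ (1/p) / (n₁ - β')) with hCdef
  have hC1 : (1:ℝ) ≤ C := le_max_left _ _
  have hxpos : (0:ℝ) < x := lt_of_lt_of_le one_pos hx
  have hxe : (1:ℝ) ≤ x ^ (n₁ - β' - n₁/p) := by
    calc (1:ℝ) = x ^ (0:ℝ) := (Real.rpow_zero x).symm
    _ ≤ x ^ (n₁ - β' - n₁/p) := Real.rpow_le_rpow_of_exponent_le hx he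
  have hMp0 : 0 ≤ M ^ (1/p) := Real.rpow_nonneg hM0 _
  have hxe0 : 0 ≤ x ^ (n₁ - β' - n₁/p) := by linarith
  rcases le_or_gt M 1 with hM1|hM1
  · have h1 := key_small hn₁ hβ' hE hE1 hfin hx
    have h2 : M ≤ M ^ (1/p) := by
      rcases eq_or_lt_of_le hM0 with h|h
      · rw [← h, Real.zero_rpow (ne_of_gt (by positivity : (0:ℝ) < 1/p))]
      · calc M = M ^ (1:ℝ) := (Real.rpow_one M).symm
        _ ≤ M ^ (1/p) := Real.rpow_le_rpow_of_exponent_ge h hM1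
            (by rw [div_le_one hppos]; linarith)
    calc ∫ y in E ∩ Icc 1 x, y ^ (-β') * y ^ (n₁ - 1) ≤ M := h1
    _ ≤ M ^ (1/p) := h2
    _ = 1 * M ^ (1/p) * 1 := by ring
    _ ≤ C * M ^ (1/p) * x ^ (n₁ - β' - n₁/p) := by
        apply mul_le_mul (mul_le_mul_of_nonneg_right hC1 hMp0) hxe zero_le_one
        exact mul_nonneg (by linarith) hMp0
  · set b := n₁ * M + 1 with hbdef
    have hb1 : (1:ℝ) ≤ b := by nlinarith
    have hb0 : (0:ℝ) ≤ b := by linarith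
    set R := b ^ (n₁⁻¹) with hRdef
    have hR1 : (1:ℝ) ≤ R := by
      calc (1:ℝ) = b ^ (0:ℝ) := (Real.rpow_zero b).symm
      _ ≤ R := Real.rpow_le_rpow_of_exponent_le hb1 (by positivity)
    have hRt : ∀ u : ℝ, R ^ u = b ^ (n₁⁻¹ * u) := fun u => (Real.rpow_mul hb0 n₁⁻¹ u).symm
    have hRn : ∫ y in Icc (1:ℝ) R, y ^ (n₁ - 1) = M := by
      rw [int_Icc_rpow n₁ hR1 hn₁0, hRt n₁, inv_mul_cancel₀ (ne_of_gt hn₁0), Real.rpow_one]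
      field_simp
      rw [hbdef]; ring
    set u := min x R with hudef
    have hu1 : (1:ℝ) ≤ u := le_min hx hR1
    have hu0 : (0:ℝ) < u := lt_of_lt_of_le one_pos hu1
    have hbound : ∫ y in E ∩ Icc 1 x, y ^ (-β') * y ^ (n₁-1) ≤
        ∫ y in Icc (1:ℝ) u, y ^ (-β') * y ^ (n₁-1) := by
      rcases le_total x R with hxR|hRx
      · rw [hudef, min_eq_left hxR]
        apply setIntegral_mono_set (integrableOn_prod_Icc _ _ 1 x one_pos)
        · exact (ae_restrict_iff' measurableSet_Icc).mpr (ae_of_all _ fun y hy =>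
            mul_nonneg (Real.rpow_nonneg (by linarith [hy.1]) _)
              (Real.rpow_nonneg (by linarith [hy.1]) _))
        · exact inter_subset_right.eventuallyLE
      · rw [hudef, min_eq_right hRx]
        exact bathtub hβ' (hE.inter measurableSet_Icc) hx hR1 inter_subset_right
          (by rw [hRn]; exact setint_weight_le hE hE1 hfin _ inter_subset_left)
    have hcongr : ∫ y in Icc (1:ℝ) u, y ^ (-β') * y ^ (n₁-1) =
        ∫ y in Icc (1:ℝ) u, y ^ (n₁ - β' - 1) := by
      apply setIntegral_congr_fun measurableSet_Icc
      intro y hy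
      have hy0 : (0:ℝ) < y := lt_of_lt_of_le one_pos hy.1
      show y ^ (-β') * y ^ (n₁ - 1) = y ^ (n₁ - β' - 1)
      rw [← Real.rpow_add hy0]
      congr 1
      ring
    have hval : ∫ y in Icc (1:ℝ) u, y ^ (n₁ - β' - 1) = (u ^ (n₁ - β') - 1) / (n₁ - β') := by
      rw [show (n₁ - β' - 1) = (n₁ - β') - 1 by ring]
      exact int_Icc_rpow (n₁ - β') hu1 hγpos
    have hfactor : u ^ (n₁ - β') ≤ x ^ (n₁ - β' - n₁/p) * R ^ (n₁/p) := by
      have hsplit : u ^ (n₁ - β') = u ^ (n₁ - β' - n₁/p) * u ^ (n₁/p) := by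
        rw [← Real.rpow_add hu0]
        congr 1
        ring
      rw [hsplit]
      apply mul_le_mul
      · exact Real.rpow_le_rpow hu0.le (min_le_left x R) he
      · exact Real.rpow_le_rpow hu0.le (min_le_right x R) (by positivity)
      · exact Real.rpow_nonneg hu0.le _
      · exact Real.rpow_nonneg (by positivity) _
    have hRb : R ^ (n₁/p) ≤ (n₁+1) ^ (1/p) * M ^ (1/p) := by
      have h1 : R ^ (n₁/p) = b ^ (1/p) := by
        rw [hRt (n₁/p)]
        congr 1
        field_simp
      have h2 : b ≤ (n₁+1) * M := by nlinarith
      have h3 : b ^ (1/p) ≤ ((n₁+1) * M) ^ (1/p) := Real.rpow_le_rpow hb0 h2 (by positivity)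
      have h4 : ((n₁+1)*M) ^ (1/p) = (n₁+1) ^ (1/p) * M ^ (1/p) :=
        Real.mul_rpow (by linarith) hM0
      rw [h1]
      rw [h4] at h3
      exact h3
    have hfin2 : (u ^ (n₁ - β') - 1) / (n₁ - β') ≤
        ((n₁+1) ^ (1/p) / (n₁ - β')) * M ^ (1/p) * x ^ (n₁ - β' - n₁/p) := by
      have h5 : u ^ (n₁ - β') - 1 ≤ x ^ (n₁ - β' - n₁/p) * ((n₁+1) ^ (1/p) * M ^ (1/p)) := by
        have := mul_le_mul_of_nonneg_left hRb hxe0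
        nlinarith [hfactor]
      rw [div_le_iff₀ hγpos] at *
      calc u ^ (n₁ - β') - 1 ≤ x ^ (n₁ - β' - n₁/p) * ((n₁+1) ^ (1/p) * M ^ (1/p)) := h5
      _ = (n₁+1) ^ (1/p) / (n₁ - β') * M ^ (1/p) * x ^ (n₁ - β' - n₁/p) * (n₁ - β') := by
          field_simp
    calc ∫ y in E ∩ Icc 1 x, y ^ (-β') * y ^ (n₁ - 1)
        ≤ (u ^ (n₁ - β') - 1) / (n₁ - β') := by rw [← hval, ← hcongr]; exact hbound
    _ ≤ ((n₁+1) ^ (1/p) / (n₁ - β')) * M ^ (1/p) * x ^ (n₁ - β' - n₁/p) := hfin2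
    _ ≤ C * M ^ (1/p) * x ^ (n₁ - β' - n₁/p) := by
        apply mul_le_mul_of_nonneg_right _ hxe0
        exact mul_le_mul_of_nonneg_right (le_max_right _ _) hMp0

/-- The operator `R₂ χ_E (x) = x^{-α'} ∫_{E ∩ [1,x]} y^{-β'} y^{n₁-1} dy` is of restricted
weak type `(p,q)` from `([1,∞), μ_{n₁})` to `([1,∞), μ_{n₂})`, under either of the two
exponent conditions (`β'p' ≥ n₁` and `q ≥ n₂/α'`, or `β'p' < n₁` and
`q ≥ n₂/(α'+β'-n₁/p')`). -/
theorem R2_restricted_weak_type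
    (n₁ n₂ α' β' p p' q : ℝ)
    (hn₁ : 1 < n₁) (hn₂ : 1 < n₂)
    (hβ' : 0 ≤ β') (hα' : 0 < α')
    (hp : 1 < p) (hconj : 1 / p + 1 / p' = 1)
    (hcase : (0 < β' ∧ n₁ ≤ β' * p' ∧ n₂ / α' ≤ q) ∨
             (β' * p' < n₁ ∧ 0 < α' + β' - n₁ / p' ∧ n₂ / (α' + β' - n₁ / p') ≤ q)) :
    ∃ C > 0, ∀ E : Set ℝ, MeasurableSet E → E ⊆ Ici (1 : ℝ) → mu n₁ E < ⊤ →
      ∀ s > 0,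
        mu n₂ {x | x ∈ Ici (1 : ℝ) ∧
            s < x ^ (-α') * ∫ y in E ∩ Icc 1 x, y ^ (-β') * y ^ (n₁ - 1)} ≤
          (ENNReal.ofReal C * (mu n₁ E) ^ (1 / p) / ENNReal.ofReal s) ^ q := by
  have hppos : (0:ℝ) < p := lt_trans one_pos hp
  have h1p' : 1/p' = 1 - 1/p := by linarith
  have hp'pos : (0:ℝ) < p' := by
    have h2 : (0:ℝ) < 1 - 1/p := by
      have : 1/p < 1 := by rw [div_lt_one hppos]; exact hp
      linarith
    have h3 : (0:ℝ) < 1/p' := by rw [h1p']; exact h2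
    exact one_div_pos.mp h3
  have hsplit : n₁ / p' = n₁ - n₁ / p := by
    calc n₁ / p' = n₁ * (1/p') := by ring
    _ = n₁ * (1 - 1/p) := by rw [h1p']
    _ = n₁ - n₁/p := by ring
  rcases hcase with ⟨hβpos, hβp', hq⟩ | ⟨hβp', hδpos, hq⟩
  · have hγle : n₁ - β' ≤ n₁ / p := by
      have : n₁ / p' ≤ β' := (div_le_iff₀ hp'pos).mpr (by linarith)
      linarith
    refine ⟨max 1 ((n₁+1) ^ (1/p) * (p/n₁)), lt_of_lt_of_le one_pos (le_max_left _ _), ?_⟩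
    apply R2_master n₁ n₂ α' β' p q α' _ hn₂ hα' hq
      (lt_of_lt_of_le one_pos (le_max_left _ _)) hp
    intro E hE hE1 hfin x hx
    exact R2_key1 n₁ β' p hn₁ hβ' hp hγle hE hE1 hfin hx (α' - α') (by linarith)
  · have hγgt : n₁/p < n₁ - β' := by
      have : β' < n₁ / p' := (lt_div_iff₀ hp'pos).mpr (by linarith)
      linarith
    have hexp : α' - (α' + β' - n₁ / p') = n₁ - β' - n₁/p := by linarith
    refine ⟨max 1 ((n₁+1) ^ (1/p) / (n₁ - β')), lt_of_lt_of_le one_pos (le_max_left _ _), ?_⟩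
    apply R2_master n₁ n₂ α' β' p q (α' + β' - n₁ / p') _ hn₂ hδpos hq
      (lt_of_lt_of_le one_pos (le_max_left _ _)) hp
    intro E hE hE1 hfin x hx
    rw [hexp]
    exact R2_key2 n₁ β' p hn₁ hβ' hp hγgt hE hE1 hfin hx
end

section
/- Let d > 1 and 1 ≤ p < d. Then for every continuously differentiable, compactly supported function f on [1,∞) one has ∫₁^∞ |f(x)/x|^p x^{d−1} dx ≤ (p/(d−p))^p ∫₁^∞ |f'(t)|^p t^{d−1} dt. -/
open MeasureTheory Set Filter

private lemma ioi_split {g : ℝ → ℝ} {a : ℝ} (ha : 1 ≤ a)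
    (hi : IntegrableOn g (Ioi 1)) :
    ∫ t in Ioi 1, g t = (∫ t in Ioc 1 a, g t) + ∫ t in Ioi a, g t := by
  rw [← Ioc_union_Ioi_eq_Ioi ha,
    setIntegral_union (Ioc_disjoint_Ioi le_rfl) measurableSet_Ioi
      (hi.mono_set Ioc_subset_Ioi_self) (hi.mono_set (Ioi_subset_Ioi ha))]

private lemma ioi_eq_of_zero {F : ℝ → ℝ} {M : ℝ} (hM : 1 ≤ M)
    (hz : ∀ x, M ≤ x → F x = 0) (hi : IntegrableOn F (Ioc 1 M)) :
    IntegrableOn F (Ioi 1) ∧ ∫ x in Ioi 1, F x = ∫ x in Ioc 1 M, F x := by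
  have hzi : EqOn F 0 (Ioi M) := fun x hx => hz x (le_of_lt hx)
  have hIM : IntegrableOn F (Ioi M) :=
    (integrableOn_zero).congr_fun (fun x hx => (hz x hx.le).symm) measurableSet_Ioi
  constructor
  · rw [← Ioc_union_Ioi_eq_Ioi hM]; exact hi.union hIM
  · rw [← Ioc_union_Ioi_eq_Ioi hM,
      setIntegral_union (Ioc_disjoint_Ioi le_rfl) measurableSet_Ioi hi hIM,
      setIntegral_congr_fun measurableSet_Ioi hzi]
    simp

/-- Hardy's inequality on `[1,∞)` with the measure `x^{d-1} dx`: for `d > 1` and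
`1 ≤ p < d`, every continuously differentiable compactly supported function `f` satisfies
`∫₁^∞ |f(x)/x|^p x^{d-1} dx ≤ (p/(d-p))^p ∫₁^∞ |f'(t)|^p t^{d-1} dt`. -/
theorem hardy_inequality_half_line
    (d p : ℝ) (hd : 1 < d) (hp1 : 1 ≤ p) (hpd : p < d)
    (f : ℝ → ℝ) (hf : ContDiff ℝ 1 f) (hsupp : HasCompactSupport f) :
    ∫ x in Ici (1 : ℝ), |f x / x| ^ p * x ^ (d - 1) ≤
      (p / (d - p)) ^ p * ∫ t in Ici (1 : ℝ), |deriv f t| ^ p * t ^ (d - 1) := by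
  have hp0 : (0:ℝ) < p := lt_of_lt_of_le one_pos hp1
  have hfc : Continuous f := hf.continuous
  have hf'c : Continuous (deriv f) := hf.continuous_deriv le_rfl
  obtain ⟨R, hR0, hR⟩ := hsupp.exists_pos_le_norm
  obtain ⟨R', hR'0, hR'⟩ := hsupp.deriv.exists_pos_le_norm
  set M : ℝ := max 1 (max R R') with hMdef
  have hM1 : (1:ℝ) ≤ M := le_max_left _ _
  have hfM : ∀ x : ℝ, M ≤ x → f x = 0 := fun x hx =>
    hR x (le_trans (le_trans (le_max_left R R') (le_max_right _ _)) (le_trans hx (le_abs_self x)))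
  have hf'M : ∀ x : ℝ, M ≤ x → deriv f x = 0 := fun x hx =>
    hR' x (le_trans (le_trans (le_max_right R R') (le_max_right _ _)) (le_trans hx (le_abs_self x)))
  have hf'int : Integrable (deriv f) := hf'c.integrable_of_hasCompactSupport hsupp.deriv
  -- FTC
  have key1 : ∀ x : ℝ, ∫ t in Ioi x, deriv f t = - f x := by
    intro x
    have ht : Tendsto f atTop (nhds 0) := by
      refine Tendsto.congr' ?_ tendsto_const_nhds
      filter_upwards [eventually_ge_atTop M] with y hy
      exact (hfM y hy).symm
    have := integral_Ioi_of_hasDerivAt_of_tendsto' (a := x)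
      (fun y _ => ((hf.differentiable one_ne_zero) y).hasDerivAt) hf'int.integrableOn ht
    rw [this]; ring
  have habs : ∀ x : ℝ, |f x| ≤ ∫ t in Ioi x, |deriv f t| := by
    intro x
    calc |f x| = |∫ t in Ioi x, deriv f t| := by rw [key1, abs_neg]
    _ ≤ ∫ t in Ioi x, |deriv f t| := by
        simpa [Real.norm_eq_abs] using
          norm_integral_le_integral_norm (μ := volume.restrict (Ioi x)) (deriv f)
  -- the weighted gradient function
  set c : ℝ := (d - p) / p with hcdef
  have hc : 0 < c := div_pos (by linarith) hp0
  set e : ℝ := d * (p - 1) / p with hedef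
  have he0 : 0 ≤ e := by
    apply div_nonneg _ hp0.le
    nlinarith
  set g : ℝ → ℝ := fun t => |deriv f t| ^ p * t ^ e with hgdef
  have hgc : Continuous g := by
    apply Continuous.mul
    · exact (hf'c.abs).rpow_const (fun t => Or.inr hp0.le)
    · exact continuous_id.rpow_const (fun t => Or.inr he0)
  have hg0 : ∀ t : ℝ, 0 ≤ t → 0 ≤ g t := fun t ht =>
    mul_nonneg (Real.rpow_nonneg (abs_nonneg _) _) (Real.rpow_nonneg ht _)
  have hgM : ∀ t : ℝ, M ≤ t → g t = 0 := by
    intro t ht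
    simp [hgdef, hf'M t ht, Real.zero_rpow hp0.ne']
  have hgsupp : HasCompactSupport g := by
    have hss : Function.support g ⊆ Function.support (deriv f) := by
      intro t ht
      simp only [Function.mem_support, ne_eq] at ht ⊢
      intro h
      exact ht (by simp [hgdef, h, Real.zero_rpow hp0.ne'])
    exact hsupp.deriv.mono' (hss.trans subset_closure)
  have hgI : Integrable g := hgc.integrable_of_hasCompactSupport hgsupp
  set A : ℝ := ∫ t in Ioi 1, g t with hAdef
  set G : ℝ → ℝ := fun x => ∫ t in Ioi x, g t with hGdef
  set Φ : ℝ → ℝ := fun x => A - ∫ t in (1:ℝ)..x, g t with hPdef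
  have hΦd : ∀ x : ℝ, HasDerivAt Φ (-g x) x := by
    intro x
    exact (intervalIntegral.integral_hasDerivAt_right ((hgc.intervalIntegrable _ _))
      (hgc.stronglyMeasurableAtFilter _ _) hgc.continuousAt).const_sub A
  have hGΦ : ∀ x : ℝ, 1 ≤ x → G x = Φ x := by
    intro x hx
    have h1 := ioi_split (g := g) hx hgI.integrableOn
    have h2 : ∫ t in Ioc 1 x, g t = ∫ t in (1:ℝ)..x, g t :=
      (intervalIntegral.integral_of_le hx).symm
    simp only [hGdef, hPdef, ← hAdef]
    rw [← h2]
    linarith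
  have hGz : ∀ x : ℝ, M ≤ x → G x = 0 := by
    intro x hx
    simp only [hGdef]
    rw [setIntegral_congr_fun measurableSet_Ioi (g := fun _ => (0:ℝ))
      (fun t ht => hgM t (le_trans hx ht.le))]
    simp
  have hG0 : ∀ x : ℝ, 0 ≤ x → 0 ≤ G x := by
    intro x hx
    exact setIntegral_nonneg measurableSet_Ioi (fun t ht => hg0 t (le_trans hx ht.le))
  -- Key pointwise bound
  have hkey : ∀ x : ℝ, 1 ≤ x → |f x| ^ p ≤ c ^ (1 - p) * (x ^ (-(c * (p - 1))) * G x) := by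
    intro x hx
    have hx0 : (0:ℝ) < x := lt_of_lt_of_le one_pos hx
    rcases eq_or_lt_of_le hp1 with hp | hp
    · -- p = 1
      have hge : ∀ t : ℝ, g t = |deriv f t| := by
        intro t
        simp [hgdef, hedef, ← hp]
      have : G x = ∫ t in Ioi x, |deriv f t| := by
        simp only [hGdef]
        exact setIntegral_congr_fun measurableSet_Ioi (fun t _ => hge t)
      rw [← hp]
      simpa [Real.rpow_one, Real.rpow_zero, this] using habs x
    · -- 1 < p
      set q : ℝ := p / (p - 1) with hqdef
      have hpq : p.HolderConjugate q := .conjExponent hp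
      have hp1' : (0:ℝ) < p - 1 := by linarith
      set β : ℝ := e / p with hbdef
      have hb0 : 0 ≤ β := div_nonneg he0 hp0.le
      have hbq : β * q = d / p := by
        rw [hbdef, hedef, hqdef]
        field_simp
      have hbp : β * p = e := by rw [hbdef]; field_simp
      have hdp1 : 1 < d / p := (one_lt_div hp0).2 hpd
      set F : ℝ → ℝ := fun t => |deriv f t| * t ^ β with hFdef
      set H : ℝ → ℝ := fun t => t ^ (-β) with hHdef
      have hFc : Continuous F := (hf'c.abs).mul (continuous_id.rpow_const fun _ => Or.inr hb0)
      have hFsupp : HasCompactSupport F := by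
        have hss : Function.support F ⊆ Function.support (deriv f) := by
          intro t ht
          simp only [Function.mem_support, ne_eq] at ht ⊢
          intro h
          exact ht (by simp [hFdef, h])
        exact hsupp.deriv.mono' (hss.trans subset_closure)
      have hFmem : MemLp F (ENNReal.ofReal p) (volume.restrict (Ioi x)) :=
        (hFc.memLp_of_hasCompactSupport hFsupp).restrict _
      have hHmem : MemLp H (ENNReal.ofReal q) (volume.restrict (Ioi x)) := by
        have hq0 : ENNReal.ofReal q ≠ 0 := by
          simp only [ne_eq, ENNReal.ofReal_eq_zero, not_le]
          exact hpq.symm.pos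
        have hqt : ENNReal.ofReal q ≠ ⊤ := ENNReal.ofReal_ne_top
        have hmeas : AEStronglyMeasurable H (volume.restrict (Ioi x)) := by
          refine ContinuousOn.aestronglyMeasurable (fun t ht => ?_) measurableSet_Ioi
          exact (Real.continuousAt_rpow_const t _ (Or.inl (lt_trans hx0 ht).ne')).continuousWithinAt
        rw [← memLp_norm_rpow_iff hmeas hq0 hqt, ENNReal.div_self hq0 hqt,
          memLp_one_iff_integrable, ENNReal.toReal_ofReal hpq.symm.pos.le]
        refine (integrableOn_Ioi_rpow_of_lt (show -(β * q) < -1 by rw [hbq]; linarith) hx0).congr_fun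
          (fun t ht => ?_) measurableSet_Ioi
        have ht0 : 0 < t := lt_trans hx0 ht
        rw [hHdef, Real.norm_eq_abs, abs_of_nonneg (Real.rpow_nonneg ht0.le _),
          show -(β * q) = -β * q by ring]
        exact Real.rpow_mul ht0.le _ _
      have hFnn : 0 ≤ᶠ[ae (volume.restrict (Ioi x))] F := by
        filter_upwards [ae_restrict_mem measurableSet_Ioi] with t ht
        exact mul_nonneg (abs_nonneg _) (Real.rpow_nonneg (lt_trans hx0 ht).le _)
      have hHnn : 0 ≤ᶠ[ae (volume.restrict (Ioi x))] H := by
        filter_upwards [ae_restrict_mem measurableSet_Ioi] with t ht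
        exact Real.rpow_nonneg (lt_trans hx0 ht).le _
      have hold := integral_mul_le_Lp_mul_Lq_of_nonneg hpq hFnn hHnn hFmem hHmem
      have eq1 : ∫ t in Ioi x, F t * H t = ∫ t in Ioi x, |deriv f t| := by
        refine setIntegral_congr_fun measurableSet_Ioi (fun t ht => ?_)
        have ht0 : 0 < t := lt_trans hx0 ht
        rw [hFdef, hHdef, mul_assoc, ← Real.rpow_add ht0]
        simp
      have eq2 : ∫ t in Ioi x, F t ^ p = G x := by
        refine setIntegral_congr_fun measurableSet_Ioi (fun t ht => ?_)
        have ht0 : 0 < t := lt_trans hx0 ht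
        rw [hFdef, hgdef, Real.mul_rpow (abs_nonneg _) (Real.rpow_nonneg ht0.le _),
          ← Real.rpow_mul ht0.le, hbp]
      have eq3 : ∫ t in Ioi x, H t ^ q = x ^ (-c) / c := by
        have h1 : ∫ t in Ioi x, H t ^ q = ∫ t in Ioi x, t ^ (-(β * q)) := by
          refine setIntegral_congr_fun measurableSet_Ioi (fun t ht => ?_)
          have ht0 : 0 < t := lt_trans hx0 ht
          rw [hHdef, show -(β * q) = -β * q by ring, Real.rpow_mul ht0.le]
        rw [h1, integral_Ioi_rpow_of_lt (show -(β * q) < -1 by rw [hbq]; linarith) hx0]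
        rw [hbq]
        have hcc : -(d / p) + 1 = -c := by rw [hcdef, sub_div, div_self hp0.ne']; ring
        rw [hcc, neg_div_neg_eq]
      have hGx : 0 ≤ G x := hG0 x hx0.le
      have hBnn : 0 ≤ x ^ (-c) / c := div_nonneg (Real.rpow_nonneg hx0.le _) hc.le
      have step : |f x| ≤ G x ^ (1 / p) * (x ^ (-c) / c) ^ (1 / q) := by
        calc |f x| ≤ ∫ t in Ioi x, |deriv f t| := habs x
        _ = ∫ t in Ioi x, F t * H t := eq1.symm
        _ ≤ (∫ t in Ioi x, F t ^ p) ^ (1 / p) * (∫ t in Ioi x, H t ^ q) ^ (1 / q) := hold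
        _ = G x ^ (1 / p) * (x ^ (-c) / c) ^ (1 / q) := by rw [eq2, eq3]
      calc |f x| ^ p ≤ (G x ^ (1 / p) * (x ^ (-c) / c) ^ (1 / q)) ^ p :=
          Real.rpow_le_rpow (abs_nonneg _) step hp0.le
      _ = G x * (x ^ (-c) / c) ^ (p - 1) := by
          rw [Real.mul_rpow (Real.rpow_nonneg hGx _) (Real.rpow_nonneg hBnn _),
            ← Real.rpow_mul hGx, one_div_mul_cancel hp0.ne', Real.rpow_one,
            ← Real.rpow_mul hBnn, show 1 / q * p = p - 1 by rw [hqdef, one_div_div, div_mul_cancel₀ _ hp0.ne']]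
      _ = c ^ (1 - p) * (x ^ (-(c * (p - 1))) * G x) := by
          rw [Real.div_rpow (Real.rpow_nonneg hx0.le _) hc.le, ← Real.rpow_mul hx0.le,
            show -c * (p - 1) = -(c * (p - 1)) by ring,
            show (1:ℝ) - p = -(p - 1) by ring, Real.rpow_neg hc.le]
          ring
  -- continuity/positivity facts
  have hΦc : Continuous Φ := continuous_iff_continuousAt.2 fun x => (hΦd x).continuousAt
  have hΦz : ∀ x : ℝ, M ≤ x → Φ x = 0 := fun x hx => by
    rw [← hGΦ x (le_trans hM1 hx)]; exact hGz x hx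
  have hΦ1 : Φ 1 = A := by simp [hPdef]
  have hA0 : (0:ℝ) ≤ A := hG0 1 zero_le_one
  have hcont_pow : ∀ r : ℝ, ContinuousOn (fun x : ℝ => x ^ r) (Icc 1 M) := by
    intro r x hx
    exact (Real.continuousAt_rpow_const x r
      (Or.inl (lt_of_lt_of_le one_pos hx.1).ne')).continuousWithinAt
  set W : ℝ → ℝ := fun x => c ^ (1 - p) * (x ^ (c - 1) * Φ x) with hWdef
  have hWz : ∀ x : ℝ, M ≤ x → W x = 0 := by
    intro x hx; simp [hWdef, hΦz x hx]
  have hWcont : ContinuousOn W (Icc 1 M) :=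
    continuousOn_const.mul ((hcont_pow (c - 1)).mul hΦc.continuousOn)
  obtain ⟨hWI, hWeq⟩ := ioi_eq_of_zero hM1 hWz (hWcont.integrableOn_Icc.mono_set Ioc_subset_Icc_self)
  -- Step A
  have stepA : ∫ x in Ioi 1, |f x / x| ^ p * x ^ (d - 1) ≤ ∫ x in Ioi 1, W x := by
    refine integral_mono_of_nonneg ?_ hWI ?_
    · filter_upwards [ae_restrict_mem measurableSet_Ioi] with x hx
      have hx0 : (0:ℝ) < x := lt_trans one_pos hx
      exact mul_nonneg (Real.rpow_nonneg (abs_nonneg _) _) (Real.rpow_nonneg hx0.le _)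
    · filter_upwards [ae_restrict_mem measurableSet_Ioi] with x hx
      have hx1 : (1:ℝ) ≤ x := hx.le
      have hx0 : (0:ℝ) < x := lt_of_lt_of_le one_pos hx1
      have h1 : |f x / x| ^ p * x ^ (d - 1) = |f x| ^ p * x ^ (d - 1 - p) := by
        rw [abs_div, abs_of_pos hx0, Real.div_rpow (abs_nonneg _) hx0.le,
          div_mul_eq_mul_div, mul_div_assoc, ← Real.rpow_sub hx0]
      have h2 : x ^ (-(c * (p - 1))) * x ^ (d - 1 - p) = x ^ (c - 1) := by
        rw [← Real.rpow_add hx0]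
        congr 1
        rw [hcdef]
        field_simp
        ring
      calc |f x / x| ^ p * x ^ (d - 1) = |f x| ^ p * x ^ (d - 1 - p) := h1
      _ ≤ c ^ (1 - p) * (x ^ (-(c * (p - 1))) * G x) * x ^ (d - 1 - p) :=
          mul_le_mul_of_nonneg_right (hkey x hx1) (Real.rpow_nonneg hx0.le _)
      _ = c ^ (1 - p) * ((x ^ (-(c * (p - 1))) * x ^ (d - 1 - p)) * Φ x) := by
          rw [hGΦ x hx1]; ring
      _ = W x := by rw [h2]
  -- Step B : integration by parts
  have hI1 : IntervalIntegrable (fun x => x ^ (c - 1) * Φ x) volume 1 M := by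
    apply ContinuousOn.intervalIntegrable
    rw [uIcc_of_le hM1]
    exact (hcont_pow (c - 1)).mul hΦc.continuousOn
  have hI2 : IntervalIntegrable (fun x => x ^ c * g x / c) volume 1 M := by
    apply ContinuousOn.intervalIntegrable
    rw [uIcc_of_le hM1]
    exact (((hcont_pow c).mul hgc.continuousOn).div_const c)
  have ftc : ∫ x in (1:ℝ)..M, (x ^ (c - 1) * Φ x - x ^ c * g x / c)
      = M ^ c / c * Φ M - 1 ^ c / c * Φ 1 := by
    have := intervalIntegral.integral_eq_sub_of_hasDerivAt
      (f := fun y : ℝ => y ^ c / c * Φ y)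
      (f' := fun x : ℝ => x ^ (c - 1) * Φ x - x ^ c * g x / c) ?_ (hI1.sub hI2)
    · exact this
    · intro x hx
      rw [uIcc_of_le hM1] at hx
      have hx0 : (0:ℝ) < x := lt_of_lt_of_le one_pos hx.1
      have h1 : HasDerivAt (fun y : ℝ => y ^ c / c) (x ^ (c - 1)) x := by
        have := (Real.hasDerivAt_rpow_const (x := x) (p := c) (Or.inl hx0.ne')).div_const c
        exact this.congr_deriv (mul_div_cancel_left₀ _ hc.ne')
      have := h1.mul (hΦd x)
      exact this.congr_deriv (by ring)
  have ibp : ∫ x in (1:ℝ)..M, x ^ (c - 1) * Φ x ≤ (∫ x in (1:ℝ)..M, x ^ c * g x) / c := by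
    have h2 : ∫ x in (1:ℝ)..M, (x ^ (c - 1) * Φ x - x ^ c * g x / c)
        = (∫ x in (1:ℝ)..M, x ^ (c - 1) * Φ x) - ∫ x in (1:ℝ)..M, x ^ c * g x / c :=
      intervalIntegral.integral_sub hI1 hI2
    have h3 : ∫ x in (1:ℝ)..M, x ^ c * g x / c = (∫ x in (1:ℝ)..M, x ^ c * g x) / c :=
      intervalIntegral.integral_div c _
    have h4 : M ^ c / c * Φ M - 1 ^ c / c * Φ 1 = -(A / c) := by
      rw [hΦz M le_rfl, hΦ1, Real.one_rpow]; ring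
    have h5 : (0:ℝ) ≤ A / c := div_nonneg hA0 hc.le
    rw [h2, h3, h4] at ftc
    linarith
  -- conversions
  have hWioc : ∫ x in Ioi 1, W x = c ^ (1 - p) * ∫ x in (1:ℝ)..M, x ^ (c - 1) * Φ x := by
    rw [hWeq, ← intervalIntegral.integral_of_le hM1]
    simp only [hWdef]
    rw [intervalIntegral.integral_const_mul]
  have hJ : ∫ t in Ioi 1, |deriv f t| ^ p * t ^ (d - 1) = ∫ x in (1:ℝ)..M, x ^ c * g x := by
    have hz : ∀ t : ℝ, M ≤ t → |deriv f t| ^ p * t ^ (d - 1) = 0 := by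
      intro t ht; simp [hf'M t ht, Real.zero_rpow hp0.ne']
    have hcont : ContinuousOn (fun t : ℝ => |deriv f t| ^ p * t ^ (d - 1)) (Icc 1 M) :=
      ((hf'c.abs.rpow_const fun _ => Or.inr hp0.le).continuousOn).mul (hcont_pow _)
    obtain ⟨_, heq⟩ := ioi_eq_of_zero hM1 hz (hcont.integrableOn_Icc.mono_set Ioc_subset_Icc_self)
    rw [heq, ← intervalIntegral.integral_of_le hM1]
    refine intervalIntegral.integral_congr (fun x hx => ?_)
    rw [uIcc_of_le hM1] at hx
    have hx0 : (0:ℝ) < x := lt_of_lt_of_le one_pos hx.1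
    simp only [hgdef]
    have hce : c + e = d - 1 := by rw [hcdef, hedef]; field_simp; ring
    rw [← mul_assoc, mul_comm (x ^ c) (|deriv f x| ^ p), mul_assoc, ← Real.rpow_add hx0, hce]
  have hconst : c ^ (1 - p) / c = (p / (d - p)) ^ p := by
    rw [div_eq_mul_inv, ← Real.rpow_neg_one c, ← Real.rpow_add hc,
      show (1 - p) + (-1) = -p by ring, Real.rpow_neg hc.le,
      show p / (d - p) = c⁻¹ by rw [hcdef, inv_div], Real.inv_rpow hc.le]
  rw [integral_Ici_eq_integral_Ioi, integral_Ici_eq_integral_Ioi]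
  calc ∫ x in Ioi 1, |f x / x| ^ p * x ^ (d - 1) ≤ ∫ x in Ioi 1, W x := stepA
  _ = c ^ (1 - p) * ∫ x in (1:ℝ)..M, x ^ (c - 1) * Φ x := hWioc
  _ ≤ c ^ (1 - p) * ((∫ x in (1:ℝ)..M, x ^ c * g x) / c) :=
      mul_le_mul_of_nonneg_left ibp (Real.rpow_nonneg hc.le _)
  _ = (p / (d - p)) ^ p * ∫ t in Ioi 1, |deriv f t| ^ p * t ^ (d - 1) := by
      rw [hJ, ← hconst]
      ring
end

section
/- Let d₁ > 1 and define β = 1 if d₁ ≤ 2 and β = d₁ − 1 if d₁ ≥ 2, and set p₀ = max(d₁, d₁/(d₁−1)). Define f(y) = y^{β−d₁} (1 + log y)^{−1} for y ≥ 1. Then f ∈ L^{p₀}([1,∞), μ_{d₁}), i.e. ∫₁^∞ f(y)^{p₀} y^{d₁−1} dy < ∞, and yet for every x ≥ 1 the integral ∫_x^∞ y^{−β} f(y) y^{d₁−1} dy diverges to +∞. Consequently the operator f ↦ x^{−α} ∫_x^∞ y^{−β} f(y) y^{d₁−1} dy (for any α > 0) is unbounded on L^{p₀}([1,∞), μ_{d₁}).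 -/
open MeasureTheory Set
open scoped ENNReal NNReal

lemma aux_hasDerivAt_loglog {y : ℝ} (hy : 1 ≤ y) :
    HasDerivAt (fun t => Real.log (1 + Real.log t))
      (y⁻¹ * (1 + Real.log y)⁻¹) y := by
  have hy0 : (0:ℝ) < y := lt_of_lt_of_le one_pos hy
  have hl : (0:ℝ) ≤ Real.log y := Real.log_nonneg hy
  have h1 : HasDerivAt (fun t : ℝ => 1 + Real.log t) y⁻¹ y :=
    (Real.hasDerivAt_log hy0.ne').const_add 1
  have h2 := h1.log (by positivity)
  simpa [div_eq_mul_inv] using h2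

lemma aux_divergence (x : ℝ) (hx : 1 ≤ x) :
    ∫⁻ y in Ici x, ENNReal.ofReal (y⁻¹ * (1 + Real.log y)⁻¹) = ⊤ := by
  apply ENNReal.eq_top_of_forall_nnreal_le
  intro r
  set R : ℝ := max x (Real.exp (Real.exp ((r : ℝ) + Real.log (1 + Real.log x)))) with hR
  have hxR : x ≤ R := le_max_left _ _
  have hcont : ContinuousOn (fun y : ℝ => y⁻¹ * (1 + Real.log y)⁻¹) (Icc x R) := by
    apply ContinuousOn.mul
    · exact ContinuousOn.inv₀ continuousOn_id fun y hy => by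
        have : (1:ℝ) ≤ y := le_trans hx hy.1
        positivity
    · apply ContinuousOn.inv₀
      · have hlog : ContinuousOn Real.log (Icc x R) :=
          Real.continuousOn_log.mono (fun y hy => by
            have hy1 : (1:ℝ) ≤ y := le_trans hx hy.1
            simpa using (lt_of_lt_of_le one_pos hy1).ne')
        exact continuousOn_const.add hlog
      · intro y hy
        have h1y : (1:ℝ) ≤ y := le_trans hx hy.1
        have := Real.log_nonneg h1y
        positivity
  have hint : IntegrableOn (fun y : ℝ => y⁻¹ * (1 + Real.log y)⁻¹) (Ioc x R) :=
    (hcont.integrableOn_Icc).mono_set Ioc_subset_Icc_self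
  have hftc : ∫ y in x..R, y⁻¹ * (1 + Real.log y)⁻¹
      = Real.log (1 + Real.log R) - Real.log (1 + Real.log x) := by
    refine intervalIntegral.integral_eq_sub_of_hasDerivAt (f := fun t => Real.log (1 + Real.log t)) (fun y hy => ?_) ?_
    · rw [uIcc_of_le hxR] at hy
      exact aux_hasDerivAt_loglog (le_trans hx hy.1)
    · rw [intervalIntegrable_iff_integrableOn_Ioc_of_le hxR]; exact hint
  have hval : (r : ℝ) ≤ ∫ y in Ioc x R, y⁻¹ * (1 + Real.log y)⁻¹ := by
    rw [← intervalIntegral.integral_of_le hxR, hftc]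
    have h1x : (0:ℝ) < 1 + Real.log x := by have := Real.log_nonneg hx; positivity
    have hRe : Real.exp ((r : ℝ) + Real.log (1 + Real.log x)) ≤ 1 + Real.log R := by
      have : Real.exp (Real.exp ((r : ℝ) + Real.log (1 + Real.log x))) ≤ R := le_max_right _ _
      have hlog := Real.log_le_log (Real.exp_pos _) this
      rw [Real.log_exp] at hlog
      linarith
    have := Real.log_le_log (Real.exp_pos _) hRe
    rw [Real.log_exp] at this
    linarith [this]
  calc (r : ℝ≥0∞) = ENNReal.ofReal (r : ℝ) := by simp
    _ ≤ ENNReal.ofReal (∫ y in Ioc x R, y⁻¹ * (1 + Real.log y)⁻¹) :=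
        ENNReal.ofReal_le_ofReal hval
    _ = ∫⁻ y in Ioc x R, ENNReal.ofReal (y⁻¹ * (1 + Real.log y)⁻¹) := by
        refine ofReal_integral_eq_lintegral_ofReal hint ?_
        filter_upwards [ae_restrict_mem measurableSet_Ioc] with y hy
        have h1y : (1:ℝ) ≤ y := le_trans hx hy.1.le
        have := Real.log_nonneg h1y
        positivity
    _ ≤ ∫⁻ y in Ici x, ENNReal.ofReal (y⁻¹ * (1 + Real.log y)⁻¹) :=
        lintegral_mono_set (Set.Ioc_subset_Ioi_self.trans Set.Ioi_subset_Ici_self)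

lemma aux_integrableOn {p : ℝ} (hp : 1 < p) :
    IntegrableOn (fun y : ℝ => y⁻¹ * (1 + Real.log y) ^ (-p)) (Ioi 1) := by
  have key : ∀ y ∈ Ici (1:ℝ), HasDerivAt
      (fun t : ℝ => (1 - p)⁻¹ * (1 + Real.log t) ^ (1 - p))
      (y⁻¹ * (1 + Real.log y) ^ (-p)) y := by
    intro y hy
    have hy0 : (0:ℝ) < y := lt_of_lt_of_le one_pos hy
    have hl : (0:ℝ) ≤ Real.log y := Real.log_nonneg hy
    have h1 : HasDerivAt (fun t : ℝ => 1 + Real.log t) y⁻¹ y :=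
      (Real.hasDerivAt_log hy0.ne').const_add 1
    have h2 := (h1.rpow_const (p := 1 - p) (Or.inl (by positivity))).const_mul ((1:ℝ) - p)⁻¹
    have hne : (1:ℝ) - p ≠ 0 := by linarith
    have : (1 - p)⁻¹ * (y⁻¹ * (1 - p) * (1 + Real.log y) ^ (1 - p - 1))
        = y⁻¹ * (1 + Real.log y) ^ (-p) := by
      rw [show (1:ℝ) - p - 1 = -p by ring]
      field_simp
    rwa [this] at h2
  have g'pos : ∀ y ∈ Ioi (1:ℝ), 0 ≤ y⁻¹ * (1 + Real.log y) ^ (-p) := by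
    intro y hy
    have hy1 : (1:ℝ) ≤ y := le_of_lt hy
    have hy0 : (0:ℝ) < y := lt_of_lt_of_le one_pos hy1
    have hl : (0:ℝ) ≤ Real.log y := Real.log_nonneg hy1
    positivity
  have hg : Filter.Tendsto (fun t : ℝ => (1 - p)⁻¹ * (1 + Real.log t) ^ (1 - p))
      Filter.atTop (nhds ((1 - p)⁻¹ * 0)) := by
    have h1 : Filter.Tendsto (fun t : ℝ => 1 + Real.log t) Filter.atTop Filter.atTop :=
      Filter.tendsto_atTop_add_const_left _ 1 Real.tendsto_log_atTop
    have h2 : Filter.Tendsto (fun t : ℝ => (1 + Real.log t) ^ (1 - p))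
        Filter.atTop (nhds 0) := by
      have := (tendsto_rpow_neg_atTop (by linarith : (0:ℝ) < p - 1)).comp h1
      simpa [Function.comp_def, show -(p-1) = 1 - p by ring] using this
    exact h2.const_mul _
  exact integrableOn_Ioi_deriv_of_nonneg' key g'pos hg

/-- With `β = 1` for `d₁ ≤ 2` and `β = d₁ - 1` for `d₁ ≥ 2`, and `p₀ = max(d₁, d₁')`,
the function `f(y) = y^{β-d₁}(1 + log y)^{-1}` belongs to `L^{p₀}([1,∞), μ_{d₁})`, yet
`∫_x^∞ y^{-β} f(y) y^{d₁-1} dy = +∞` for every `x ≥ 1`.  Consequently, the operator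
`f ↦ x^{-α} ∫_x^∞ y^{-β} f(y) y^{d₁-1} dy` is unbounded on `L^{p₀}([1,∞), μ_{d₁})`
for every `α > 0`. -/
theorem riesz_transform_endpoint_unbounded
    (d₁ β p₀ : ℝ) (hd₁ : 1 < d₁)
    (hβ : β = if d₁ ≤ 2 then 1 else d₁ - 1)
    (hp₀ : p₀ = max d₁ (d₁ / (d₁ - 1))) :
    MemLp (fun y => y ^ (β - d₁) * (1 + Real.log y)⁻¹) (ENNReal.ofReal p₀) (mu d₁) ∧
    (∀ x ≥ (1 : ℝ), ∫⁻ y in Ici x,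
        ENNReal.ofReal (y ^ (-β) * (y ^ (β - d₁) * (1 + Real.log y)⁻¹) * y ^ (d₁ - 1)) = ⊤) ∧
    (∀ α > (0 : ℝ), ¬ ∃ C : ENNReal, C < ⊤ ∧
      ∀ g : ℝ → ℝ, (∀ y, 0 ≤ g y) → MemLp g (ENNReal.ofReal p₀) (mu d₁) →
        (∫⁻ x, (ENNReal.ofReal (x ^ (-α)) *
            ∫⁻ y in Ici x, ENNReal.ofReal (y ^ (-β) * g y * y ^ (d₁ - 1))) ^ p₀
          ∂(mu d₁)) ^ (1 / p₀) ≤ C * eLpNorm g (ENNReal.ofReal p₀) (mu d₁)) := by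
  have hd0 : (0:ℝ) < d₁ - 1 := by linarith
  have hp1 : 1 < p₀ := hp₀ ▸ lt_of_lt_of_le hd₁ (le_max_left _ _)
  have hp0pos : (0:ℝ) < p₀ := lt_trans one_pos hp1
  have hkey : p₀ * (d₁ - β) = d₁ := by
    rcases le_or_gt d₁ 2 with h | h
    · rw [hβ, if_pos h, hp₀, max_eq_right (by rw [le_div_iff₀ hd0]; nlinarith)]
      field_simp
    · rw [hβ, if_neg (not_le.mpr h), hp₀,
        max_eq_left (by rw [div_le_iff₀ hd0]; nlinarith)]
      ring
  set f : ℝ → ℝ := fun y => y ^ (β - d₁) * (1 + Real.log y)⁻¹ with hfdef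
  -- continuity of f on [1, ∞)
  have hfcont : ContinuousOn f (Ici (1:ℝ)) := by
    apply ContinuousOn.mul
    · intro y hy
      have hy0 : (0:ℝ) < y := lt_of_lt_of_le one_pos hy
      exact (Real.continuousAt_rpow_const y _ (Or.inl hy0.ne')).continuousWithinAt
    · apply ContinuousOn.inv₀
      · refine continuousOn_const.add (Real.continuousOn_log.mono fun y hy => ?_)
        simpa using (lt_of_lt_of_le one_pos hy).ne'
      · intro y hy
        have := Real.log_nonneg hy
        positivity
  -- a.e. strong measurability for mu
  have hsm : AEStronglyMeasurable f (mu d₁) :=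
    (hfcont.aestronglyMeasurable measurableSet_Ici).mono_ac
      (withDensity_absolutelyContinuous _ _)
  have hdens : Measurable fun r : ℝ => ENNReal.ofReal (r ^ (d₁ - 1)) :=
    (Real.continuous_rpow_const (by linarith)).measurable.ennreal_ofReal
  have hlint : ∫⁻ y, ((‖f y‖₊ : ℝ≥0∞)) ^ p₀ ∂(mu d₁) < ⊤ := by
    rw [mu, lintegral_withDensity_eq_lintegral_mul_non_measurable _ hdens
        (ae_of_all _ fun x => ENNReal.ofReal_lt_top)]
    have heq : ∀ y ∈ Ici (1:ℝ),
        ((fun r : ℝ => ENNReal.ofReal (r ^ (d₁ - 1))) * fun y => (‖f y‖₊ : ℝ≥0∞) ^ p₀) y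
          = ENNReal.ofReal (y⁻¹ * (1 + Real.log y) ^ (-p₀)) := by
      intro y hy
      have hy0 : (0:ℝ) < y := lt_of_lt_of_le one_pos hy
      have hl : (0:ℝ) ≤ Real.log y := Real.log_nonneg hy
      have h1l : (0:ℝ) < 1 + Real.log y := by positivity
      have hf0 : 0 ≤ f y := by
        simp only [hfdef]
        have h1 : (0:ℝ) ≤ y ^ (β - d₁) := Real.rpow_nonneg hy0.le _
        have h2 : (0:ℝ) ≤ (1 + Real.log y)⁻¹ := by positivity
        exact mul_nonneg h1 h2
      simp only [Pi.mul_apply]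
      rw [← enorm_eq_nnnorm, ← ofReal_norm, Real.norm_of_nonneg hf0,
        ENNReal.ofReal_rpow_of_nonneg hf0 hp0pos.le,
        ← ENNReal.ofReal_mul (Real.rpow_nonneg hy0.le _)]
      congr 1
      simp only [hfdef]
      rw [Real.mul_rpow (Real.rpow_nonneg hy0.le _) (inv_nonneg.mpr h1l.le),
        ← Real.rpow_mul hy0.le, Real.inv_rpow h1l.le, ← Real.rpow_neg h1l.le,
        ← mul_assoc, ← Real.rpow_add hy0,
        show d₁ - 1 + (β - d₁) * p₀ = -1 by linear_combination -hkey,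
        Real.rpow_neg_one]
    rw [setLIntegral_congr_fun measurableSet_Ici heq]
    have hfin := (aux_integrableOn hp1).2
    calc ∫⁻ y in Ici (1:ℝ), ENNReal.ofReal (y⁻¹ * (1 + Real.log y) ^ (-p₀))
        ≤ ∫⁻ y in Ici (1:ℝ), (‖y⁻¹ * (1 + Real.log y) ^ (-p₀)‖₊ : ℝ≥0∞) := by
          refine lintegral_mono fun y => ?_
          rw [← enorm_eq_nnnorm, Real.enorm_eq_ofReal_abs]
          exact ENNReal.ofReal_le_ofReal (le_abs_self _)
      _ < ⊤ := by
          rw [← restrict_Ioi_eq_restrict_Ici]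
          exact hfin
  have hmem : MemLp f (ENNReal.ofReal p₀) (mu d₁) := by
    refine ⟨hsm, ?_⟩
    rw [eLpNorm_eq_lintegral_rpow_enorm_toReal (by simp [ENNReal.ofReal_eq_zero]; linarith)
        ENNReal.ofReal_ne_top, ENNReal.toReal_ofReal hp0pos.le]
    exact ENNReal.rpow_lt_top_of_nonneg (by positivity) hlint.ne
  have part2 : ∀ x ≥ (1:ℝ), ∫⁻ y in Ici x,
      ENNReal.ofReal (y ^ (-β) * (y ^ (β - d₁) * (1 + Real.log y)⁻¹) * y ^ (d₁ - 1)) = ⊤ := by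
    intro x hx
    have heq : ∀ y ∈ Ici x,
        ENNReal.ofReal (y ^ (-β) * (y ^ (β - d₁) * (1 + Real.log y)⁻¹) * y ^ (d₁ - 1))
          = ENNReal.ofReal (y⁻¹ * (1 + Real.log y)⁻¹) := by
      intro y hy
      have hy1 : (1:ℝ) ≤ y := le_trans hx hy
      have hy0 : (0:ℝ) < y := lt_of_lt_of_le one_pos hy1
      congr 1
      rw [show y ^ (-β) * (y ^ (β - d₁) * (1 + Real.log y)⁻¹) * y ^ (d₁ - 1)
          = y ^ (-β) * y ^ (β - d₁) * y ^ (d₁ - 1) * (1 + Real.log y)⁻¹ from by ring,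
        ← Real.rpow_add hy0, ← Real.rpow_add hy0,
        show -β + (β - d₁) + (d₁ - 1) = -1 from by ring, Real.rpow_neg_one]
    rw [setLIntegral_congr_fun measurableSet_Ici heq]
    exact aux_divergence x hx
  refine ⟨hmem, part2, ?_⟩
  rintro α hα ⟨C, hC, hbound⟩
  set g : ℝ → ℝ := fun y => if 1 ≤ y then f y else 0 with hgdef
  have hg0 : ∀ y, 0 ≤ g y := by
    intro y
    simp only [hgdef]
    split
    · next h =>
        have hy0 : (0:ℝ) < y := lt_of_lt_of_le one_pos h
        have hl : (0:ℝ) ≤ Real.log y := Real.log_nonneg h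
        simp only [hfdef]
        have h1 : (0:ℝ) ≤ y ^ (β - d₁) := Real.rpow_nonneg hy0.le _
        have h2 : (0:ℝ) ≤ (1 + Real.log y)⁻¹ := by positivity
        exact mul_nonneg h1 h2
    · exact le_refl 0
  have hIio : mu d₁ (Iio 1) = 0 := by
    rw [mu, withDensity_apply _ measurableSet_Iio,
      Measure.restrict_restrict measurableSet_Iio,
      show Iio (1:ℝ) ∩ Ici 1 = ∅ from by
        ext y; simp only [mem_inter_iff, mem_Iio, mem_Ici, mem_empty_iff_false, iff_false]
        rintro ⟨h1, h2⟩; linarith,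
      Measure.restrict_empty, lintegral_zero_measure]
  have hae : f =ᵐ[mu d₁] g := by
    rw [Filter.EventuallyEq, ae_iff]
    refine measure_mono_null (fun y hy => ?_) hIio
    simp only [mem_setOf_eq] at hy
    simp only [mem_Iio]
    by_contra h
    push_neg at h
    exact hy (by simp [hgdef, h])
  have hmemg : MemLp g (ENNReal.ofReal p₀) (mu d₁) := hmem.ae_eq hae
  have hinner : ∀ x ≥ (1:ℝ), ∫⁻ y in Ici x,
      ENNReal.ofReal (y ^ (-β) * g y * y ^ (d₁ - 1)) = ⊤ := by
    intro x hx
    have heqg : ∀ y ∈ Ici x, ENNReal.ofReal (y ^ (-β) * g y * y ^ (d₁ - 1))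
        = ENNReal.ofReal (y ^ (-β) * (y ^ (β - d₁) * (1 + Real.log y)⁻¹) * y ^ (d₁ - 1)) := by
      intro y hy
      have h1y : (1:ℝ) ≤ y := le_trans hx hy
      simp [hgdef, h1y, hfdef]
    rw [setLIntegral_congr_fun measurableSet_Ici heqg]
    exact part2 x hx
  have hLHS : (∫⁻ x, (ENNReal.ofReal (x ^ (-α)) *
      ∫⁻ y in Ici x, ENNReal.ofReal (y ^ (-β) * g y * y ^ (d₁ - 1))) ^ p₀ ∂(mu d₁)) = ⊤ := by
    have hae2 : ∀ᵐ x ∂(mu d₁), (ENNReal.ofReal (x ^ (-α)) *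
        ∫⁻ y in Ici x, ENNReal.ofReal (y ^ (-β) * g y * y ^ (d₁ - 1))) ^ p₀ = (⊤:ℝ≥0∞) := by
      rw [ae_iff]
      refine measure_mono_null (fun x hx => ?_) hIio
      simp only [mem_setOf_eq] at hx
      simp only [mem_Iio]
      by_contra h
      push_neg at h
      apply hx
      have hx0 : (0:ℝ) < x := lt_of_lt_of_le one_pos h
      have hne : ENNReal.ofReal (x ^ (-α)) ≠ 0 := by
        simp only [ne_eq, ENNReal.ofReal_eq_zero, not_le]
        exact Real.rpow_pos_of_pos hx0 _
      rw [hinner x h, ENNReal.mul_top hne, ENNReal.top_rpow_of_pos hp0pos]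
    rw [lintegral_congr_ae hae2, lintegral_const]
    have huniv : mu d₁ univ = ⊤ := by
      rw [mu, withDensity_apply _ MeasurableSet.univ, Measure.restrict_univ]
      refine top_le_iff.mp ?_
      have hge : ∀ᵐ y ∂(volume.restrict (Ici (1:ℝ))),
          (1:ℝ≥0∞) ≤ ENNReal.ofReal (y ^ (d₁ - 1)) := by
        filter_upwards [ae_restrict_mem measurableSet_Ici] with y hy
        rw [show (1:ℝ≥0∞) = ENNReal.ofReal 1 from by simp]
        exact ENNReal.ofReal_le_ofReal (Real.one_le_rpow hy (by linarith))
      calc (⊤:ℝ≥0∞) = ∫⁻ _ in Ici (1:ℝ), (1:ℝ≥0∞) := by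
            simp [Real.volume_Ici]
        _ ≤ _ := lintegral_mono_ae hge
    rw [huniv]
    simp
  have hle := hbound g hg0 hmemg
  rw [hLHS, ENNReal.top_rpow_of_pos (by positivity : (0:ℝ) < 1 / p₀)] at hle
  exact (ENNReal.mul_lt_top hC hmemg.2).ne (top_le_iff.mp hle)
end

section
/- Let 1 < d₁ < 2 < d₂. Consider the integral operator T f(x) = ∫₁^∞ K(x,y) f(y) y^{d₂−1} dy with kernel K(x,y) = x^{1−d₂} y^{d₁−d₂−1} for 1 ≤ x ≤ y and K(x,y) = x^{d₁−d₂−2} y^{2−d₂} for x > y ≥ 1. Then for every p with 1 < p < d₂/(d₁−1) there exists a constant C > 0 such that ‖Tf‖_{L^p([1,∞), μ_{d₂})} ≤ C ‖f‖_{L^p([1,∞), μ_{d₂})} for all f ∈ L^p([1,∞), μ_{d₂}). -/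
open MeasureTheory Set

open scoped ENNReal

lemma lint_Ioi_rpow {c a : ℝ} (hc : 0 < c) (ha : a < -1) :
    ∫⁻ y in Ioi c, ENNReal.ofReal (y ^ a) = ENNReal.ofReal (c ^ (a + 1) / (-(a + 1))) := by
  rw [← ofReal_integral_eq_lintegral_ofReal (integrableOn_Ioi_rpow_of_lt ha hc)
      ((ae_restrict_iff' measurableSet_Ioi).2 (Filter.Eventually.of_forall fun y hy =>
        Real.rpow_nonneg (hc.trans hy).le _)),
    integral_Ioi_rpow_of_lt ha hc]
  congr 1
  rw [div_neg, neg_div]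

lemma lint_far {c a : ℝ} (hc : 0 < c) (ha : a < -1) {S : Set ℝ} (hS : S ⊆ Ici c) :
    ∫⁻ y in S, ENNReal.ofReal (y ^ a) ≤ ENNReal.ofReal (c ^ (a + 1) / (-(a + 1))) := by
  calc ∫⁻ y in S, ENNReal.ofReal (y ^ a) ≤ ∫⁻ y in Ici c, ENNReal.ofReal (y ^ a) :=
        lintegral_mono_set hS
    _ = ∫⁻ y in Ioi c, ENNReal.ofReal (y ^ a) := (setLIntegral_congr (Ioi_ae_eq_Ici)).symm
    _ = _ := lint_Ioi_rpow hc ha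

lemma lint_near {x e : ℝ} (hx : 0 ≤ x) (he : -1 < e) {S : Set ℝ} (hS : S ⊆ Ioc 0 x) :
    ∫⁻ y in S, ENNReal.ofReal (y ^ e) ≤ ENNReal.ofReal (x ^ (e + 1) / (e + 1)) := by
  have hint : IntegrableOn (fun y : ℝ => y ^ e) (Ioc 0 x) := by
    have := (intervalIntegral.intervalIntegrable_rpow' he (a := 0) (b := x))
    rwa [intervalIntegrable_iff_integrableOn_Ioc_of_le hx] at this
  calc ∫⁻ y in S, ENNReal.ofReal (y ^ e) ≤ ∫⁻ y in Ioc 0 x, ENNReal.ofReal (y ^ e) :=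
        lintegral_mono_set hS
    _ = ENNReal.ofReal (∫ y in Ioc 0 x, y ^ e) :=
        (ofReal_integral_eq_lintegral_ofReal hint
          ((ae_restrict_iff' measurableSet_Ioc).2 (Filter.Eventually.of_forall fun y hy =>
            Real.rpow_nonneg hy.1.le _))).symm
    _ = ENNReal.ofReal (x ^ (e + 1) / (e + 1)) := by
        rw [← intervalIntegral.integral_of_le hx, integral_rpow (Or.inl he)]
        congr 1
        rw [Real.zero_rpow (by linarith : e + 1 ≠ 0)]
        ring


lemma schur_test {α : Type*} [MeasurableSpace α] (μ : Measure α) [SFinite μ]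
    (K : α → α → ℝ≥0∞) (hK : Measurable (Function.uncurry K))
    (w : α → ℝ≥0∞) (hw : Measurable w) (hw0 : ∀ x, w x ≠ 0) (hwt : ∀ x, w x ≠ ⊤)
    {p q : ℝ} (hpq : p.HolderConjugate q) (A B : ℝ≥0∞)
    (h1 : ∀ᵐ x ∂μ, ∫⁻ y, K x y * (w y) ^ q ∂μ ≤ A * (w x) ^ q)
    (h2 : ∀ᵐ y ∂μ, ∫⁻ x, K x y * (w x) ^ p ∂μ ≤ B * (w y) ^ p)
    (F : α → ℝ≥0∞) (hF : Measurable F) :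
    ∫⁻ x, (∫⁻ y, K x y * F y ∂μ) ^ p ∂μ ≤ A ^ (p/q) * B * ∫⁻ y, (F y) ^ p ∂μ := by
  have hp0 : (0:ℝ) < p := hpq.pos
  have hq0 : (0:ℝ) < q := hpq.symm.pos
  have hKx : ∀ x, Measurable (K x) := fun x => hK.comp (measurable_prodMk_left)
  have hKy : ∀ y, Measurable (fun x => K x y) := fun y => hK.comp (measurable_prodMk_right)
  have hwinf : ∀ x, (w x) ^ p ≠ ⊤ := fun x => ENNReal.rpow_ne_top_of_nonneg hp0.le (hwt x)
  have hone : ∀ y, ((w y)⁻¹) ^ p * (w y) ^ p = 1 := by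
    intro y
    rw [← ENNReal.mul_rpow_of_nonneg _ _ hp0.le, ENNReal.inv_mul_cancel (hw0 y) (hwt y),
      ENNReal.one_rpow]
  -- pointwise Hölder bound
  have key : ∀ᵐ x ∂μ, (∫⁻ y, K x y * F y ∂μ) ^ p ≤
      A ^ (p/q) * ((w x) ^ p * ∫⁻ y, K x y * (F y) ^ p * ((w y)⁻¹) ^ p ∂μ) := by
    filter_upwards [h1] with x hx
    have hold := ENNReal.lintegral_mul_le_Lp_mul_Lq μ hpq
      (f := fun y => K x y ^ (1/p) * F y * (w y)⁻¹)
      (g := fun y => K x y ^ (1/q) * w y)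
      ((((hKx x).pow_const _).mul hF).mul hw.inv).aemeasurable
      (((hKx x).pow_const _).mul hw).aemeasurable
    have heq : ∀ y, (K x y ^ (1/p) * F y * (w y)⁻¹) * (K x y ^ (1/q) * w y) = K x y * F y := by
      intro y
      have h1q : 1/p + 1/q = 1 := by
        rw [one_div, one_div]; exact hpq.inv_add_inv_eq_one
      have : K x y ^ (1/p) * K x y ^ (1/q) = K x y := by
        rw [← ENNReal.rpow_add_of_nonneg _ _ (by positivity) (by positivity), h1q,
          ENNReal.rpow_one]
      calc (K x y ^ (1/p) * F y * (w y)⁻¹) * (K x y ^ (1/q) * w y)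
          = (K x y ^ (1/p) * K x y ^ (1/q)) * F y * ((w y)⁻¹ * w y) := by ring
        _ = K x y * F y := by rw [this, ENNReal.inv_mul_cancel (hw0 y) (hwt y), mul_one]
    have hfp : ∀ y, (K x y ^ (1/p) * F y * (w y)⁻¹) ^ p = K x y * (F y) ^ p * ((w y)⁻¹) ^ p := by
      intro y
      rw [ENNReal.mul_rpow_of_nonneg _ _ hp0.le, ENNReal.mul_rpow_of_nonneg _ _ hp0.le,
        ← ENNReal.rpow_mul, one_div_mul_cancel hp0.ne', ENNReal.rpow_one]
    have hgq : ∀ y, (K x y ^ (1/q) * w y) ^ q = K x y * (w y) ^ q := by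
      intro y
      rw [ENNReal.mul_rpow_of_nonneg _ _ hq0.le, ← ENNReal.rpow_mul,
        one_div_mul_cancel hq0.ne', ENNReal.rpow_one]
    simp only [Pi.mul_apply] at hold
    simp only [heq, hfp, hgq] at hold
    have e2 : q * (1/q * p) = p := by field_simp
    calc (∫⁻ y, K x y * F y ∂μ) ^ p
        ≤ ((∫⁻ y, K x y * (F y) ^ p * ((w y)⁻¹) ^ p ∂μ) ^ (1/p) *
            (∫⁻ y, K x y * (w y) ^ q ∂μ) ^ (1/q)) ^ p :=
          ENNReal.rpow_le_rpow hold hp0.le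
      _ ≤ ((∫⁻ y, K x y * (F y) ^ p * ((w y)⁻¹) ^ p ∂μ) ^ (1/p) *
            (A * (w x) ^ q) ^ (1/q)) ^ p := by
          gcongr
      _ = A ^ (p/q) * ((w x) ^ p * ∫⁻ y, K x y * (F y) ^ p * ((w y)⁻¹) ^ p ∂μ) := by
          rw [ENNReal.mul_rpow_of_nonneg _ _ hp0.le, ← ENNReal.rpow_mul,
            one_div_mul_cancel hp0.ne', ENNReal.rpow_one, ← ENNReal.rpow_mul,
            ENNReal.mul_rpow_of_nonneg _ _ (mul_nonneg (by positivity) hp0.le),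
            ← ENNReal.rpow_mul]
          rw [show (1:ℝ)/q * p = p/q by ring, show q * (p/q) = p by field_simp]
          ring
  have hGm : Measurable fun x => (w x) ^ p * ∫⁻ y, K x y * (F y) ^ p * ((w y)⁻¹) ^ p ∂μ := by
    apply (hw.pow_const _).mul
    exact Measurable.lintegral_prod_right (f := fun x y => K x y * (F y) ^ p * ((w y)⁻¹) ^ p)
      ((hK.mul ((hF.comp measurable_snd).pow_const _)).mul
        (((hw.comp measurable_snd).inv).pow_const _))
  calc ∫⁻ x, (∫⁻ y, K x y * F y ∂μ) ^ p ∂μ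
      ≤ ∫⁻ x, A ^ (p/q) * ((w x) ^ p * ∫⁻ y, K x y * (F y) ^ p * ((w y)⁻¹) ^ p ∂μ) ∂μ :=
        lintegral_mono_ae key
    _ = A ^ (p/q) * ∫⁻ x, (w x) ^ p * ∫⁻ y, K x y * (F y) ^ p * ((w y)⁻¹) ^ p ∂μ ∂μ :=
        lintegral_const_mul _ hGm
    _ = A ^ (p/q) * ∫⁻ x, ∫⁻ y, (w x) ^ p * (K x y * (F y) ^ p * ((w y)⁻¹) ^ p) ∂μ ∂μ := by
        congr 1
        refine lintegral_congr fun x => ?_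
        rw [lintegral_const_mul' _ _ (hwinf x)]
    _ = A ^ (p/q) * ∫⁻ y, ∫⁻ x, (w x) ^ p * (K x y * (F y) ^ p * ((w y)⁻¹) ^ p) ∂μ ∂μ := by
        congr 1
        refine lintegral_lintegral_swap ?_
        exact (((hw.comp measurable_fst).pow_const _).mul
          ((hK.mul ((hF.comp measurable_snd).pow_const _)).mul
            (((hw.comp measurable_snd).inv).pow_const _))).aemeasurable
    _ ≤ A ^ (p/q) * ∫⁻ y, B * (F y) ^ p ∂μ := by
        refine mul_le_mul_right (lintegral_mono_ae ?_) _
        filter_upwards [h2] with y hy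
        calc ∫⁻ x, (w x) ^ p * (K x y * (F y) ^ p * ((w y)⁻¹) ^ p) ∂μ
            = ((F y) ^ p * ((w y)⁻¹) ^ p) * ∫⁻ x, K x y * (w x) ^ p ∂μ := by
              rw [← lintegral_const_mul (f := fun x => K x y * (w x) ^ p) _ ((hKy y).mul (hw.pow_const _))]
              refine lintegral_congr fun x => ?_
              ring
          _ ≤ ((F y) ^ p * ((w y)⁻¹) ^ p) * (B * (w y) ^ p) := by gcongr
          _ = B * (F y) ^ p := by
              calc ((F y) ^ p * ((w y)⁻¹) ^ p) * (B * (w y) ^ p)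
                  = B * (F y) ^ p * (((w y)⁻¹) ^ p * (w y) ^ p) := by ring
                _ = B * (F y) ^ p := by rw [hone y, mul_one]
    _ = A ^ (p/q) * B * ∫⁻ y, (F y) ^ p ∂μ := by
        rw [lintegral_const_mul _ (hF.pow_const _), mul_assoc]


/-- For `1 < d₁ < 2 < d₂`, the integral operator with kernel
`K(x,y) = x^{1-d₂} y^{d₁-d₂-1}` for `x ≤ y` and `x^{d₁-d₂-2} y^{2-d₂}` for `x > y`
is bounded on `L^p([1,∞), μ_{d₂})` for `1 < p < d₂/(d₁-1)`. -/
theorem I1_Lp_bounded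
    (d₁ d₂ p : ℝ) (hd₁ : 1 < d₁) (hd₁2 : d₁ < 2) (hd₂ : 2 < d₂)
    (hp1 : 1 < p) (hp2 : p < d₂ / (d₁ - 1)) :
    ∃ C > 0, ∀ f : ℝ → ℝ, MemLp f (ENNReal.ofReal p) (mu d₂) →
      eLpNorm (fun x => ∫ y in Ici (1 : ℝ),
          (if x ≤ y then x ^ (1 - d₂) * y ^ (d₁ - d₂ - 1) else x ^ (d₁ - d₂ - 2) * y ^ (2 - d₂))
            * f y * y ^ (d₂ - 1))
        (ENNReal.ofReal p) (mu d₂) ≤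
      ENNReal.ofReal C * eLpNorm f (ENNReal.ofReal p) (mu d₂) := by
  have hp0 : (0:ℝ) < p := by linarith
  have hp1' : (0:ℝ) < p - 1 := by linarith
  have hd10 : (0:ℝ) < d₁ - 1 := by linarith
  have hd21 : (0:ℝ) < d₂ - d₁ := by linarith
  set q : ℝ := p / (p - 1) with hq
  have hpq : p.HolderConjugate q := Real.HolderConjugate.conjExponent hp1
  have hq0 : (0:ℝ) < q := hpq.symm.pos
  have hpd : p * (d₁ - 1) < d₂ := (lt_div_iff₀ hd10).1 hp2
  -- choose the exponent t for the weight
  obtain ⟨t, ht1, ht2⟩ := exists_between (show d₁ - 1 < min (d₂ - d₁ + 2) ((d₂ - d₁ + 1)/(p-1))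
    from lt_min (by linarith) ((lt_div_iff₀ hp1').2 (by nlinarith)))
  have ht0 : 0 < t := by linarith
  have ht_ub : t < d₂ - d₁ + 2 := lt_of_lt_of_le ht2 (min_le_left _ _)
  set u : ℝ := t * (p - 1) with hu
  have hu0 : 0 < u := mul_pos ht0 hp1'
  have hu_ub : u < d₂ - d₁ + 1 :=
    (lt_div_iff₀ hp1').1 (lt_of_lt_of_le ht2 (min_le_right _ _))
  set s : ℝ := t / q with hs
  have hs0 : 0 < s := div_pos ht0 hq0
  have hsq : s * q = t := by rw [hs, div_mul_cancel₀ _ hq0.ne']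
  have hsp : s * p = u := by
    rw [hs, hq, hu, div_div_eq_mul_div, div_mul_cancel₀ _ hp0.ne']
  -- choose ε' (for condition 1) and ε (for condition 2)
  set ε' : ℝ := min t (max (t - (d₂ - d₁)) 1) with hε'
  have he'1 : 0 < ε' := lt_min ht0 (lt_of_lt_of_le one_pos (le_max_right _ _))
  have he'2 : ε' < 2 := lt_of_le_of_lt (min_le_right _ _) (max_lt (by linarith) one_lt_two)
  have he'3 : ε' ≤ t := min_le_left _ _
  have he'4 : t ≤ d₂ - d₁ + ε' := by
    have : t - (d₂ - d₁) ≤ ε' := le_min (by linarith) (le_max_left _ _)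
    linarith
  set ε : ℝ := min u (max (u - (d₂ - d₁)) (1/2)) with hε
  have he1 : 0 < ε := lt_min hu0 (lt_of_lt_of_le (by norm_num) (le_max_right _ _))
  have he2 : ε < 1 := lt_of_le_of_lt (min_le_right _ _) (max_lt (by linarith) (by norm_num))
  have he3 : ε ≤ u := min_le_left _ _
  have he4 : u ≤ d₂ - d₁ + ε := by
    have : u - (d₂ - d₁) ≤ ε := le_min (by linarith) (le_max_left _ _)
    linarith
  -- the constants
  set A' : ℝ := 1/(t - d₁ + 1) + 1/(2 - ε') with hA'
  set B' : ℝ := 1/(1 - ε) + 1/(u + 2 - d₁) with hB'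
  have hA'0 : 0 < A' := by
    have h1 : 0 < t - d₁ + 1 := by linarith
    have h2 : 0 < 2 - ε' := by linarith
    positivity
  have hB'0 : 0 < B' := by
    have h1 : 0 < 1 - ε := by linarith
    have h2 : 0 < u + 2 - d₁ := by linarith
    positivity
  have hDA : (0:ℝ) < t - d₁ + 1 := by linarith
  have hDB : (0:ℝ) < 2 - ε' := by linarith
  have hDC : (0:ℝ) < 1 - ε := by linarith
  have hDD : (0:ℝ) < u + 2 - d₁ := by linarith
  refine ⟨(A' ^ (p/q) * B') ^ (1/p), by positivity, ?_⟩
  intro f hf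
  -- notation
  set Kf : ℝ → ℝ → ℝ := fun x y =>
    if x ≤ y then x ^ (1 - d₂) * y ^ (d₁ - d₂ - 1) else x ^ (d₁ - d₂ - 2) * y ^ (2 - d₂) with hKf
  set KK : ℝ → ℝ → ℝ≥0∞ := fun x y => ENNReal.ofReal (Kf x y) with hKKdef
  have hKK : Measurable (Function.uncurry KK) := by
    apply Measurable.ennreal_ofReal
    show Measurable fun z : ℝ × ℝ =>
      if z.1 ≤ z.2 then z.1 ^ (1 - d₂) * z.2 ^ (d₁ - d₂ - 1)
      else z.1 ^ (d₁ - d₂ - 2) * z.2 ^ (2 - d₂)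
    apply Measurable.ite (measurableSet_le measurable_fst measurable_snd) <;> fun_prop
  have hKy : ∀ y, Measurable fun x => KK x y := fun y => hKK.comp measurable_prodMk_right
  have hKx : ∀ x, Measurable (KK x) := fun x => hKK.comp measurable_prodMk_left
  set w : ℝ → ℝ≥0∞ := fun x => if x < 1 then 1 else ENNReal.ofReal (x ^ (-s)) with hwdef
  have hw : Measurable w := by
    apply Measurable.ite (measurableSet_lt measurable_id measurable_const) measurable_const
    fun_prop
  have hw0 : ∀ x, w x ≠ 0 := by
    intro x
    simp only [hwdef]
    split_ifs with h
    · exact one_ne_zero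
    · push_neg at h
      exact (ENNReal.ofReal_pos.2 (Real.rpow_pos_of_pos (by linarith) _)).ne'
  have hwt : ∀ x, w x ≠ ⊤ := by
    intro x; simp only [hwdef]; split_ifs
    · exact ENNReal.one_ne_top
    · exact ENNReal.ofReal_ne_top
  have hρ : Measurable fun r : ℝ => ENNReal.ofReal (r ^ (d₂ - 1)) := by fun_prop
  haveI : SFinite (mu d₂) := by unfold mu; infer_instance
  have hμint : ∀ g : ℝ → ℝ≥0∞, AEMeasurable g (mu d₂) →
      ∫⁻ y, g y ∂(mu d₂) = ∫⁻ y in Ici (1:ℝ), ENNReal.ofReal (y ^ (d₂ - 1)) * g y := by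
    intro g hg
    unfold mu at hg ⊢
    rw [lintegral_withDensity_eq_lintegral_mul₀' hρ.aemeasurable hg]
    simp only [Pi.mul_apply]
  have hae1 : ∀ᵐ x ∂(mu d₂), 1 ≤ x := by
    have hac : mu d₂ ≪ volume.restrict (Ici (1:ℝ)) := by
      unfold mu; exact withDensity_absolutelyContinuous _ _
    exact hac.ae_le (ae_restrict_mem measurableSet_Ici)
  -- Schur condition 1
  have h1 : ∀ᵐ x ∂(mu d₂), ∫⁻ y, KK x y * (w y) ^ q ∂(mu d₂) ≤
      ENNReal.ofReal A' * (w x) ^ q := by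
    filter_upwards [hae1] with x hx
    have hx0 : (0:ℝ) < x := by linarith
    rw [hμint (fun y => KK x y * (w y) ^ q) (((hKx x).mul (hw.pow_const _)).aemeasurable)]
    have e1 : ∫⁻ y in Ici (1:ℝ), ENNReal.ofReal (y ^ (d₂ - 1)) * (KK x y * (w y) ^ q)
        = ∫⁻ y in Ici (1:ℝ), ENNReal.ofReal (Kf x y * y ^ (d₂ - 1 - t)) := by
      refine setLIntegral_congr_fun_ae measurableSet_Ici (ae_of_all _ fun y hy => ?_)
      have hy0 : (0:ℝ) < y := by have : (1:ℝ) ≤ y := hy; linarith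
      have hwy : w y = ENNReal.ofReal (y ^ (-s)) := if_neg (not_lt.2 hy)
      rw [hwy, ENNReal.ofReal_rpow_of_pos (Real.rpow_pos_of_pos hy0 _),
        ← Real.rpow_mul hy0.le]
      simp only [hKKdef]
      rw [← ENNReal.ofReal_mul (by positivity), ← ENNReal.ofReal_mul (by positivity)]
      congr 1
      have hyt : y ^ (d₂ - 1) * y ^ (-s * q) = y ^ (d₂ - 1 - t) := by
        rw [← Real.rpow_add hy0, neg_mul, hsq]; ring_nf
      calc y ^ (d₂ - 1) * (Kf x y * y ^ (-s * q))
          = Kf x y * (y ^ (d₂ - 1) * y ^ (-s * q)) := by ring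
        _ = Kf x y * y ^ (d₂ - 1 - t) := by rw [hyt]
    rw [e1, ← Ico_union_Ici_eq_Ici hx,
      lintegral_union measurableSet_Ici (Set.disjoint_left.2 fun y hy hy' => (not_le.2 hy.2) hy')]
    have far : ∫⁻ y in Ici x, ENNReal.ofReal (Kf x y * y ^ (d₂ - 1 - t))
        ≤ ENNReal.ofReal (x ^ (-t) * (1/(t - d₁ + 1))) := by
      have e2 : ∫⁻ y in Ici x, ENNReal.ofReal (Kf x y * y ^ (d₂ - 1 - t))
          = ∫⁻ y in Ici x, ENNReal.ofReal (x ^ (1 - d₂)) * ENNReal.ofReal (y ^ (d₁ - 2 - t)) := by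
        refine setLIntegral_congr_fun_ae measurableSet_Ici (ae_of_all _ fun y hy => ?_)
        have hy0 : (0:ℝ) < y := lt_of_lt_of_le hx0 hy
        rw [show Kf x y = x ^ (1 - d₂) * y ^ (d₁ - d₂ - 1) from if_pos hy,
          ← ENNReal.ofReal_mul (by positivity)]
        congr 1
        rw [mul_assoc, ← Real.rpow_add hy0]
        ring_nf
      rw [e2, lintegral_const_mul' _ _ ENNReal.ofReal_ne_top]
      calc ENNReal.ofReal (x ^ (1 - d₂)) * ∫⁻ y in Ici x, ENNReal.ofReal (y ^ (d₁ - 2 - t))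
          ≤ ENNReal.ofReal (x ^ (1 - d₂)) *
            ENNReal.ofReal (x ^ ((d₁ - 2 - t) + 1) / (-((d₁ - 2 - t) + 1))) :=
            mul_le_mul_right (lint_far hx0 (by linarith) (subset_refl _)) _
        _ ≤ ENNReal.ofReal (x ^ (-t) * (1/(t - d₁ + 1))) := by
            rw [← ENNReal.ofReal_mul (by positivity)]
            apply ENNReal.ofReal_le_ofReal
            have hD : (0:ℝ) < t - d₁ + 1 := by linarith
            calc x ^ (1 - d₂) * (x ^ ((d₁ - 2 - t) + 1) / (-((d₁ - 2 - t) + 1)))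
                = x ^ (1 - d₂) * x ^ (d₁ - 1 - t) * (1/(t - d₁ + 1)) := by
                  rw [show -((d₁ - 2 - t) + 1) = t - d₁ + 1 by ring,
                    show (d₁ - 2 - t) + 1 = d₁ - 1 - t by ring]
                  ring
              _ = x ^ ((1 - d₂) + (d₁ - 1 - t)) * (1/(t - d₁ + 1)) := by
                  rw [← Real.rpow_add hx0]
              _ ≤ x ^ (-t) * (1/(t - d₁ + 1)) := by
                  apply mul_le_mul_of_nonneg_right
                    (Real.rpow_le_rpow_of_exponent_le hx (by linarith)) (by positivity)
    have near : ∫⁻ y in Ico 1 x, ENNReal.ofReal (Kf x y * y ^ (d₂ - 1 - t))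
        ≤ ENNReal.ofReal (x ^ (-t) * (1/(2 - ε'))) := by
      have step1 : ∫⁻ y in Ico 1 x, ENNReal.ofReal (Kf x y * y ^ (d₂ - 1 - t))
          ≤ ∫⁻ y in Ico 1 x, ENNReal.ofReal (x ^ (d₁ - d₂ - 2)) * ENNReal.ofReal (y ^ (1 - ε')) := by
        refine setLIntegral_mono' measurableSet_Ico fun y hy => ?_
        have hy1 : (1:ℝ) ≤ y := hy.1
        have hy0 : (0:ℝ) < y := by linarith
        rw [show Kf x y = x ^ (d₁ - d₂ - 2) * y ^ (2 - d₂) from if_neg (not_le.2 hy.2),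
          ← ENNReal.ofReal_mul (by positivity)]
        apply ENNReal.ofReal_le_ofReal
        calc x ^ (d₁ - d₂ - 2) * y ^ (2 - d₂) * y ^ (d₂ - 1 - t)
            = x ^ (d₁ - d₂ - 2) * y ^ ((2 - d₂) + (d₂ - 1 - t)) := by
              rw [mul_assoc, ← Real.rpow_add hy0]
          _ ≤ x ^ (d₁ - d₂ - 2) * y ^ (1 - ε') := by
              apply mul_le_mul_of_nonneg_left
                (Real.rpow_le_rpow_of_exponent_le hy1 (by linarith)) (by positivity)
      calc ∫⁻ y in Ico 1 x, ENNReal.ofReal (Kf x y * y ^ (d₂ - 1 - t)) ≤ _ := step1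
        _ = ENNReal.ofReal (x ^ (d₁ - d₂ - 2)) * ∫⁻ y in Ico 1 x, ENNReal.ofReal (y ^ (1 - ε')) :=
            lintegral_const_mul' _ _ ENNReal.ofReal_ne_top
        _ ≤ ENNReal.ofReal (x ^ (d₁ - d₂ - 2)) *
            ENNReal.ofReal (x ^ ((1 - ε') + 1) / ((1 - ε') + 1)) := by
            refine mul_le_mul_right (lint_near hx0.le (by linarith) fun y hy => ?_) _
            exact ⟨by linarith [hy.1], le_of_lt hy.2⟩
        _ ≤ ENNReal.ofReal (x ^ (-t) * (1/(2 - ε'))) := by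
            rw [← ENNReal.ofReal_mul (by positivity)]
            apply ENNReal.ofReal_le_ofReal
            have hD : (0:ℝ) < 2 - ε' := by linarith
            calc x ^ (d₁ - d₂ - 2) * (x ^ ((1 - ε') + 1) / ((1 - ε') + 1))
                = x ^ ((d₁ - d₂ - 2) + (2 - ε')) * (1/(2 - ε')) := by
                  rw [show (1 - ε') + 1 = 2 - ε' by ring, Real.rpow_add hx0]
                  ring
              _ ≤ x ^ (-t) * (1/(2 - ε')) := by
                  apply mul_le_mul_of_nonneg_right
                    (Real.rpow_le_rpow_of_exponent_le hx (by linarith)) (by positivity)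
    calc (∫⁻ y in Ico 1 x, ENNReal.ofReal (Kf x y * y ^ (d₂ - 1 - t)))
          + ∫⁻ y in Ici x, ENNReal.ofReal (Kf x y * y ^ (d₂ - 1 - t))
        ≤ ENNReal.ofReal (x ^ (-t) * (1/(2 - ε'))) + ENNReal.ofReal (x ^ (-t) * (1/(t - d₁ + 1))) :=
          add_le_add near far
      _ = ENNReal.ofReal A' * (w x) ^ q := by
          rw [← ENNReal.ofReal_add (by positivity) (by positivity),
            show w x = ENNReal.ofReal (x ^ (-s)) from if_neg (not_lt.2 hx),
            ENNReal.ofReal_rpow_of_pos (Real.rpow_pos_of_pos hx0 _),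
            ← Real.rpow_mul hx0.le, ← ENNReal.ofReal_mul hA'0.le]
          congr 1
          rw [neg_mul, hsq, hA']
          ring
  -- Schur condition 2
  have h2 : ∀ᵐ y ∂(mu d₂), ∫⁻ x, KK x y * (w x) ^ p ∂(mu d₂) ≤
      ENNReal.ofReal B' * (w y) ^ p := by
    filter_upwards [hae1] with y hy
    have hy0 : (0:ℝ) < y := by linarith
    rw [hμint (fun x => KK x y * (w x) ^ p) (((hKy y).mul (hw.pow_const _)).aemeasurable)]
    have e1 : ∫⁻ x in Ici (1:ℝ), ENNReal.ofReal (x ^ (d₂ - 1)) * (KK x y * (w x) ^ p)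
        = ∫⁻ x in Ici (1:ℝ), ENNReal.ofReal (Kf x y * x ^ (d₂ - 1 - u)) := by
      refine setLIntegral_congr_fun_ae measurableSet_Ici (ae_of_all _ fun x hx => ?_)
      have hx0 : (0:ℝ) < x := by have : (1:ℝ) ≤ x := hx; linarith
      have hwx : w x = ENNReal.ofReal (x ^ (-s)) := if_neg (not_lt.2 hx)
      rw [hwx, ENNReal.ofReal_rpow_of_pos (Real.rpow_pos_of_pos hx0 _),
        ← Real.rpow_mul hx0.le]
      simp only [hKKdef]
      rw [← ENNReal.ofReal_mul (by positivity), ← ENNReal.ofReal_mul (by positivity)]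
      congr 1
      have hxt : x ^ (d₂ - 1) * x ^ (-s * p) = x ^ (d₂ - 1 - u) := by
        rw [← Real.rpow_add hx0, neg_mul, hsp]; ring_nf
      calc x ^ (d₂ - 1) * (Kf x y * x ^ (-s * p))
          = Kf x y * (x ^ (d₂ - 1) * x ^ (-s * p)) := by ring
        _ = Kf x y * x ^ (d₂ - 1 - u) := by rw [hxt]
    rw [e1, ← Icc_union_Ioi_eq_Ici hy,
      lintegral_union measurableSet_Ioi (Set.disjoint_left.2 fun x hx hx' => (not_lt.2 hx.2) hx')]
    have near : ∫⁻ x in Icc 1 y, ENNReal.ofReal (Kf x y * x ^ (d₂ - 1 - u))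
        ≤ ENNReal.ofReal (y ^ (-u) * (1/(1 - ε))) := by
      have step1 : ∫⁻ x in Icc 1 y, ENNReal.ofReal (Kf x y * x ^ (d₂ - 1 - u))
          ≤ ∫⁻ x in Icc 1 y, ENNReal.ofReal (y ^ (d₁ - d₂ - 1)) * ENNReal.ofReal (x ^ (-ε)) := by
        refine setLIntegral_mono' measurableSet_Icc fun x hx => ?_
        have hx1 : (1:ℝ) ≤ x := hx.1
        have hx0 : (0:ℝ) < x := by linarith
        rw [show Kf x y = x ^ (1 - d₂) * y ^ (d₁ - d₂ - 1) from if_pos hx.2,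
          ← ENNReal.ofReal_mul (by positivity)]
        apply ENNReal.ofReal_le_ofReal
        calc x ^ (1 - d₂) * y ^ (d₁ - d₂ - 1) * x ^ (d₂ - 1 - u)
            = y ^ (d₁ - d₂ - 1) * x ^ ((1 - d₂) + (d₂ - 1 - u)) := by
              rw [Real.rpow_add hx0]; ring
          _ ≤ y ^ (d₁ - d₂ - 1) * x ^ (-ε) := by
              apply mul_le_mul_of_nonneg_left
                (Real.rpow_le_rpow_of_exponent_le hx1 (by linarith)) (by positivity)
      calc ∫⁻ x in Icc 1 y, ENNReal.ofReal (Kf x y * x ^ (d₂ - 1 - u)) ≤ _ := step1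
        _ = ENNReal.ofReal (y ^ (d₁ - d₂ - 1)) * ∫⁻ x in Icc 1 y, ENNReal.ofReal (x ^ (-ε)) :=
            lintegral_const_mul' _ _ ENNReal.ofReal_ne_top
        _ ≤ ENNReal.ofReal (y ^ (d₁ - d₂ - 1)) *
            ENNReal.ofReal (y ^ ((-ε) + 1) / ((-ε) + 1)) := by
            refine mul_le_mul_right (lint_near hy0.le (by linarith) fun x hx => ?_) _
            exact ⟨by linarith [hx.1], hx.2⟩
        _ ≤ ENNReal.ofReal (y ^ (-u) * (1/(1 - ε))) := by
            rw [← ENNReal.ofReal_mul (by positivity)]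
            apply ENNReal.ofReal_le_ofReal
            have hD : (0:ℝ) < 1 - ε := by linarith
            calc y ^ (d₁ - d₂ - 1) * (y ^ ((-ε) + 1) / ((-ε) + 1))
                = y ^ ((d₁ - d₂ - 1) + (1 - ε)) * (1/(1 - ε)) := by
                  rw [show (-ε) + 1 = 1 - ε by ring, Real.rpow_add hy0]
                  ring
              _ ≤ y ^ (-u) * (1/(1 - ε)) := by
                  apply mul_le_mul_of_nonneg_right
                    (Real.rpow_le_rpow_of_exponent_le hy (by linarith)) (by positivity)
    have far : ∫⁻ x in Ioi y, ENNReal.ofReal (Kf x y * x ^ (d₂ - 1 - u))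
        ≤ ENNReal.ofReal (y ^ (-u) * (1/(u + 2 - d₁))) := by
      have e2 : ∫⁻ x in Ioi y, ENNReal.ofReal (Kf x y * x ^ (d₂ - 1 - u))
          = ∫⁻ x in Ioi y, ENNReal.ofReal (y ^ (2 - d₂)) * ENNReal.ofReal (x ^ (d₁ - 3 - u)) := by
        refine setLIntegral_congr_fun_ae measurableSet_Ioi (ae_of_all _ fun x hx => ?_)
        have hx0 : (0:ℝ) < x := lt_trans hy0 hx
        rw [show Kf x y = x ^ (d₁ - d₂ - 2) * y ^ (2 - d₂) from if_neg (not_le.2 hx),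
          ← ENNReal.ofReal_mul (by positivity)]
        congr 1
        rw [show x ^ (d₁ - d₂ - 2) * y ^ (2 - d₂) * x ^ (d₂ - 1 - u)
            = y ^ (2 - d₂) * (x ^ (d₁ - d₂ - 2) * x ^ (d₂ - 1 - u)) by ring,
          ← Real.rpow_add hx0]
        ring_nf
      rw [e2, lintegral_const_mul' _ _ ENNReal.ofReal_ne_top]
      calc ENNReal.ofReal (y ^ (2 - d₂)) * ∫⁻ x in Ioi y, ENNReal.ofReal (x ^ (d₁ - 3 - u))
          ≤ ENNReal.ofReal (y ^ (2 - d₂)) *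
            ENNReal.ofReal (y ^ ((d₁ - 3 - u) + 1) / (-((d₁ - 3 - u) + 1))) :=
            mul_le_mul_right (lint_far hy0 (by linarith) Ioi_subset_Ici_self) _
        _ ≤ ENNReal.ofReal (y ^ (-u) * (1/(u + 2 - d₁))) := by
            rw [← ENNReal.ofReal_mul (by positivity)]
            apply ENNReal.ofReal_le_ofReal
            have hD : (0:ℝ) < u + 2 - d₁ := by linarith
            calc y ^ (2 - d₂) * (y ^ ((d₁ - 3 - u) + 1) / (-((d₁ - 3 - u) + 1)))
                = y ^ ((2 - d₂) + (d₁ - 2 - u)) * (1/(u + 2 - d₁)) := by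
                  rw [show -((d₁ - 3 - u) + 1) = u + 2 - d₁ by ring,
                    show (d₁ - 3 - u) + 1 = d₁ - 2 - u by ring, Real.rpow_add hy0]
                  ring
              _ ≤ y ^ (-u) * (1/(u + 2 - d₁)) := by
                  apply mul_le_mul_of_nonneg_right
                    (Real.rpow_le_rpow_of_exponent_le hy (by linarith)) (by positivity)
    calc (∫⁻ x in Icc 1 y, ENNReal.ofReal (Kf x y * x ^ (d₂ - 1 - u)))
          + ∫⁻ x in Ioi y, ENNReal.ofReal (Kf x y * x ^ (d₂ - 1 - u))
        ≤ ENNReal.ofReal (y ^ (-u) * (1/(1 - ε))) + ENNReal.ofReal (y ^ (-u) * (1/(u + 2 - d₁))) :=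
          add_le_add near far
      _ = ENNReal.ofReal B' * (w y) ^ p := by
          rw [← ENNReal.ofReal_add (by positivity) (by positivity),
            show w y = ENNReal.ofReal (y ^ (-s)) from if_neg (not_lt.2 hy),
            ENNReal.ofReal_rpow_of_pos (Real.rpow_pos_of_pos hy0 _),
            ← Real.rpow_mul hy0.le, ← ENNReal.ofReal_mul hB'0.le]
          congr 1
          rw [neg_mul, hsp, hB']
          ring
  -- measurable representative of f
  obtain ⟨g, hgm, hfg⟩ := hf.1
  set F : ℝ → ℝ≥0∞ := fun y => (‖f y‖₊ : ℝ≥0∞) with hF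
  set G : ℝ → ℝ≥0∞ := fun y => (‖g y‖₊ : ℝ≥0∞) with hG
  have hGm : Measurable G := hgm.measurable.nnnorm.coe_nnreal_ennreal
  have hFG : F =ᵐ[mu d₂] G := hfg.mono fun y hy => by simp only [hF, hG, hy]
  have hFm : AEMeasurable F (mu d₂) := hf.1.enorm
  -- the pointwise bound on the operator
  have hbound : ∀ᵐ x ∂(mu d₂),
      (‖∫ y in Ici (1:ℝ), Kf x y * f y * y ^ (d₂ - 1)‖₊ : ℝ≥0∞)
        ≤ ∫⁻ y, KK x y * G y ∂(mu d₂) := by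
    filter_upwards [hae1] with x hx
    have hx0 : (0:ℝ) < x := by linarith
    calc (‖∫ y in Ici (1:ℝ), Kf x y * f y * y ^ (d₂ - 1)‖₊ : ℝ≥0∞)
        ≤ ∫⁻ y in Ici (1:ℝ), ‖Kf x y * f y * y ^ (d₂ - 1)‖₊ :=
          enorm_integral_le_lintegral_enorm _
      _ = ∫⁻ y in Ici (1:ℝ), ENNReal.ofReal (y ^ (d₂ - 1)) * (KK x y * F y) := by
          refine setLIntegral_congr_fun_ae measurableSet_Ici (ae_of_all _ fun y hy => ?_)
          have hy0 : (0:ℝ) < y := by have : (1:ℝ) ≤ y := hy; linarith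
          have hKnn : 0 ≤ Kf x y := by
            simp only [hKf]; split_ifs <;> positivity
          rw [nnnorm_mul, nnnorm_mul, ENNReal.coe_mul, ENNReal.coe_mul,
            show ((‖Kf x y‖₊ : ℝ≥0∞)) = ENNReal.ofReal (Kf x y) from Real.enorm_eq_ofReal hKnn,
            show ((‖y ^ (d₂ - 1)‖₊ : ℝ≥0∞)) = ENNReal.ofReal (y ^ (d₂ - 1)) from
              Real.enorm_eq_ofReal (show (0:ℝ) ≤ y ^ (d₂ - 1) by positivity)]
          simp only [hKKdef, hF]
          ring
      _ = ∫⁻ y, KK x y * F y ∂(mu d₂) :=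
          (hμint _ (((hKx x).aemeasurable).mul hFm)).symm
      _ = ∫⁻ y, KK x y * G y ∂(mu d₂) :=
          lintegral_congr_ae (hFG.mono fun y hy => by simp only [hy])
  -- put everything together
  have hP0 : (ENNReal.ofReal p) ≠ 0 := by
    simp only [ne_eq, ENNReal.ofReal_eq_zero, not_le]; linarith
  have hPt : (ENNReal.ofReal p) ≠ ⊤ := ENNReal.ofReal_ne_top
  have hPto : (ENNReal.ofReal p).toReal = p := ENNReal.toReal_ofReal hp0.le
  have hschur := schur_test (mu d₂) KK hKK w hw hw0 hwt hpq
    (ENNReal.ofReal A') (ENNReal.ofReal B') h1 h2 G hGm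
  calc eLpNorm (fun x => ∫ y in Ici (1:ℝ), Kf x y * f y * y ^ (d₂ - 1))
        (ENNReal.ofReal p) (mu d₂)
      = (∫⁻ x, (‖∫ y in Ici (1:ℝ), Kf x y * f y * y ^ (d₂ - 1)‖₊ : ℝ≥0∞) ^ p ∂(mu d₂)) ^ (1/p) := by
        rw [eLpNorm_eq_lintegral_rpow_enorm_toReal hP0 hPt, hPto]
        rfl
    _ ≤ (∫⁻ x, (∫⁻ y, KK x y * G y ∂(mu d₂)) ^ p ∂(mu d₂)) ^ (1/p) := by
        refine ENNReal.rpow_le_rpow (lintegral_mono_ae (hbound.mono fun x hx => ?_))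
          (by positivity)
        exact ENNReal.rpow_le_rpow hx hp0.le
    _ ≤ ((ENNReal.ofReal A') ^ (p/q) * (ENNReal.ofReal B') * ∫⁻ y, (G y) ^ p ∂(mu d₂)) ^ (1/p) :=
        ENNReal.rpow_le_rpow hschur (by positivity)
    _ = ENNReal.ofReal ((A' ^ (p/q) * B') ^ (1/p)) * eLpNorm f (ENNReal.ofReal p) (mu d₂) := by
        rw [ENNReal.mul_rpow_of_nonneg _ _ (by positivity : (0:ℝ) ≤ 1/p)]
        congr 1
        · rw [ENNReal.ofReal_rpow_of_pos hA'0, ← ENNReal.ofReal_mul (by positivity),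
            ENNReal.ofReal_rpow_of_pos (by positivity)]
        · rw [eLpNorm_congr_ae hfg, eLpNorm_eq_lintegral_rpow_enorm_toReal hP0 hPt, hPto]
          rfl
end

section
/- Let 1 < d₁ < 2 < d₂. Consider the integral operator T f(x) = ∫₁^∞ K(x,y) f(y) y^{d₂−1} dy with kernel K(x,y) = x^{1−d₁} y^{d₁−d₂−1} for 1 ≤ x ≤ y and K(x,y) = x^{−2} y^{2−d₂} for x > y ≥ 1. Then for every p with 1 < p < d₂/(d₁−1) there exists a constant C > 0 such that ‖Tf‖_{L^p([1,∞), μ_{d₁})} ≤ C ‖f‖_{L^p([1,∞), μ_{d₂})} for all f ∈ L^p([1,∞), μ_{d₂}). -/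
open MeasureTheory Set

lemma lint_tail {c x : ℝ} (hc : c < -1) (hx : 0 < x) :
    ∫⁻ y in Ici x, ENNReal.ofReal (y ^ c) = ENNReal.ofReal (x ^ (c + 1) / (-(c + 1))) := by
  rw [← Measure.restrict_congr_set (Ioi_ae_eq_Ici (a := x)),
    ← ofReal_integral_eq_lintegral_ofReal (integrableOn_Ioi_rpow_of_lt hc hx)]
  · rw [integral_Ioi_rpow_of_lt hc hx]
    rw [div_neg, neg_div]
  · filter_upwards [ae_restrict_mem measurableSet_Ioi] with y hy
    exact Real.rpow_nonneg (le_of_lt (hx.trans hy)) c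

lemma lint_head {c x : ℝ} (hc : -1 < c) (hx : 0 ≤ x) {s : Set ℝ} (hs : s ⊆ Ioc 0 x) :
    ∫⁻ y in s, ENNReal.ofReal (y ^ c) ≤ ENNReal.ofReal (x ^ (c + 1) / (c + 1)) := by
  refine (lintegral_mono_set hs).trans ?_
  rw [← ofReal_integral_eq_lintegral_ofReal
      ((intervalIntegrable_iff_integrableOn_Ioc_of_le hx).mp
        (intervalIntegral.intervalIntegrable_rpow' hc))]
  · apply ENNReal.ofReal_le_ofReal
    rw [← intervalIntegral.integral_of_le hx, integral_rpow (Or.inl hc),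
      Real.zero_rpow (by linarith)]
    apply div_le_div_of_nonneg_right ?_ (by linarith)
    · linarith [Real.rpow_nonneg hx (c+1)]
  · filter_upwards [ae_restrict_mem measurableSet_Ioc] with y hy
    exact Real.rpow_nonneg hy.1.le c


lemma mu_lintegral (n : ℝ) (h : ℝ → ENNReal) :
    ∫⁻ y, h y ∂(mu n) = ∫⁻ y in Ici (1:ℝ), ENNReal.ofReal (y ^ (n - 1)) * h y := by
  rw [mu, lintegral_withDensity_eq_lintegral_mul_non_measurable _ (by fun_prop)
    (ae_of_all _ fun y => ENNReal.ofReal_lt_top)]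
  rfl

lemma schurA (d₁ d₂ t : ℝ) (hd₁ : 1 < d₁) (ht1 : d₁ - 1 < t) (ht2 : t < 2)
    {x : ℝ} (hx : 1 ≤ x) :
    ∫⁻ y in Ici (1:ℝ),
      ENNReal.ofReal (if x ≤ y then x ^ (1 - d₁) * y ^ (d₁ - d₂ - 1) else x ^ (-2:ℝ) * y ^ (2 - d₂))
        * ENNReal.ofReal (y ^ (-t)) * ENNReal.ofReal (y ^ (d₂ - 1))
      ≤ ENNReal.ofReal (1 / (t - d₁ + 1) + 1 / (2 - t)) * ENNReal.ofReal (x ^ (-t)) := by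
  have hx0 : (0:ℝ) < x := lt_of_lt_of_le one_pos hx
  have hdisj : Disjoint (Ico 1 x) (Ici x) :=
    disjoint_left.mpr fun _ hy h2 => absurd h2 (not_le.mpr hy.2)
  rw [← Ico_union_Ici_eq_Ici hx, lintegral_union measurableSet_Ici hdisj]
  have e1 : ∫⁻ y in Ico 1 x,
      ENNReal.ofReal (if x ≤ y then x ^ (1 - d₁) * y ^ (d₁ - d₂ - 1) else x ^ (-2:ℝ) * y ^ (2 - d₂))
        * ENNReal.ofReal (y ^ (-t)) * ENNReal.ofReal (y ^ (d₂ - 1))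
      = ENNReal.ofReal (x ^ (-2:ℝ)) * ∫⁻ y in Ico 1 x, ENNReal.ofReal (y ^ (1 - t)) := by
    rw [← lintegral_const_mul' _ _ ENNReal.ofReal_ne_top]
    refine setLIntegral_congr_fun_ae measurableSet_Ico (ae_of_all _ fun y hy => ?_)
    have hy0 : (0:ℝ) < y := lt_of_lt_of_le one_pos hy.1
    rw [if_neg (not_le.mpr hy.2), ← ENNReal.ofReal_mul (by positivity),
      ← ENNReal.ofReal_mul (by positivity), ← ENNReal.ofReal_mul (by positivity)]
    congr 1
    rw [mul_assoc, mul_assoc, ← Real.rpow_add hy0, ← Real.rpow_add hy0]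
    ring_nf
  have e2 : ∫⁻ y in Ici x,
      ENNReal.ofReal (if x ≤ y then x ^ (1 - d₁) * y ^ (d₁ - d₂ - 1) else x ^ (-2:ℝ) * y ^ (2 - d₂))
        * ENNReal.ofReal (y ^ (-t)) * ENNReal.ofReal (y ^ (d₂ - 1))
      = ENNReal.ofReal (x ^ (1 - d₁)) * ∫⁻ y in Ici x, ENNReal.ofReal (y ^ (d₁ - 2 - t)) := by
    rw [← lintegral_const_mul' _ _ ENNReal.ofReal_ne_top]
    refine setLIntegral_congr_fun_ae measurableSet_Ici (ae_of_all _ fun y hy => ?_)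
    have hy0 : (0:ℝ) < y := lt_of_lt_of_le hx0 hy
    rw [if_pos (show x ≤ y from hy), ← ENNReal.ofReal_mul (by positivity),
      ← ENNReal.ofReal_mul (by positivity), ← ENNReal.ofReal_mul (by positivity)]
    congr 1
    rw [mul_assoc, mul_assoc, ← Real.rpow_add hy0, ← Real.rpow_add hy0]
    ring_nf
  rw [e1, e2]
  have b1 : ∫⁻ y in Ico 1 x, ENNReal.ofReal (y ^ (1 - t)) ≤ ENNReal.ofReal (x ^ (2 - t) / (2 - t)) := by
    have h := lint_head (c := 1 - t) (x := x) (by linarith) hx0.le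
      (s := Ico 1 x) (fun y hy => ⟨lt_of_lt_of_le one_pos hy.1, hy.2.le⟩)
    have : (1:ℝ) - t + 1 = 2 - t := by ring
    rwa [this] at h
  have b2 : ∫⁻ y in Ici x, ENNReal.ofReal (y ^ (d₁ - 2 - t)) = ENNReal.ofReal (x ^ (d₁ - 1 - t) / (t - d₁ + 1)) := by
    have h := lint_tail (c := d₁ - 2 - t) (x := x) (by linarith) hx0
    have h1 : d₁ - 2 - t + 1 = d₁ - 1 - t := by ring
    have h2 : -(d₁ - 1 - t) = t - d₁ + 1 := by ring
    rwa [h1, h2] at h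
  rw [b2]
  calc (ENNReal.ofReal (x ^ (-2:ℝ)) * ∫⁻ y in Ico 1 x, ENNReal.ofReal (y ^ (1 - t))) +
        ENNReal.ofReal (x ^ (1 - d₁)) * ENNReal.ofReal (x ^ (d₁ - 1 - t) / (t - d₁ + 1))
      ≤ (ENNReal.ofReal (x ^ (-2:ℝ)) * ENNReal.ofReal (x ^ (2 - t) / (2 - t))) +
        ENNReal.ofReal (x ^ (1 - d₁)) * ENNReal.ofReal (x ^ (d₁ - 1 - t) / (t - d₁ + 1)) := by
        exact add_le_add_left (mul_le_mul_right b1 _) _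
    _ = ENNReal.ofReal ((1 / (t - d₁ + 1) + 1 / (2 - t)) * x ^ (-t)) := by
        rw [← ENNReal.ofReal_mul (by positivity), ← ENNReal.ofReal_mul (by positivity),
          ← ENNReal.ofReal_add (mul_nonneg (by positivity) (div_nonneg (by positivity) (by linarith)))
            (mul_nonneg (by positivity) (div_nonneg (by positivity) (by linarith)))]
        congr 1
        have e3 : x ^ (-2:ℝ) * x ^ (2 - t) = x ^ (-t) := by
          rw [← Real.rpow_add hx0]; ring_nf
        have e4 : x ^ (1 - d₁) * x ^ (d₁ - 1 - t) = x ^ (-t) := by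
          rw [← Real.rpow_add hx0]; ring_nf
        have e5 : x ^ (-2:ℝ) * (x ^ (2 - t) / (2 - t)) = x ^ (-t) * (1 / (2 - t)) := by
          rw [← e3]; ring
        have e6 : x ^ (1 - d₁) * (x ^ (d₁ - 1 - t) / (t - d₁ + 1)) = x ^ (-t) * (1 / (t - d₁ + 1)) := by
          rw [← e4]; ring
        rw [e5, e6]; ring
    _ = ENNReal.ofReal (1 / (t - d₁ + 1) + 1 / (2 - t)) * ENNReal.ofReal (x ^ (-t)) := by
        rw [ENNReal.ofReal_mul (by
          have h1 : (0:ℝ) < t - d₁ + 1 := by linarith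
          have h2 : (0:ℝ) < 2 - t := by linarith
          positivity)]

lemma schurB (d₁ d₂ u a : ℝ) (hd₁ : 1 < d₁) (hd₁2 : d₁ < 2) (hd₂ : 2 < d₂) (hu0 : 0 < u)
    (ha0 : 0 ≤ a) (ha1 : a < 1) (hau : a ≤ u) (haa : u - (d₂ - d₁) ≤ a)
    {y : ℝ} (hy : 1 ≤ y) :
    ∫⁻ x in Ici (1:ℝ),
      ENNReal.ofReal (if x ≤ y then x ^ (1 - d₁) * y ^ (d₁ - d₂ - 1) else x ^ (-2:ℝ) * y ^ (2 - d₂))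
        * ENNReal.ofReal (x ^ (-u)) * ENNReal.ofReal (x ^ (d₁ - 1))
      ≤ ENNReal.ofReal (1 / (1 - a) + 1 / (u + 2 - d₁)) * ENNReal.ofReal (y ^ (-u)) := by
  have hy0 : (0:ℝ) < y := lt_of_lt_of_le one_pos hy
  have hdisj : Disjoint (Icc 1 y) (Ioi y) :=
    disjoint_left.mpr fun _ hx h2 => absurd h2 (not_lt.mpr hx.2)
  rw [← Icc_union_Ioi_eq_Ici hy, lintegral_union measurableSet_Ioi hdisj]
  have e1 : ∫⁻ x in Icc 1 y,
      ENNReal.ofReal (if x ≤ y then x ^ (1 - d₁) * y ^ (d₁ - d₂ - 1) else x ^ (-2:ℝ) * y ^ (2 - d₂))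
        * ENNReal.ofReal (x ^ (-u)) * ENNReal.ofReal (x ^ (d₁ - 1))
      = ENNReal.ofReal (y ^ (d₁ - d₂ - 1)) * ∫⁻ x in Icc 1 y, ENNReal.ofReal (x ^ (-u)) := by
    rw [← lintegral_const_mul' _ _ ENNReal.ofReal_ne_top]
    refine setLIntegral_congr_fun_ae measurableSet_Icc (ae_of_all _ fun x hx => ?_)
    have hx0 : (0:ℝ) < x := lt_of_lt_of_le one_pos hx.1
    rw [if_pos hx.2, ← ENNReal.ofReal_mul (by positivity),
      ← ENNReal.ofReal_mul (by positivity), ← ENNReal.ofReal_mul (by positivity)]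
    congr 1
    rw [show x ^ (1 - d₁) * y ^ (d₁ - d₂ - 1) * x ^ (-u) * x ^ (d₁ - 1)
        = y ^ (d₁ - d₂ - 1) * (x ^ (1 - d₁) * x ^ (-u) * x ^ (d₁ - 1)) from by ring,
      ← Real.rpow_add hx0, ← Real.rpow_add hx0]
    ring_nf
  have e2 : ∫⁻ x in Ioi y,
      ENNReal.ofReal (if x ≤ y then x ^ (1 - d₁) * y ^ (d₁ - d₂ - 1) else x ^ (-2:ℝ) * y ^ (2 - d₂))
        * ENNReal.ofReal (x ^ (-u)) * ENNReal.ofReal (x ^ (d₁ - 1))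
      = ENNReal.ofReal (y ^ (2 - d₂)) * ∫⁻ x in Ioi y, ENNReal.ofReal (x ^ (d₁ - 3 - u)) := by
    rw [← lintegral_const_mul' _ _ ENNReal.ofReal_ne_top]
    refine setLIntegral_congr_fun_ae measurableSet_Ioi (ae_of_all _ fun x hx => ?_)
    have hx0 : (0:ℝ) < x := lt_trans hy0 hx
    rw [if_neg (not_le.mpr hx), ← ENNReal.ofReal_mul (by positivity),
      ← ENNReal.ofReal_mul (by positivity), ← ENNReal.ofReal_mul (by positivity)]
    congr 1
    rw [show x ^ (-2:ℝ) * y ^ (2 - d₂) * x ^ (-u) * x ^ (d₁ - 1)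
        = y ^ (2 - d₂) * (x ^ (-2:ℝ) * x ^ (-u) * x ^ (d₁ - 1)) from by ring,
      ← Real.rpow_add hx0, ← Real.rpow_add hx0]
    ring_nf
  rw [e1, e2]
  have b1 : ∫⁻ x in Icc 1 y, ENNReal.ofReal (x ^ (-u)) ≤ ENNReal.ofReal (y ^ (1 - a) / (1 - a)) := by
    have step : ∫⁻ x in Icc 1 y, ENNReal.ofReal (x ^ (-u))
        ≤ ∫⁻ x in Icc 1 y, ENNReal.ofReal (x ^ (-a)) := by
      refine setLIntegral_mono (by fun_prop) fun x hx => ENNReal.ofReal_le_ofReal ?_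
      exact Real.rpow_le_rpow_of_exponent_le hx.1 (neg_le_neg hau)
    refine step.trans ?_
    have h := lint_head (c := -a) (x := y) (by linarith) hy0.le
      (s := Icc 1 y) (fun x hx => ⟨lt_of_lt_of_le one_pos hx.1, hx.2⟩)
    have h1 : -a + 1 = 1 - a := by ring
    rwa [h1] at h
  have b2 : ∫⁻ x in Ioi y, ENNReal.ofReal (x ^ (d₁ - 3 - u))
      ≤ ENNReal.ofReal (y ^ (d₁ - 2 - u) / (u + 2 - d₁)) := by
    refine (lintegral_mono_set Ioi_subset_Ici_self).trans ?_
    have h := lint_tail (c := d₁ - 3 - u) (x := y) (by linarith) hy0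
    have h1 : d₁ - 3 - u + 1 = d₁ - 2 - u := by ring
    have h2 : -(d₁ - 2 - u) = u + 2 - d₁ := by ring
    rw [h1, h2] at h
    exact h.le
  have ha1' : (0:ℝ) < 1 - a := by linarith
  have hud : (0:ℝ) < u + 2 - d₁ := by linarith
  calc (ENNReal.ofReal (y ^ (d₁ - d₂ - 1)) * ∫⁻ x in Icc 1 y, ENNReal.ofReal (x ^ (-u))) +
        ENNReal.ofReal (y ^ (2 - d₂)) * ∫⁻ x in Ioi y, ENNReal.ofReal (x ^ (d₁ - 3 - u))
      ≤ (ENNReal.ofReal (y ^ (d₁ - d₂ - 1)) * ENNReal.ofReal (y ^ (1 - a) / (1 - a))) +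
        ENNReal.ofReal (y ^ (2 - d₂)) * ENNReal.ofReal (y ^ (d₁ - 2 - u) / (u + 2 - d₁)) :=
        add_le_add (mul_le_mul_right b1 _) (mul_le_mul_right b2 _)
    _ ≤ ENNReal.ofReal (y ^ (-u) * (1 / (1 - a))) + ENNReal.ofReal (y ^ (-u) * (1 / (u + 2 - d₁))) := by
        apply add_le_add
        · rw [← ENNReal.ofReal_mul (by positivity)]
          apply ENNReal.ofReal_le_ofReal
          rw [show y ^ (d₁ - d₂ - 1) * (y ^ (1 - a) / (1 - a))
              = (y ^ (d₁ - d₂ - 1) * y ^ (1 - a)) * (1 / (1 - a)) from by ring,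
            ← Real.rpow_add hy0]
          apply mul_le_mul_of_nonneg_right ?_ (by positivity)
          exact Real.rpow_le_rpow_of_exponent_le hy (by linarith)
        · rw [← ENNReal.ofReal_mul (by positivity)]
          apply ENNReal.ofReal_le_ofReal
          rw [show y ^ (2 - d₂) * (y ^ (d₁ - 2 - u) / (u + 2 - d₁))
              = (y ^ (2 - d₂) * y ^ (d₁ - 2 - u)) * (1 / (u + 2 - d₁)) from by ring,
            ← Real.rpow_add hy0]
          apply mul_le_mul_of_nonneg_right ?_ (by positivity)
          exact Real.rpow_le_rpow_of_exponent_le hy (by linarith)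
    _ = ENNReal.ofReal (1 / (1 - a) + 1 / (u + 2 - d₁)) * ENNReal.ofReal (y ^ (-u)) := by
        rw [← ENNReal.ofReal_add (by positivity) (by positivity),
          ← ENNReal.ofReal_mul (by positivity)]
        congr 1
        ring

instance (n : ℝ) : SFinite (mu n) := by unfold mu; infer_instance

/-- For `1 < d₁ < 2 < d₂`, the integral operator with kernel
`K(x,y) = x^{1-d₁} y^{d₁-d₂-1}` for `x ≤ y` and `x^{-2} y^{2-d₂}` for `x > y`
is bounded from `L^p([1,∞), μ_{d₂})` to `L^p([1,∞), μ_{d₁})` for `1 < p < d₂/(d₁-1)`. -/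
theorem II1_Lp_bounded
    (d₁ d₂ p : ℝ) (hd₁ : 1 < d₁) (hd₁2 : d₁ < 2) (hd₂ : 2 < d₂)
    (hp1 : 1 < p) (hp2 : p < d₂ / (d₁ - 1)) :
    ∃ C > 0, ∀ f : ℝ → ℝ, MemLp f (ENNReal.ofReal p) (mu d₂) →
      eLpNorm (fun x => ∫ y in Ici (1 : ℝ),
          (if x ≤ y then x ^ (1 - d₁) * y ^ (d₁ - d₂ - 1) else x ^ (-2 : ℝ) * y ^ (2 - d₂))
            * f y * y ^ (d₂ - 1))
        (ENNReal.ofReal p) (mu d₁) ≤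
      ENNReal.ofReal C * eLpNorm f (ENNReal.ofReal p) (mu d₂) := by

  -- ## parameter setup
  have hp0 : (0:ℝ) < p := by linarith
  set q := p.conjExponent with hqdef
  have hpq : p.HolderConjugate q := Real.HolderConjugate.conjExponent hp1
  have hq1 : 1 < q := hpq.symm.lt
  have hq0 : (0:ℝ) < q := by linarith
  have hd₁1 : (0:ℝ) < d₁ - 1 := by linarith
  have hkey : (d₁ - 1) * p < d₂ := by
    have := (lt_div_iff₀ hd₁1).mp hp2
    linarith
  set X := (d₂ + 1 - d₁) / (p - 1) with hXdef
  have hp1' : (0:ℝ) < p - 1 := by linarith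
  have hXgt : d₁ - 1 < X := by
    rw [hXdef, lt_div_iff₀ hp1']
    nlinarith
  set ε := (X - (d₁ - 1)) / 2 with hεdef
  have hε : 0 < ε := by rw [hεdef]; linarith
  set t := d₁ - 1 + min ε ((3 - d₁)/2) with htdef
  have hmin0 : 0 < min ε ((3 - d₁)/2) := lt_min hε (by linarith)
  have ht1 : d₁ - 1 < t := by rw [htdef]; linarith
  have ht0 : 0 < t := by linarith
  have ht2 : t < 2 := by
    have : min ε ((3 - d₁)/2) ≤ (3 - d₁)/2 := min_le_right _ _
    rw [htdef]; linarith
  have htX : t < X := by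
    have : min ε ((3 - d₁)/2) ≤ ε := min_le_left _ _
    rw [htdef, hεdef] at *; linarith
  set u := t * (p - 1) with hudef
  have hu0 : 0 < u := mul_pos ht0 hp1'
  have hXu : X * (p - 1) = d₂ + 1 - d₁ := div_mul_cancel₀ _ (ne_of_gt hp1')
  have hu : u < d₂ + 1 - d₁ := by
    rw [← hXu, hudef]
    exact mul_lt_mul_of_pos_right htX hp1'
  set a := max (u - (d₂ - d₁)) 0 with hadef
  have ha0 : 0 ≤ a := le_max_right _ _
  have ha1 : a < 1 := by
    rw [hadef]; exact max_lt (by linarith) one_pos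
  have hau : a ≤ u := by
    rw [hadef]; exact max_le (by linarith) hu0.le
  have haa : u - (d₂ - d₁) ≤ a := le_max_left _ _
  set s := t / q with hsdef
  have hs0 : 0 < s := div_pos ht0 hq0
  have hsq : s * q = t := div_mul_cancel₀ _ (ne_of_gt hq0)
  have hsp : s * p = u := by
    rw [hsdef, hqdef, Real.conjExponent, hudef]
    field_simp
  -- ## constants
  set CA := 1 / (t - d₁ + 1) + 1 / (2 - t) with hCAdef
  set CB := 1 / (1 - a) + 1 / (u + 2 - d₁) with hCBdef
  have hCA : 0 < CA := by
    rw [hCAdef]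
    have h1 : (0:ℝ) < t - d₁ + 1 := by linarith
    have h2 : (0:ℝ) < 2 - t := by linarith
    positivity
  have hCB : 0 < CB := by
    rw [hCBdef]
    have h1 : (0:ℝ) < 1 - a := by linarith
    have h2 : (0:ℝ) < u + 2 - d₁ := by linarith
    positivity
  refine ⟨CA ^ (1/q) * CB ^ (1/p),
    mul_pos (Real.rpow_pos_of_pos hCA _) (Real.rpow_pos_of_pos hCB _), fun f hf => ?_⟩
  -- ## measurable representative of ‖f‖
  have hfm : AEMeasurable (fun y => (‖f y‖₊ : ENNReal)) (mu d₂) := hf.aestronglyMeasurable.enorm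
  obtain ⟨g, hgm, hgae⟩ : ∃ g : ℝ → ENNReal, Measurable g ∧
      (fun y => (‖f y‖₊ : ENNReal)) =ᵐ[mu d₂] g :=
    ⟨hfm.mk _, hfm.measurable_mk, hfm.ae_eq_mk⟩
  -- ## kernel and weight
  set kk : ℝ → ℝ → ENNReal := fun x y =>
    ENNReal.ofReal (if x ≤ y then x ^ (1 - d₁) * y ^ (d₁ - d₂ - 1)
      else x ^ (-2:ℝ) * y ^ (2 - d₂)) with hkkdef
  set hw : ℝ → ENNReal := fun x => ENNReal.ofReal (x ^ (-s)) with hhwdef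
  have hkkm : Measurable (fun z : ℝ × ℝ => kk z.1 z.2) := by
    rw [hkkdef]
    apply ENNReal.measurable_ofReal.comp
    exact Measurable.ite (measurableSet_le measurable_fst measurable_snd)
      (by fun_prop) (by fun_prop)
  have hkkm1 : ∀ x, Measurable (kk x) :=
    fun x => hkkm.comp (measurable_const.prodMk measurable_id)
  have hhwm : Measurable hw := by rw [hhwdef]; fun_prop
  have hae₁ : ∀ᵐ x ∂(mu d₁), x ∈ Ici (1:ℝ) :=
    (withDensity_absolutelyContinuous _ _).ae_le (ae_restrict_mem measurableSet_Ici)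
  have hae₂ : ∀ᵐ y ∂(mu d₂), y ∈ Ici (1:ℝ) :=
    (withDensity_absolutelyContinuous _ _).ae_le (ae_restrict_mem measurableSet_Ici)
  -- ## weight identities
  have hwq : ∀ z : ℝ, 1 ≤ z → (hw z) ^ q = ENNReal.ofReal (z ^ (-t)) := by
    intro z hz
    have hz0 : (0:ℝ) < z := lt_of_lt_of_le one_pos hz
    rw [hhwdef]
    simp only []
    rw [ENNReal.ofReal_rpow_of_nonneg (Real.rpow_nonneg hz0.le _) hq0.le,
      ← Real.rpow_mul hz0.le, show -s * q = -(s*q) from by ring, hsq]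
  have hwp : ∀ z : ℝ, 1 ≤ z → (hw z) ^ p = ENNReal.ofReal (z ^ (-u)) := by
    intro z hz
    have hz0 : (0:ℝ) < z := lt_of_lt_of_le one_pos hz
    rw [hhwdef]
    simp only []
    rw [ENNReal.ofReal_rpow_of_nonneg (Real.rpow_nonneg hz0.le _) hp0.le,
      ← Real.rpow_mul hz0.le, show -s * p = -(s*p) from by ring, hsp]
  have hw_ne_top : ∀ z : ℝ, hw z ≠ ⊤ := fun z => ENNReal.ofReal_ne_top
  have hw_ne_zero : ∀ z : ℝ, 1 ≤ z → hw z ≠ 0 := fun z hz =>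
    ne_of_gt (ENNReal.ofReal_pos.mpr (Real.rpow_pos_of_pos (lt_of_lt_of_le one_pos hz) _))
  -- ## the quantity I x
  set I : ℝ → ENNReal := fun x => ∫⁻ y, kk x y * ((hw y)⁻¹ * g y) ^ p ∂(mu d₂) with hIdef
  -- ## key pointwise bound
  have key : ∀ x : ℝ, 1 ≤ x →
      (‖∫ y in Ici (1 : ℝ),
          (if x ≤ y then x ^ (1 - d₁) * y ^ (d₁ - d₂ - 1) else x ^ (-2 : ℝ) * y ^ (2 - d₂))
            * f y * y ^ (d₂ - 1)‖₊ : ENNReal)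
      ≤ (ENNReal.ofReal CA) ^ (1/q) * hw x * I x ^ (1/p) := by
    intro x hx
    have hx0 : (0:ℝ) < x := lt_of_lt_of_le one_pos hx
    refine (enorm_integral_le_lintegral_enorm _).trans ?_
    have step2 : ∫⁻ y in Ici (1:ℝ),
        (‖(if x ≤ y then x ^ (1 - d₁) * y ^ (d₁ - d₂ - 1) else x ^ (-2:ℝ) * y ^ (2 - d₂))
          * f y * y ^ (d₂ - 1)‖₊ : ENNReal)
        = ∫⁻ y in Ici (1:ℝ), ENNReal.ofReal (y ^ (d₂ - 1)) * (kk x y * (‖f y‖₊ : ENNReal)) := by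
      refine setLIntegral_congr_fun_ae measurableSet_Ici (ae_of_all _ fun y hy => ?_)
      have hy0 : (0:ℝ) < y := lt_of_lt_of_le one_pos hy
      have hK0 : 0 ≤ (if x ≤ y then x ^ (1 - d₁) * y ^ (d₁ - d₂ - 1)
          else x ^ (-2:ℝ) * y ^ (2 - d₂)) := by
        split_ifs <;> positivity
      rw [nnnorm_mul, nnnorm_mul, ENNReal.coe_mul, ENNReal.coe_mul,
        show (‖_‖₊ : ENNReal) = _ from Real.enorm_eq_ofReal hK0,
        show (‖_‖₊ : ENNReal) = _ from Real.enorm_eq_ofReal (show (0:ℝ) ≤ y ^ (d₂ - 1) by positivity)]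
      rw [hkkdef]
      simp only []
      ring
    erw [step2]; rw [← mu_lintegral d₂ (fun y => kk x y * (‖f y‖₊ : ENNReal))]
    have step4 : ∫⁻ y, kk x y * (‖f y‖₊ : ENNReal) ∂(mu d₂) = ∫⁻ y, kk x y * g y ∂(mu d₂) :=
      lintegral_congr_ae (hgae.mono fun y hy => congrArg (fun z => kk x y * z) hy)
    rw [step4]
    have factor : (fun y => kk x y * g y) =ᵐ[mu d₂]
        fun y => (kk x y ^ (1/q) * hw y) * (kk x y ^ (1/p) * ((hw y)⁻¹ * g y)) := by
      filter_upwards [hae₂] with y hy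
      have h1 : kk x y ^ (1/q) * kk x y ^ (1/p) = kk x y := by
        rw [← ENNReal.rpow_add_of_nonneg _ _ (by positivity) (by positivity)]
        rw [show (1:ℝ)/q + 1/p = 1 from by
          have := hpq.symm.inv_add_inv_eq_one
          rw [one_div, one_div]; exact this]
        rw [ENNReal.rpow_one]
      have h2 : hw y * (hw y)⁻¹ = 1 := ENNReal.mul_inv_cancel (hw_ne_zero y hy) (hw_ne_top y)
      calc kk x y * g y = (kk x y ^ (1/q) * kk x y ^ (1/p)) * ((hw y * (hw y)⁻¹) * g y) := by
            rw [h1, h2, one_mul]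
        _ = (kk x y ^ (1/q) * hw y) * (kk x y ^ (1/p) * ((hw y)⁻¹ * g y)) := by ring
    rw [lintegral_congr_ae factor]
    have hφ : AEMeasurable (fun y => kk x y ^ ((1:ℝ)/q) * hw y) (mu d₂) := by
      have : Measurable (fun y => kk x y ^ ((1:ℝ)/q) * hw y) := by
        have h1 := hkkm1 x
        fun_prop
      exact this.aemeasurable
    have hψ : AEMeasurable (fun y => kk x y ^ ((1:ℝ)/p) * ((hw y)⁻¹ * g y)) (mu d₂) := by
      have : Measurable (fun y => kk x y ^ ((1:ℝ)/p) * ((hw y)⁻¹ * g y)) := by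
        have h1 := hkkm1 x
        fun_prop
      exact this.aemeasurable
    refine (ENNReal.lintegral_mul_le_Lp_mul_Lq (mu d₂) hpq.symm hφ hψ).trans ?_
    have eφ : ∀ y : ℝ, (kk x y ^ ((1:ℝ)/q) * hw y) ^ q = kk x y * (hw y) ^ q := by
      intro y
      rw [ENNReal.mul_rpow_of_nonneg _ _ hq0.le, ← ENNReal.rpow_mul,
        one_div, inv_mul_cancel₀ (ne_of_gt hq0), ENNReal.rpow_one]
    have eψ : ∀ y : ℝ, (kk x y ^ ((1:ℝ)/p) * ((hw y)⁻¹ * g y)) ^ p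
        = kk x y * ((hw y)⁻¹ * g y) ^ p := by
      intro y
      rw [ENNReal.mul_rpow_of_nonneg _ _ hp0.le, ← ENNReal.rpow_mul,
        one_div, inv_mul_cancel₀ (ne_of_gt hp0), ENNReal.rpow_one]
    have hfac1 : ∫⁻ y, (kk x y ^ ((1:ℝ)/q) * hw y) ^ q ∂(mu d₂)
        ≤ ENNReal.ofReal CA * (hw x) ^ q := by
      have e0 : ∫⁻ y, (kk x y ^ ((1:ℝ)/q) * hw y) ^ q ∂(mu d₂)
          = ∫⁻ y, kk x y * (hw y) ^ q ∂(mu d₂) := lintegral_congr fun y => eφ y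
      rw [e0, mu_lintegral d₂ (fun y => kk x y * (hw y) ^ q)]
      have e1 : ∫⁻ y in Ici (1:ℝ), ENNReal.ofReal (y ^ (d₂ - 1)) * (kk x y * hw y ^ q)
          = ∫⁻ y in Ici (1:ℝ),
            ENNReal.ofReal (if x ≤ y then x ^ (1 - d₁) * y ^ (d₁ - d₂ - 1)
              else x ^ (-2:ℝ) * y ^ (2 - d₂))
            * ENNReal.ofReal (y ^ (-t)) * ENNReal.ofReal (y ^ (d₂ - 1)) := by
        refine setLIntegral_congr_fun_ae measurableSet_Ici (ae_of_all _ fun y hy => ?_)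
        rw [hwq y hy, hkkdef]
        simp only []
        ring
      rw [e1, hwq x hx]
      exact schurA d₁ d₂ t hd₁ ht1 ht2 hx
    have e2 : ∫⁻ y, (kk x y ^ ((1:ℝ)/p) * ((hw y)⁻¹ * g y)) ^ p ∂(mu d₂) = I x :=
      lintegral_congr fun y => eψ y
    rw [e2]
    refine mul_le_mul_left ?_ _
    refine (ENNReal.rpow_le_rpow hfac1 (by positivity)).trans ?_
    rw [ENNReal.mul_rpow_of_nonneg _ _ (by positivity), one_div,
      ENNReal.rpow_rpow_inv (ne_of_gt hq0)]
  -- ## main integral estimate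
  have hP0 : (ENNReal.ofReal p) ≠ 0 := ne_of_gt (ENNReal.ofReal_pos.mpr hp0)
  have hPt : (ENNReal.ofReal p) ≠ ⊤ := ENNReal.ofReal_ne_top
  rw [eLpNorm_eq_lintegral_rpow_enorm_toReal hP0 hPt, eLpNorm_eq_lintegral_rpow_enorm_toReal hP0 hPt,
    ENNReal.toReal_ofReal hp0.le]
  have hprodm : Measurable (fun z : ℝ × ℝ =>
      (hw z.1) ^ p * (kk z.1 z.2 * ((hw z.2)⁻¹ * g z.2) ^ p)) := by fun_prop
  have main : ∫⁻ x, (‖∫ y in Ici (1 : ℝ),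
          (if x ≤ y then x ^ (1 - d₁) * y ^ (d₁ - d₂ - 1) else x ^ (-2 : ℝ) * y ^ (2 - d₂))
            * f y * y ^ (d₂ - 1)‖₊ : ENNReal) ^ p ∂(mu d₁)
      ≤ (ENNReal.ofReal CA) ^ (p/q) * (ENNReal.ofReal CB * ∫⁻ y, g y ^ p ∂(mu d₂)) := by
    have hCAnt : (ENNReal.ofReal CA) ^ (p/q) ≠ ⊤ :=
      ENNReal.rpow_ne_top_of_nonneg (by positivity) ENNReal.ofReal_ne_top
    calc ∫⁻ x, (‖∫ y in Ici (1 : ℝ),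
          (if x ≤ y then x ^ (1 - d₁) * y ^ (d₁ - d₂ - 1) else x ^ (-2 : ℝ) * y ^ (2 - d₂))
            * f y * y ^ (d₂ - 1)‖₊ : ENNReal) ^ p ∂(mu d₁)
        ≤ ∫⁻ x, ((ENNReal.ofReal CA) ^ (1/q) * hw x * I x ^ (1/p)) ^ p ∂(mu d₁) :=
          lintegral_mono_ae (hae₁.mono fun x hx => ENNReal.rpow_le_rpow (key x hx) hp0.le)
      _ = ∫⁻ x, (ENNReal.ofReal CA) ^ (p/q) * ((hw x) ^ p * I x) ∂(mu d₁) := by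
          refine lintegral_congr fun x => ?_
          rw [ENNReal.mul_rpow_of_nonneg _ _ hp0.le, ENNReal.mul_rpow_of_nonneg _ _ hp0.le,
            ← ENNReal.rpow_mul, ← ENNReal.rpow_mul,
            show (1:ℝ)/q * p = p/q from by ring,
            show (1:ℝ)/p * p = 1 from by field_simp, ENNReal.rpow_one]
          ring
      _ = (ENNReal.ofReal CA) ^ (p/q) * ∫⁻ x, (hw x) ^ p * I x ∂(mu d₁) :=
          lintegral_const_mul' _ _ hCAnt
      _ = (ENNReal.ofReal CA) ^ (p/q) *
            ∫⁻ x, ∫⁻ y, (hw x) ^ p * (kk x y * ((hw y)⁻¹ * g y) ^ p) ∂(mu d₂) ∂(mu d₁) := by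
          congr 1
          refine lintegral_congr fun x => ?_
          rw [hIdef]
          simp only []
          exact (lintegral_const_mul' _ _
            (ENNReal.rpow_ne_top_of_nonneg hp0.le (hw_ne_top x))).symm
      _ = (ENNReal.ofReal CA) ^ (p/q) *
            ∫⁻ y, ∫⁻ x, (hw x) ^ p * (kk x y * ((hw y)⁻¹ * g y) ^ p) ∂(mu d₁) ∂(mu d₂) := by
          congr 1
          exact lintegral_lintegral_swap hprodm.aemeasurable
      _ ≤ (ENNReal.ofReal CA) ^ (p/q) * ∫⁻ y, ENNReal.ofReal CB * g y ^ p ∂(mu d₂) := by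
          refine mul_le_mul_right (lintegral_mono_ae (hae₂.mono fun y hy => ?_)) _
          have hy0 : (0:ℝ) < y := lt_of_lt_of_le one_pos hy
          have comm : ∀ x : ℝ, (hw x) ^ p * (kk x y * ((hw y)⁻¹ * g y) ^ p)
              = ((hw y)⁻¹ * g y) ^ p * (kk x y * (hw x) ^ p) := fun x => by ring
          rw [lintegral_congr comm, lintegral_const_mul _ (by
            have h1 := hkkm.comp ((measurable_id.prodMk measurable_const) :
              Measurable fun x : ℝ => (x, y))
            fun_prop : Measurable fun x => kk x y * (hw x) ^ p)]
          have hB : ∫⁻ x, kk x y * (hw x) ^ p ∂(mu d₁)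
              ≤ ENNReal.ofReal CB * ENNReal.ofReal (y ^ (-u)) := by
            rw [mu_lintegral d₁ (fun x => kk x y * (hw x) ^ p)]
            have e3 : ∫⁻ x in Ici (1:ℝ), ENNReal.ofReal (x ^ (d₁ - 1)) * (kk x y * hw x ^ p)
                = ∫⁻ x in Ici (1:ℝ),
                  ENNReal.ofReal (if x ≤ y then x ^ (1 - d₁) * y ^ (d₁ - d₂ - 1)
                    else x ^ (-2:ℝ) * y ^ (2 - d₂))
                  * ENNReal.ofReal (x ^ (-u)) * ENNReal.ofReal (x ^ (d₁ - 1)) := by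
              refine setLIntegral_congr_fun_ae measurableSet_Ici (ae_of_all _ fun x hx => ?_)
              rw [hwp x hx, hkkdef]
              simp only []
              ring
            rw [e3]
            exact schurB d₁ d₂ u a hd₁ hd₁2 hd₂ hu0 ha0 ha1 hau haa hy
          refine (mul_le_mul_right hB _).trans ?_
          rw [← hwp y hy]
          rw [show ((hw y)⁻¹ * g y) ^ p * (ENNReal.ofReal CB * hw y ^ p)
              = ENNReal.ofReal CB * (g y ^ p * (((hw y)⁻¹ * hw y) ^ p)) from by
            rw [ENNReal.mul_rpow_of_nonneg _ _ hp0.le, ENNReal.mul_rpow_of_nonneg _ _ hp0.le]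
            ring]
          rw [ENNReal.inv_mul_cancel (hw_ne_zero y hy) (hw_ne_top y), ENNReal.one_rpow, mul_one]
      _ = (ENNReal.ofReal CA) ^ (p/q) * (ENNReal.ofReal CB * ∫⁻ y, g y ^ p ∂(mu d₂)) := by
          rw [lintegral_const_mul' _ _ ENNReal.ofReal_ne_top]
  have hS : ∫⁻ y, g y ^ p ∂(mu d₂) = ∫⁻ y, (‖f y‖₊ : ENNReal) ^ p ∂(mu d₂) :=
    (lintegral_congr_ae (hgae.mono fun y hy => congrArg (fun z : ENNReal => z ^ p) hy)).symm
  rw [hS] at main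
  calc (∫⁻ x, (‖∫ y in Ici (1 : ℝ),
          (if x ≤ y then x ^ (1 - d₁) * y ^ (d₁ - d₂ - 1) else x ^ (-2 : ℝ) * y ^ (2 - d₂))
            * f y * y ^ (d₂ - 1)‖₊ : ENNReal) ^ p ∂(mu d₁)) ^ (1/p)
      ≤ ((ENNReal.ofReal CA) ^ (p/q) *
          (ENNReal.ofReal CB * ∫⁻ y, (‖f y‖₊ : ENNReal) ^ p ∂(mu d₂))) ^ (1/p) :=
        ENNReal.rpow_le_rpow main (by positivity)
    _ = ENNReal.ofReal (CA ^ (1/q) * CB ^ (1/p)) *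
          (∫⁻ y, (‖f y‖₊ : ENNReal) ^ p ∂(mu d₂)) ^ (1/p) := by
        rw [ENNReal.mul_rpow_of_nonneg _ _ (by positivity),
          ENNReal.mul_rpow_of_nonneg _ _ (by positivity),
          ← ENNReal.rpow_mul,
          show p/q * (1/p) = 1/q from by field_simp,
          ENNReal.ofReal_rpow_of_nonneg hCA.le (by positivity),
          ENNReal.ofReal_rpow_of_nonneg hCB.le (by positivity),
          ENNReal.ofReal_mul (Real.rpow_nonneg hCA.le _), mul_assoc]
end
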